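/- arXiv:2206.04883 — 6 statements merged into one kernel-verified Lean document; each statement's English description precedes it below -/
import Mathlib

section
/- For a connected graph G on n vertices, the number of forests of G with exactly n−k edges (equivalently, spanning forests with exactly k connected components) is at most C(n−1, k−1) times the number of spanning trees of G. -/
open SimpleGraph

private lemma iso_isAcyclic {α β : Type*} {G1 : SimpleGraph α} {G2 : SimpleGraph β}
    (e : G1 ≃g G2) (h : G2.IsAcyclic) : G1.IsAcyclic := fun _v c hc =>
  h (c.map e.toHom) (hc.map e.toEquiv.injective)

private lemma acyclic_sup_edge {V : Type*} {G : SimpleGraph V} {a b : V} (hG : G.IsAcyclic)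
    (hab : ¬ G.Reachable a b) : (G ⊔ edge a b).IsAcyclic := by
  have hne : a ≠ b := by rintro rfl; exact hab (Reachable.refl a)
  intro u c hc
  by_cases he : s(a, b) ∈ c.edges
  · have h2 := (adj_and_reachable_delete_edges_iff_exists_cycle.mpr ⟨u, c, hc, he⟩).2
    apply hab
    refine Reachable.mono ?_ h2
    intro x y hxy
    rw [deleteEdges, sdiff_adj] at hxy
    obtain ⟨hsup, hnot⟩ := hxy
    rcases hsup with h | h
    · exact h
    · exfalso
      apply hnot
      rw [fromEdgeSet_adj, Set.mem_singleton_iff]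
      rw [edge_adj] at h
      refine ⟨?_, h.2⟩
      rw [Sym2.eq_iff]
      tauto
  · have hsub : ∀ e ∈ c.edges, e ∈ G.edgeSet := by
      intro e hep
      have h1 := c.edges_subset_edgeSet hep
      rw [edgeSet_sup, edge_edgeSet_of_ne hne] at h1
      rcases h1 with h1 | h1
      · exact h1
      · exact absurd (Set.mem_singleton_iff.mp h1 ▸ hep) he
    exact hG (c.transfer G hsub) (hc.transfer hsub)

private lemma exists_tree_between {V : Type*} [Finite V] {G H : SimpleGraph V}
    (hG : G.Connected) (hH : H ≤ G) (hHa : H.IsAcyclic) :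
    ∃ T : SimpleGraph V, H ≤ T ∧ T ≤ G ∧ T.IsTree := by
  classical
  set S : Set (SimpleGraph V) := {T | H ≤ T ∧ T ≤ G ∧ T.IsAcyclic} with hS
  obtain ⟨T, hTS, hmax⟩ : ∃ T ∈ S, ∀ T' ∈ S, T ≤ T' → T = T' := by
    obtain ⟨T, hT⟩ := (Set.toFinite S).exists_maximal ⟨H, le_refl H, hH, hHa⟩
    exact ⟨T, hT.1, fun T' hT' hle => le_antisymm hle (hT.2 hT' hle)⟩
  obtain ⟨hHT, hTG, hTa⟩ := hTS
  haveI : Nonempty V := hG.nonempty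
  refine ⟨T, hHT, hTG, ⟨Connected.mk ?_, hTa⟩⟩
  have hpre : T.Preconnected := by
    by_contra hp
    simp only [Preconnected, not_forall] at hp
    obtain ⟨u, v, huv⟩ := hp
    -- find an edge of G between two T-unreachable vertices
    have key : ∀ {x y : V} (_ : G.Walk x y), ¬ T.Reachable x y →
        ∃ a b, G.Adj a b ∧ ¬ T.Reachable a b := by
      intro x y p
      induction p with
      | nil => intro h; exact absurd (Reachable.refl _) h
      | @cons x w y hadj q ih =>
        intro h
        by_cases hr : T.Reachable x w
        · exact ih (fun h2 => h (hr.trans h2))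
        · exact ⟨x, w, hadj, hr⟩
    obtain ⟨a, b, hab, hr⟩ := key (hG.preconnected u v).some huv
    have hne : a ≠ b := by rintro rfl; exact hr (Reachable.refl a)
    have hT' : T ⊔ edge a b ∈ S := by
      refine ⟨hHT.trans le_sup_left, sup_le hTG ?_, acyclic_sup_edge hTa hr⟩
      intro x y hxy
      rw [edge_adj] at hxy
      rcases hxy.1 with ⟨rfl, rfl⟩ | ⟨rfl, rfl⟩
      · exact hab
      · exact hab.symm
    have heq : T = T ⊔ edge a b := hmax _ hT' le_sup_left
    apply hr
    have : T.Adj a b := by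
      rw [heq]
      right
      rw [edge_adj]
      exact ⟨Or.inl ⟨rfl, rfl⟩, hne⟩
    exact this.reachable
  exact hpre

private lemma edgeSet_spanningCoe' {V : Type*} {G : SimpleGraph V} (F : G.Subgraph) :
    F.spanningCoe.edgeSet = F.edgeSet := by
  ext e
  induction e using Sym2.ind with
  | _ x y => simp [mem_edgeSet, Subgraph.mem_edgeSet]

private lemma count_simple {V : Type*} [Fintype V] {G : SimpleGraph V} (hG : G.Connected)
    (n k : ℕ) (hn : n = Fintype.card V) (hk1 : 1 ≤ k) (hkn : k ≤ n) :
    {A : SimpleGraph V | A ≤ G ∧ A.IsAcyclic ∧ A.edgeSet.ncard = n - k}.ncard ≤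
      (n - 1).choose (k - 1) * {T : SimpleGraph V | T ≤ G ∧ T.IsTree}.ncard := by
  classical
  set Fs := {A : SimpleGraph V | A ≤ G ∧ A.IsAcyclic ∧ A.edgeSet.ncard = n - k} with hFs
  set Ts := {T : SimpleGraph V | T ≤ G ∧ T.IsTree} with hTs
  have htcard : ∀ T : SimpleGraph V, T.IsTree → T.edgeSet.ncard = n - 1 := by
    intro T hT
    haveI : Fintype ↥T.edgeSet := Fintype.ofFinite _
    have h1 : T.edgeFinset.card + 1 = Fintype.card V := hT.card_edgeFinset
    have h2 : T.edgeSet.ncard = T.edgeFinset.card := Set.ncard_eq_toFinset_card' _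
    omega
  choose! t ht using fun (A : SimpleGraph V) (hA : A ≤ G) (hAa : A.IsAcyclic) =>
    exists_tree_between hG hA hAa
  set f : SimpleGraph V → SimpleGraph V × Finset (Sym2 V) :=
    fun A => (t A, ((t A).edgeSet \ A.edgeSet).toFinite.toFinset) with hf
  set Q : Finset (SimpleGraph V × Finset (Sym2 V)) :=
    (Ts.toFinite.toFinset).biUnion
      (fun T => ({T} : Finset (SimpleGraph V)) ×ˢ
        (T.edgeSet.toFinite.toFinset.powersetCard (k - 1))) with hQ
  have hmaps : ∀ A ∈ Fs, f A ∈ (Q : Set (SimpleGraph V × Finset (Sym2 V))) := by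
    rintro A ⟨hAG, hAa, hAcard⟩
    obtain ⟨hAt, htG, htree⟩ := ht A hAG hAa
    have hsubE : A.edgeSet ⊆ (t A).edgeSet := edgeSet_subset_edgeSet.mpr hAt
    rw [Finset.mem_coe, hQ, Finset.mem_biUnion]
    refine ⟨t A, (Set.Finite.mem_toFinset _).mpr ⟨htG, htree⟩, ?_⟩
    rw [Finset.mem_product, Finset.mem_singleton, Finset.mem_powersetCard]
    refine ⟨rfl, ⟨?_, ?_⟩⟩
    · exact Set.Finite.toFinset_subset_toFinset.mpr Set.diff_subset
    · rw [← Set.ncard_eq_toFinset_card _ _, Set.ncard_diff hsubE, htcard _ htree, hAcard]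
      omega
  have hinj : Set.InjOn f Fs := by
    rintro A1 ⟨h1G, h1a, _⟩ A2 ⟨h2G, h2a, _⟩ heq
    obtain ⟨h1t, _, _⟩ := ht A1 h1G h1a
    obtain ⟨h2t, _, _⟩ := ht A2 h2G h2a
    rw [hf, Prod.mk.injEq] at heq
    obtain ⟨hteq, hdeq⟩ := heq
    rw [Set.Finite.toFinset_inj] at hdeq
    have hs1 : A1.edgeSet ⊆ (t A1).edgeSet := edgeSet_subset_edgeSet.mpr h1t
    have hs2 : A2.edgeSet ⊆ (t A2).edgeSet := edgeSet_subset_edgeSet.mpr h2t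
    rw [← edgeSet_inj]
    rw [← Set.diff_diff_cancel_left hs1, ← Set.diff_diff_cancel_left hs2, hdeq, hteq]
  have h1 : Fs.ncard ≤ Q.card := by
    have := Set.ncard_le_ncard_of_injOn f hmaps hinj Q.finite_toSet
    rwa [Set.ncard_coe_finset] at this
  refine h1.trans ?_
  calc Q.card ≤ ∑ T ∈ Ts.toFinite.toFinset,
      (({T} : Finset (SimpleGraph V)) ×ˢ
        (T.edgeSet.toFinite.toFinset.powersetCard (k - 1))).card := Finset.card_biUnion_le
    _ = ∑ _T ∈ Ts.toFinite.toFinset, (n - 1).choose (k - 1) := by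
        apply Finset.sum_congr rfl
        intro T hT
        rw [Finset.card_product, Finset.card_singleton, one_mul, Finset.card_powersetCard]
        congr 1
        rw [← Set.ncard_eq_toFinset_card _ _]
        exact htcard T ((Set.Finite.mem_toFinset _).mp hT).2
    _ = (n - 1).choose (k - 1) * Ts.ncard := by
        rw [Finset.sum_const, smul_eq_mul, Nat.mul_comm, Set.ncard_eq_toFinset_card _ _]

private lemma iso_isTree {α β : Type*} {G1 : SimpleGraph α} {G2 : SimpleGraph β}
    (e : G1 ≃g G2) (h : G2.IsTree) : G1.IsTree := by
  rw [isTree_iff] at h ⊢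
  exact ⟨e.connected_iff.mpr h.1, iso_isAcyclic e h.2⟩

/-- For a connected graph `G` on `n` vertices, the number of spanning forests
of `G` with exactly `n - k` edges is at most `C(n-1, k-1)` times the number of spanning trees. -/
theorem stmt0 {V : Type*} [Fintype V] (G : SimpleGraph V) (hG : G.Connected)
    (n k : ℕ) (hn : n = Fintype.card V) (hk1 : 1 ≤ k) (hkn : k ≤ n) :
    {F : G.Subgraph | F.IsSpanning ∧ F.coe.IsAcyclic ∧ F.edgeSet.ncard = n - k}.ncard ≤
      (n - 1).choose (k - 1) *
        {T : G.Subgraph | T.IsSpanning ∧ T.coe.IsTree}.ncard := by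
  classical
  set Φ : G.Subgraph → SimpleGraph V := Subgraph.spanningCoe with hΦ
  have hinj : ∀ F1 F2 : G.Subgraph, F1.IsSpanning → F2.IsSpanning → Φ F1 = Φ F2 → F1 = F2 := by
    intro F1 F2 h1 h2 h
    exact Subgraph.ext (h1.verts_eq_univ.trans h2.verts_eq_univ.symm)
      (Subgraph.spanningCoe_inj.mp h)
  have himF : Φ '' {F : G.Subgraph | F.IsSpanning ∧ F.coe.IsAcyclic ∧ F.edgeSet.ncard = n - k} =
      {A : SimpleGraph V | A ≤ G ∧ A.IsAcyclic ∧ A.edgeSet.ncard = n - k} := by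
    ext A
    constructor
    · rintro ⟨F, ⟨hsp, hac, hcard⟩, rfl⟩
      refine ⟨F.spanningCoe_le, iso_isAcyclic (F.spanningCoeEquivCoeOfSpanning hsp) hac, ?_⟩
      rw [edgeSet_spanningCoe']
      exact hcard
    · rintro ⟨hAG, hac, hcard⟩
      have hspc : ((SimpleGraph.toSubgraph A hAG)).spanningCoe = A := rfl
      have hsp := SimpleGraph.toSubgraph.isSpanning A hAG
      refine ⟨(SimpleGraph.toSubgraph A hAG), ⟨hsp, ?_, ?_⟩, hspc⟩
      · refine iso_isAcyclic (((SimpleGraph.toSubgraph A hAG)).spanningCoeEquivCoeOfSpanning hsp).symm ?_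
        rw [hspc]
        exact hac
      · rw [← edgeSet_spanningCoe', hspc]
        exact hcard
  have himT : Φ '' {T : G.Subgraph | T.IsSpanning ∧ T.coe.IsTree} =
      {T : SimpleGraph V | T ≤ G ∧ T.IsTree} := by
    ext A
    constructor
    · rintro ⟨F, ⟨hsp, htree⟩, rfl⟩
      exact ⟨F.spanningCoe_le, iso_isTree (F.spanningCoeEquivCoeOfSpanning hsp) htree⟩
    · rintro ⟨hAG, htree⟩
      have hspc : ((SimpleGraph.toSubgraph A hAG)).spanningCoe = A := rfl
      have hsp := SimpleGraph.toSubgraph.isSpanning A hAG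
      refine ⟨(SimpleGraph.toSubgraph A hAG), ⟨hsp, ?_⟩, hspc⟩
      refine iso_isTree (((SimpleGraph.toSubgraph A hAG)).spanningCoeEquivCoeOfSpanning hsp).symm ?_
      rw [hspc]
      exact htree
  have e1 : {F : G.Subgraph | F.IsSpanning ∧ F.coe.IsAcyclic ∧ F.edgeSet.ncard = n - k}.ncard =
      {A : SimpleGraph V | A ≤ G ∧ A.IsAcyclic ∧ A.edgeSet.ncard = n - k}.ncard := by
    rw [← himF, Set.ncard_image_of_injOn]
    intro F1 hF1 F2 hF2 h
    exact hinj F1 F2 hF1.1 hF2.1 h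
  have e2 : {T : G.Subgraph | T.IsSpanning ∧ T.coe.IsTree}.ncard =
      {T : SimpleGraph V | T ≤ G ∧ T.IsTree}.ncard := by
    rw [← himT, Set.ncard_image_of_injOn]
    intro F1 hF1 F2 hF2 h
    exact hinj F1 F2 hF1.1 hF2.1 h
  rw [e1, e2]
  exact count_simple hG n k hn hk1 hkn
end

section
/- Let G be a connected graph and G' be obtained from G by adding a universal vertex s. Then the number of spanning trees of G' that contain exactly k edges incident to s equals the sum, over all spanning forests F of G with exactly k components, of the product of the component sizes of F. -/
open SimpleGraph

/-- The cone over a graph: add a new universal vertex `none` adjacent to every vertex of `G`. -/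
def cone {V : Type*} (G : SimpleGraph V) : SimpleGraph (Option V) where
  Adj x y := x ≠ y ∧ ∀ u v : V, x = some u → y = some v → G.Adj u v
  symm := ⟨fun x y h => ⟨h.1.symm, fun u v hx hy => (h.2 v u hy hx).symm⟩⟩
  loopless := ⟨fun x h => h.1 rfl⟩

namespace Stmt5Aux

variable {V : Type*} {G : SimpleGraph V}

lemma cone_adj_some_some {u v : V} : (cone G).Adj (some u) (some v) ↔ G.Adj u v := by
  constructor
  · exact fun h => h.2 u v rfl rfl
  · intro h
    refine ⟨by simpa using G.ne_of_adj h, fun a b ha hb => ?_⟩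
    cases ha; cases hb; simpa using h

lemma cone_adj_none_some {v : V} : (cone G).Adj none (some v) :=
  ⟨by simp, fun a b ha _ => by cases ha⟩

/-- remove the apex from a subgraph of the cone -/
def Fmap (T : (cone G).Subgraph) : G.Subgraph where
  verts := Set.univ
  Adj u v := T.Adj (some u) (some v)
  adj_sub h := cone_adj_some_some.mp (T.adj_sub h)
  edge_vert _ := trivial
  symm := ⟨fun u v h => T.adj_symm h⟩

@[simp] lemma Fmap_adj {T : (cone G).Subgraph} {u v : V} :
    (Fmap T).Adj u v ↔ T.Adj (some u) (some v) := Iff.rfl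

@[simp] lemma Fmap_verts {T : (cone G).Subgraph} : (Fmap T).verts = Set.univ := rfl

/-- add an apex to a subgraph of `G`, joined to the set `Sf` -/
def Tmap (F : G.Subgraph) (Sf : Set V) : (cone G).Subgraph where
  verts := Set.univ
  Adj x y := match x, y with
    | some u, some v => F.Adj u v
    | none, some v => v ∈ Sf
    | some u, none => u ∈ Sf
    | none, none => False
  adj_sub := by
    rintro (_ | u) (_ | v) h
    · exact h.elim
    · exact cone_adj_none_some
    · exact ((cone G).adj_symm cone_adj_none_some)
    · exact cone_adj_some_some.mpr (F.adj_sub h)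
  edge_vert _ := trivial
  symm := ⟨by
    rintro (_ | u) (_ | v) h
    · exact h.elim
    · exact h
    · exact h
    · exact F.adj_symm h⟩

@[simp] lemma Tmap_adj_some_some {F : G.Subgraph} {Sf : Set V} {u v : V} :
    (Tmap F Sf).Adj (some u) (some v) ↔ F.Adj u v := Iff.rfl

@[simp] lemma Tmap_adj_none_some {F : G.Subgraph} {Sf : Set V} {v : V} :
    (Tmap F Sf).Adj none (some v) ↔ v ∈ Sf := Iff.rfl

@[simp] lemma Tmap_adj_some_none {F : G.Subgraph} {Sf : Set V} {v : V} :
    (Tmap F Sf).Adj (some v) none ↔ v ∈ Sf := Iff.rfl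

@[simp] lemma Tmap_adj_none_none {F : G.Subgraph} {Sf : Set V} :
    ¬ (Tmap F Sf).Adj none none := fun h => h

@[simp] lemma Tmap_verts {F : G.Subgraph} {Sf : Set V} : (Tmap F Sf).verts = Set.univ := rfl


variable {T' : (cone G).Subgraph} {F : G.Subgraph}

lemma projWalk (hdown : ∀ u v : V, T'.Adj (some u) (some v) → F.Adj u v)
    (hFsp : F.IsSpanning) {x y : T'.verts} (p : T'.coe.Walk x y) :
    ∀ (_ : ∀ z ∈ p.support, (z : Option V) ≠ none) (u v : V)
      (_ : (x : Option V) = some u) (_ : (y : Option V) = some v),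
      ∃ q : F.coe.Walk ⟨u, hFsp u⟩ ⟨v, hFsp v⟩,
        p.support.map (Subtype.val) = q.support.map (fun z => some z.1) ∧
        p.edges.map (Sym2.map Subtype.val)
          = q.edges.map (Sym2.map (fun z => some z.1)) := by
  induction p with
  | nil =>
    intro hp u v hu hv
    rw [hu] at hv
    obtain rfl : u = v := Option.some_injective _ hv
    exact ⟨Walk.nil, by simp [hu], by simp⟩
  | @cons a b c h p ih =>
    intro hp u v hu hv
    have hb : (b : Option V) ≠ none := hp b (by simp)
    obtain ⟨w, hw⟩ : ∃ w, (b : Option V) = some w := Option.ne_none_iff_exists'.mp hb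
    have hadj : F.Adj u w := hdown u w (by rw [← hu, ← hw]; exact h)
    obtain ⟨q, hq1, hq2⟩ := ih (fun z hz => hp z (by simp [hz])) w v hw hv
    refine ⟨Walk.cons (show F.coe.Adj ⟨u, _⟩ ⟨w, _⟩ from hadj) q, ?_, ?_⟩
    · simpa [hu] using hq1
    · simp only [Walk.edges_cons, List.map_cons, hq2, Sym2.map_pair_eq, hu, hw]

lemma projCycle (hdown : ∀ u v : V, T'.Adj (some u) (some v) → F.Adj u v)
    (hFsp : F.IsSpanning) {x : T'.verts} (c : T'.coe.Walk x x) (hc : c.IsCycle)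
    (hnone : ∀ z ∈ c.support, (z : Option V) ≠ none) {u : V}
    (hu : (x : Option V) = some u) :
    ∃ q : F.coe.Walk ⟨u, hFsp u⟩ ⟨u, hFsp u⟩, q.IsCycle := by
  obtain ⟨q, hs, he⟩ := projWalk hdown hFsp c hnone u u hu hu
  have hginj : Function.Injective (fun z : F.verts => some z.1) :=
    fun a b hab => Subtype.ext (Option.some_injective _ hab)
  refine ⟨q, Walk.isCycle_def _ |>.mpr ⟨?_, ?_, ?_⟩⟩
  · -- trail : q.edges.Nodup
    rw [Walk.isTrail_def]
    have h1 : (c.edges.map (Sym2.map Subtype.val)).Nodup :=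
      hc.isTrail.edges_nodup.map (Sym2.map.injective Subtype.val_injective)
    rw [he] at h1
    exact h1.of_map _
  · -- q ≠ nil
    intro hqnil
    subst hqnil
    have hleneq := congrArg List.length hs
    rw [List.length_map, List.length_map, Walk.length_support, Walk.length_support,
      Walk.length_nil] at hleneq
    exact hc.not_nil (Walk.nil_iff_length_eq.mpr (by omega))
  · -- support tail nodup
    have h1 : (c.support.tail.map Subtype.val).Nodup :=
      ((Walk.isCycle_def _).mp hc).2.2.map Subtype.val_injective
    have h2 : c.support.tail.map Subtype.val
        = q.support.tail.map (fun z => some z.1) := by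
      have := congrArg List.tail hs
      simpa using this
    rw [h2] at h1
    exact h1.of_map _

/-- lift a hom upward -/
def upHom (hup : ∀ u v : V, F.Adj u v → T'.Adj (some u) (some v))
    (hT'sp : T'.IsSpanning) : F.coe →g T'.coe where
  toFun z := ⟨some z.1, hT'sp _⟩
  map_rel' := fun {a b} h => hup _ _ h

lemma upHom_injective (hup : ∀ u v : V, F.Adj u v → T'.Adj (some u) (some v))
    (hT'sp : T'.IsSpanning) : Function.Injective (upHom hup hT'sp) :=
  fun a b hab => Subtype.ext (Option.some_injective _ (congrArg Subtype.val hab))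



section Forward

variable (T : (cone G).Subgraph)

lemma Fmap_spanning : (Fmap T).IsSpanning := fun _ => trivial

lemma Fmap_acyclic (hsp : T.IsSpanning) (ht : T.coe.IsTree) :
    (Fmap T).coe.IsAcyclic := by
  intro v c hc
  have hup : ∀ u v : V, (Fmap T).Adj u v → T.Adj (some u) (some v) := fun _ _ h => h
  exact ht.IsAcyclic _ (hc.map (upHom_injective hup hsp))

lemma exists_unique_nbr (hsp : T.IsSpanning) (ht : T.coe.IsTree) (v : V) :
    ∃! w : V, T.Adj none (some w) ∧
      (Fmap T).coe.connectedComponentMk ⟨w, trivial⟩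
        = (Fmap T).coe.connectedComponentMk ⟨v, trivial⟩ := by
  classical
  have hup : ∀ u v : V, (Fmap T).Adj u v → T.Adj (some u) (some v) := fun _ _ h => h
  have hdown : ∀ u v : V, T.Adj (some u) (some v) → (Fmap T).Adj u v := fun _ _ h => h
  -- existence
  have hex : ∃ w : V, T.Adj none (some w) ∧
      (Fmap T).coe.connectedComponentMk ⟨w, trivial⟩
        = (Fmap T).coe.connectedComponentMk ⟨v, trivial⟩ := by
    obtain ⟨p0⟩ := ht.isConnected.preconnected ⟨none, hsp none⟩ ⟨some v, hsp (some v)⟩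
    obtain ⟨p, hp⟩ := p0.toPath
    have hnn : ¬ p.Nil := by
      intro h
      have := h.eq
      simp at this
    obtain ⟨b, hadj, q, rfl⟩ := Walk.not_nil_iff.mp hnn
    have hbne : (b : Option V) ≠ none := by
      intro h
      exact T.coe.irrefl (by rwa [show b = ⟨none, hsp none⟩ from Subtype.ext h] at hadj)
    obtain ⟨w, hw⟩ : ∃ w, (b : Option V) = some w := Option.ne_none_iff_exists'.mp hbne
    have hq : ∀ z ∈ q.support, (z : Option V) ≠ none := by
      intro z hz h
      have hznone : z = ⟨none, hsp none⟩ := Subtype.ext h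
      have := hp.support_nodup
      rw [Walk.support_cons] at this
      exact (List.nodup_cons.mp this).1 (hznone ▸ hz)
    obtain ⟨r, -, -⟩ := projWalk hdown (Fmap_spanning T) q hq w v hw rfl
    refine ⟨w, ?_, SimpleGraph.ConnectedComponent.eq.mpr ⟨r⟩⟩
    have : T.Adj none (b : Option V) := hadj
    rwa [hw] at this
  obtain ⟨w, hw1, hw2⟩ := hex
  refine ⟨w, ⟨hw1, hw2⟩, ?_⟩
  -- uniqueness
  rintro w' ⟨hw1', hw2'⟩
  have hreach : (Fmap T).coe.Reachable ⟨w', trivial⟩ ⟨w, trivial⟩ :=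
    SimpleGraph.ConnectedComponent.eq.mp (hw2'.trans hw2.symm)
  obtain ⟨r0⟩ := hreach
  obtain ⟨r, hr⟩ := r0.toPath
  have h2' : T.coe.Adj ⟨none, hsp none⟩ ⟨some w, hsp (some w)⟩ := hw1
  have h1' : T.coe.Adj ⟨none, hsp none⟩ ⟨some w', hsp (some w')⟩ := hw1'
  have hrmap : (r.map (upHom hup hsp)).IsPath :=
    Walk.map_isPath_of_injective (upHom_injective hup hsp) hr
  have hnmem : (⟨none, hsp none⟩ : T.verts) ∉ (r.map (upHom hup hsp)).support := by
    rw [Walk.support_map]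
    intro hmem
    obtain ⟨z, -, hz⟩ := List.mem_map.mp hmem
    exact Option.some_ne_none (z : V) (congrArg Subtype.val hz)
  have hP2 : (Walk.cons h1' (r.map (upHom hup hsp))).IsPath := hrmap.cons hnmem
  have hP1 : (Walk.cons h2' Walk.nil).IsPath :=
    Walk.IsPath.nil.cons (by
      rw [Walk.support_nil, List.mem_singleton]
      exact fun h => Option.some_ne_none w (congrArg Subtype.val h).symm)
  have hEq := isAcyclic_iff_path_unique.mp ht.IsAcyclic
    ⟨Walk.cons h1' (r.map (upHom hup hsp)), hP2⟩ ⟨Walk.cons h2' Walk.nil, hP1⟩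
  have hsup := congrArg (fun pp : T.coe.Path _ _ => pp.1.support) hEq
  simp only [Walk.support_cons, Walk.support_map, Walk.support_nil] at hsup
  have hsup2 := List.cons.inj
    (show _ :: (r.map (upHom hup hsp)).support = _ :: [⟨some w, hsp (some w)⟩] from hsup)
  have hm := (r.map (upHom hup hsp)).start_mem_support
  rw [hsup2.2, List.mem_singleton] at hm
  have h3 : (some w' : Option V) = some w := congrArg Subtype.val hm
  exact Option.some_injective _ h3
end Forward

section Forward2

lemma card_components (T : (cone G).Subgraph) (hsp : T.IsSpanning) (ht : T.coe.IsTree) :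
    Nat.card ((Fmap T).coe.ConnectedComponent) = {v : V | T.Adj none (some v)}.ncard := by
  rw [← Nat.card_coe_set_eq]
  refine Nat.card_congr (Equiv.ofBijective
    (fun v : {v : V | T.Adj none (some v)} =>
      (Fmap T).coe.connectedComponentMk ⟨v.1, trivial⟩) ⟨?_, ?_⟩).symm
  · rintro ⟨a, haa⟩ ⟨b, hbb⟩ h
    have := (exists_unique_nbr T hsp ht b).unique ⟨haa, h⟩ ⟨hbb, rfl⟩
    exact Subtype.ext this
  · intro cc
    induction cc using SimpleGraph.ConnectedComponent.ind with
    | _ v =>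
      obtain ⟨w, ⟨hw1, hw2⟩, -⟩ := exists_unique_nbr T hsp ht v.1
      exact ⟨⟨w, hw1⟩, hw2.trans (congrArg _ (Subtype.ext rfl))⟩

end Forward2

section Backward

variable (F : G.Subgraph) (hFsp : F.IsSpanning) (hFac : F.coe.IsAcyclic)
variable (f : ∀ cc : F.coe.ConnectedComponent,
  {v : F.verts // F.coe.connectedComponentMk v = cc})

/-- the selected vertex of each component -/
def gsel (f : ∀ cc : F.coe.ConnectedComponent,
    {v : F.verts // F.coe.connectedComponentMk v = cc}) :
    F.coe.ConnectedComponent → V := fun cc => ((f cc : F.verts) : V)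

lemma gsel_inj : Function.Injective (gsel F f) := by
  intro c1 c2 h
  have h2 : (f c1).1 = (f c2).1 := Subtype.ext h
  rw [← (f c1).2, ← (f c2).2, h2]

lemma mem_range_gsel {v : V} :
    v ∈ Set.range (gsel F f) ↔
      gsel F f (F.coe.connectedComponentMk ⟨v, hFsp v⟩) = v := by
  constructor
  · rintro ⟨cc, rfl⟩
    congr 1
    exact (congrArg F.coe.connectedComponentMk (Subtype.ext rfl)).trans (f cc).2
  · intro h; exact ⟨_, h⟩

lemma Tmap_connected (hFsp : F.IsSpanning) :
    (Tmap F (Set.range (gsel F f))).coe.Connected := by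
  rw [connected_iff]
  refine ⟨?_, ⟨⟨none, trivial⟩⟩⟩
  have hup : ∀ a b : V, F.Adj a b →
      (Tmap F (Set.range (gsel F f))).Adj (some a) (some b) := fun _ _ h => h
  have key : ∀ x : ↥(Tmap F (Set.range (gsel F f))).verts,
      (Tmap F (Set.range (gsel F f))).coe.Reachable ⟨none, trivial⟩ x := by
    rintro ⟨x, hx⟩
    cases x with
    | none => exact Reachable.refl _
    | some v =>
      have hreach : F.coe.Reachable
          (f (F.coe.connectedComponentMk ⟨v, hFsp v⟩)).1 ⟨v, hFsp v⟩ :=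
        SimpleGraph.ConnectedComponent.eq.mp
          (f (F.coe.connectedComponentMk ⟨v, hFsp v⟩)).2
      obtain ⟨r⟩ := hreach
      have hadj : (Tmap F (Set.range (gsel F f))).coe.Adj ⟨none, trivial⟩
          ⟨some ((f (F.coe.connectedComponentMk ⟨v, hFsp v⟩)).1 : V), trivial⟩ :=
        show _ ∈ Set.range (gsel F f) from ⟨_, rfl⟩
      exact ⟨Walk.cons hadj (r.map (upHom hup (fun _ => trivial)))⟩
  intro x y; exact (key x).symm.trans (key y)

lemma Tmap_acyclic (hFsp : F.IsSpanning) (hFac : F.coe.IsAcyclic) :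
    (Tmap F (Set.range (gsel F f))).coe.IsAcyclic := by
  classical
  intro x c hc
  have hdown : ∀ a b : V, (Tmap F (Set.range (gsel F f))).Adj (some a) (some b)
      → F.Adj a b := fun _ _ h => h
  by_cases hnone : (⟨none, trivial⟩ : ↥(Tmap F (Set.range (gsel F f))).verts) ∈ c.support
  · have hc' := hc.rotate hnone
    obtain ⟨b, h1, p, hpeq⟩ := Walk.not_nil_iff.mp hc'.not_nil
    have hbne : (b : Option V) ≠ none := fun h =>
      (Tmap F (Set.range (gsel F f))).coe.irrefl
        (by rwa [show b = ⟨none, trivial⟩ from Subtype.ext h] at h1)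
    obtain ⟨a, ha⟩ := Option.ne_none_iff_exists'.mp hbne
    rw [hpeq] at hc'
    have hcons := (Walk.cons_isCycle_iff p h1).mp hc'
    have hpr : p.reverse.IsPath := hcons.1.reverse
    have hprnn : ¬ p.reverse.Nil := by
      intro h
      exact hbne (congrArg Subtype.val h.eq).symm
    obtain ⟨b2, h2, p2, hp2eq⟩ := Walk.not_nil_iff.mp hprnn
    have hb2ne : (b2 : Option V) ≠ none := fun h =>
      (Tmap F (Set.range (gsel F f))).coe.irrefl
        (by rwa [show b2 = ⟨none, trivial⟩ from Subtype.ext h] at h2)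
    obtain ⟨a2, ha2⟩ := Option.ne_none_iff_exists'.mp hb2ne
    have hp2sup : ∀ z ∈ p2.support, (z : Option V) ≠ none := by
      intro z hz h
      have hznone : z = ⟨none, trivial⟩ := Subtype.ext h
      have hnd := hpr.support_nodup
      rw [hp2eq, Walk.support_cons] at hnd
      exact (List.nodup_cons.mp hnd).1 (hznone ▸ hz)
    obtain ⟨q, -, -⟩ := projWalk hdown hFsp p2 hp2sup a2 a ha2 ha
    have hA : a ∈ Set.range (gsel F f) := by
      have h' : (Tmap F (Set.range (gsel F f))).Adj none (b : Option V) := h1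
      rwa [ha] at h'
    have hA2 : a2 ∈ Set.range (gsel F f) := by
      have h' : (Tmap F (Set.range (gsel F f))).Adj none (b2 : Option V) := h2
      rwa [ha2] at h'
    have hmk : F.coe.connectedComponentMk ⟨a2, hFsp a2⟩
        = F.coe.connectedComponentMk ⟨a, hFsp a⟩ :=
      SimpleGraph.ConnectedComponent.eq.mpr ⟨q⟩
    have haa2 : a = a2 := by
      rw [mem_range_gsel F hFsp f] at hA hA2
      rw [← hA, ← hA2, hmk]
    have hbb2 : b = b2 := Subtype.ext (by rw [ha, ha2, haa2])
    subst hbb2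
    have hp2path : p2.IsPath := by
      rw [hp2eq] at hpr
      exact hpr.of_cons
    have hp2nil : p2 = Walk.nil := Walk.isPath_iff_eq_nil.mp hp2path
    have h3 := hc'.three_le_length
    have h4 : p.reverse.length = 1 := by rw [hp2eq, hp2nil]; rfl
    rw [Walk.length_reverse] at h4
    rw [Walk.length_cons, h4] at h3
    omega
  · have hxne : (x : Option V) ≠ none := fun h => hnone
      (by rw [← show x = ⟨none, trivial⟩ from Subtype.ext h]; exact c.start_mem_support)
    obtain ⟨u, hu⟩ := Option.ne_none_iff_exists'.mp hxne
    have hsupp : ∀ z ∈ c.support, (z : Option V) ≠ none := fun z hz h => hnone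
      (by rw [← show z = ⟨none, trivial⟩ from Subtype.ext h]; exact hz)
    obtain ⟨q, hq⟩ := projCycle hdown hFsp c hc hsupp hu
    exact hFac _ hq

end Backward

section Pick

lemma exists_unique_nbr' (T : (cone G).Subgraph) (hsp : T.IsSpanning)
    (ht : T.coe.IsTree) {F : G.Subgraph} (hTF : Fmap T = F) (v : F.verts) :
    ∃! w : V, T.Adj none (some w) ∧ ∃ h : w ∈ F.verts,
      F.coe.connectedComponentMk ⟨w, h⟩ = F.coe.connectedComponentMk v := by
  subst hTF
  obtain ⟨w, ⟨hw1, hw2⟩, hu⟩ := exists_unique_nbr T hsp ht v.1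
  refine ⟨w, ⟨hw1, trivial, hw2.trans (congrArg _ (Subtype.ext rfl))⟩, ?_⟩
  rintro w' ⟨hw1', h', hw2'⟩
  exact hu w' ⟨hw1', hw2'.trans (congrArg _ (Subtype.ext rfl)).symm⟩

noncomputable def pickVal (T : (cone G).Subgraph) (hsp : T.IsSpanning)
    (ht : T.coe.IsTree) {F : G.Subgraph} (hTF : Fmap T = F)
    (cc : F.coe.ConnectedComponent) : V :=
  (exists_unique_nbr' T hsp ht hTF (Quot.out cc)).exists.choose

lemma pickVal_spec (T : (cone G).Subgraph) (hsp : T.IsSpanning)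
    (ht : T.coe.IsTree) {F : G.Subgraph} (hTF : Fmap T = F)
    (cc : F.coe.ConnectedComponent) :
    T.Adj none (some (pickVal T hsp ht hTF cc)) ∧
      ∃ h : pickVal T hsp ht hTF cc ∈ F.verts,
        F.coe.connectedComponentMk ⟨pickVal T hsp ht hTF cc, h⟩ = cc := by
  obtain ⟨h1, h2, h3⟩ := (exists_unique_nbr' T hsp ht hTF (Quot.out cc)).exists.choose_spec
  exact ⟨h1, h2, h3.trans (Quot.out_eq cc)⟩

lemma pickVal_unique (T : (cone G).Subgraph) (hsp : T.IsSpanning)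
    (ht : T.coe.IsTree) {F : G.Subgraph} (hTF : Fmap T = F)
    (cc : F.coe.ConnectedComponent) (w : V) (hw : T.Adj none (some w))
    (h : w ∈ F.verts) (hmk : F.coe.connectedComponentMk ⟨w, h⟩ = cc) :
    w = pickVal T hsp ht hTF cc :=
  (exists_unique_nbr' T hsp ht hTF (Quot.out cc)).unique
    ⟨hw, h, hmk.trans (Quot.out_eq cc).symm⟩
    (exists_unique_nbr' T hsp ht hTF (Quot.out cc)).exists.choose_spec

noncomputable def pick (T : (cone G).Subgraph) (hsp : T.IsSpanning)
    (ht : T.coe.IsTree) {F : G.Subgraph} (hTF : Fmap T = F)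
    (cc : F.coe.ConnectedComponent) :
    {v : F.verts // F.coe.connectedComponentMk v = cc} :=
  ⟨⟨pickVal T hsp ht hTF cc, (pickVal_spec T hsp ht hTF cc).2.choose⟩,
    (pickVal_spec T hsp ht hTF cc).2.choose_spec⟩

end Pick

section Main

/-- predicate on subgraphs of the cone -/
def PP (k : ℕ) (T : (cone G).Subgraph) : Prop :=
  T.IsSpanning ∧ T.coe.IsTree ∧ {v : V | T.Adj none (some v)}.ncard = k

/-- predicate on subgraphs of `G` -/
def QQ (k : ℕ) (F : G.Subgraph) : Prop :=
  F.IsSpanning ∧ F.coe.IsAcyclic ∧ Nat.card F.coe.ConnectedComponent = k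

lemma Fmap_QQ (k : ℕ) (T : (cone G).Subgraph) (hP : PP k T) : QQ k (Fmap T) :=
  ⟨Fmap_spanning T, Fmap_acyclic T hP.1 hP.2.1,
    (card_components T hP.1 hP.2.1).trans hP.2.2⟩

lemma Fmap_Tmap (F : G.Subgraph) (hFsp : F.IsSpanning) (Sf : Set V) :
    Fmap (Tmap F Sf) = F :=
  SimpleGraph.Subgraph.ext (Set.eq_univ_of_forall hFsp).symm rfl

lemma Tmap_PP (k : ℕ) (F : G.Subgraph) (hQ : QQ k F)
    (f : ∀ cc : F.coe.ConnectedComponent,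
      {v : F.verts // F.coe.connectedComponentMk v = cc}) :
    PP k (Tmap F (Set.range (gsel F f))) := by
  refine ⟨fun _ => trivial, ⟨Tmap_connected F f hQ.1, Tmap_acyclic F f hQ.1 hQ.2.1⟩, ?_⟩
  have h1 : {v : V | (Tmap F (Set.range (gsel F f))).Adj none (some v)}
      = Set.range (gsel F f) := rfl
  rw [h1, ← Nat.card_coe_set_eq, Nat.card_range_of_injective (gsel_inj F f), hQ.2.2]

noncomputable def fiberEquiv (k : ℕ) (F : G.Subgraph) (hQ : QQ k F) :
    {T : (cone G).Subgraph // PP k T ∧ Fmap T = F} ≃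
      (∀ cc : F.coe.ConnectedComponent,
        {v : F.verts // F.coe.connectedComponentMk v = cc}) where
  toFun T cc := pick T.1 T.2.1.1 T.2.1.2.1 T.2.2 cc
  invFun f := ⟨Tmap F (Set.range (gsel F f)), Tmap_PP k F hQ f, Fmap_Tmap F hQ.1 _⟩
  left_inv := by
    rintro ⟨T, ⟨hsp, ht, hk⟩, hTF⟩
    apply Subtype.ext
    subst hTF
    refine SimpleGraph.Subgraph.ext (Set.eq_univ_of_forall hsp).symm ?_
    funext x y
    apply propext
    match x, y with
    | some u, some v => exact Iff.rfl
    | none, some v =>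
      constructor
      · rintro ⟨cc, hcc⟩
        subst hcc
        exact (pickVal_spec T hsp ht rfl cc).1
      · intro h
        exact ⟨(Fmap T).coe.connectedComponentMk ⟨v, trivial⟩,
          (pickVal_unique T hsp ht rfl _ v h trivial rfl).symm⟩
    | some v, none =>
      constructor
      · rintro ⟨cc, hcc⟩
        subst hcc
        exact T.adj_symm (pickVal_spec T hsp ht rfl cc).1
      · intro h
        exact ⟨(Fmap T).coe.connectedComponentMk ⟨v, trivial⟩,
          (pickVal_unique T hsp ht rfl _ v (T.adj_symm h) trivial rfl).symm⟩
    | none, none =>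
      constructor
      · exact fun h => h.elim
      · intro h
        exact ((cone G).irrefl (T.adj_sub h)).elim
  right_inv := by
    intro f
    funext cc
    apply Subtype.ext
    apply Subtype.ext
    have hw : (Tmap F (Set.range (gsel F f))).Adj none (some (gsel F f cc)) :=
      ⟨cc, rfl⟩
    have hmem : gsel F f cc ∈ F.verts := (f cc).1.2
    have hmk : F.coe.connectedComponentMk ⟨gsel F f cc, hmem⟩ = cc :=
      (congrArg F.coe.connectedComponentMk (Subtype.ext rfl)).trans (f cc).2
    exact (pickVal_unique (Tmap F (Set.range (gsel F f)))
      (fun _ => trivial) (Tmap_PP k F hQ f).2.1 (Fmap_Tmap F hQ.1 _) cc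
      (gsel F f cc) hw hmem hmk).symm

end Main

section Counting

instance subgraphFinite {W : Type*} [Finite W] (H : SimpleGraph W) :
    Finite H.Subgraph :=
  Finite.of_injective (fun K => (K.verts, K.Adj))
    (by
      rintro K1 K2 h
      exact SimpleGraph.Subgraph.ext (congrArg Prod.fst h) (congrArg Prod.snd h))

instance connectedComponentFinite {W : Type*} [Finite W] (H : SimpleGraph W) :
    Finite H.ConnectedComponent :=
  Finite.of_surjective H.connectedComponentMk (fun cc => Quot.exists_rep cc)

lemma natCard_sigma {ι : Type*} [Fintype ι] (f : ι → Type*) [∀ i, Finite (f i)] :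
    Nat.card (Σ i, f i) = ∑ i, Nat.card (f i) := by
  have := fun i => Fintype.ofFinite (f i)
  simp only [Nat.card_eq_fintype_card]
  exact Fintype.card_sigma

variable [Finite V]

theorem main_count (k : ℕ) :
    {T : (cone G).Subgraph | PP k T}.ncard
      = ∑ᶠ F ∈ {F : G.Subgraph | QQ k F},
          ∏ᶠ cc : F.coe.ConnectedComponent,
            Nat.card {v : F.verts // F.coe.connectedComponentMk v = cc} := by
  classical
  set S := {F : G.Subgraph | QQ k F} with hS
  haveI : Fintype ↥S := Fintype.ofFinite _
  -- weight as Nat.card of a Pi type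
  have hwt : ∀ F : G.Subgraph,
      (∏ᶠ cc : F.coe.ConnectedComponent,
        Nat.card {v : F.verts // F.coe.connectedComponentMk v = cc})
      = Nat.card (∀ cc : F.coe.ConnectedComponent,
          {v : F.verts // F.coe.connectedComponentMk v = cc}) := by
    intro F
    haveI := Fintype.ofFinite F.coe.ConnectedComponent
    rw [Nat.card_pi, finprod_eq_prod_of_fintype]
  -- the big equivalence
  let gm : ↥{T : (cone G).Subgraph | PP k T} → ↥S :=
    fun T => ⟨Fmap T.1, Fmap_QQ k T.1 T.2⟩
  let e2 : ∀ F : ↥S, {T : ↥{T : (cone G).Subgraph | PP k T} // gm T = F}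
      ≃ {T : (cone G).Subgraph // PP k T ∧ Fmap T = F.1} :=
    fun F =>
      { toFun := fun T => ⟨T.1.1, T.1.2, congrArg Subtype.val T.2⟩
        invFun := fun T => ⟨⟨T.1, T.2.1⟩, Subtype.ext T.2.2⟩
        left_inv := fun _ => rfl
        right_inv := fun _ => rfl }
  let e : ↥{T : (cone G).Subgraph | PP k T}
      ≃ Σ F : ↥S, (∀ cc : (F.1.coe).ConnectedComponent,
          {v : F.1.verts // F.1.coe.connectedComponentMk v = cc}) :=
    (Equiv.sigmaFiberEquiv gm).symm.trans
      (Equiv.sigmaCongrRight (fun F => (e2 F).trans (fiberEquiv k F.1 F.2)))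
  rw [← Nat.card_coe_set_eq, Nat.card_congr e, natCard_sigma]
  rw [finsum_mem_eq_toFinset_sum, ← Finset.sum_coe_sort (S.toFinset)]
  refine Fintype.sum_equiv (Equiv.subtypeEquivRight (fun x => Set.mem_toFinset)).symm _ _
    (fun F => ?_)
  rw [hwt]
  rfl

end Counting
end Stmt5Aux

open Stmt5Aux in
/-- the number of spanning trees of the cone `G'` over a connected graph `G`
containing exactly `k` edges incident to the apex equals the sum, over spanning forests `F`
of `G` with exactly `k` components, of the product of the component sizes of `F`. -/
theorem stmt5 {V : Type*} [Fintype V] (G : SimpleGraph V) (hG : G.Connected)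
    (n k : ℕ) (hn : n = Fintype.card V) (hk1 : 1 ≤ k) (hkn : k ≤ n) :
    {T : (cone G).Subgraph | T.IsSpanning ∧ T.coe.IsTree ∧
        {v : V | T.Adj none (some v)}.ncard = k}.ncard =
      ∑ᶠ F ∈ {F : G.Subgraph | F.IsSpanning ∧ F.coe.IsAcyclic ∧
          Nat.card F.coe.ConnectedComponent = k},
        ∏ᶠ cc : F.coe.ConnectedComponent,
          Nat.card {v : F.verts // F.coe.connectedComponentMk v = cc} := by
  exact Stmt5Aux.main_count k
end

section
/- For any reversible ergodic Markov chain P on a finite state space with stationary distribution μ, and any set S with μ(S) ≤ 1/2, the mixing time (to total variation distance 1/4) is at least 1/(4Φ(S)), where Φ(S) = Q(S, Sᶜ)/μ(S) and Q(S,Sᶜ) = Σ_{x∈S, y∉S} μ(x)P(x,y). -/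
/-- conductance lower bound on mixing time. For a reversible ergodic chain `P`
with stationary distribution `μ` and any `S` with `μ(S) ≤ 1/2`, any time `t` at which the
chain is within total-variation distance `1/4` of `μ` from every start satisfies
`t ≥ 1/(4 Φ(S))` where `Φ(S) = Q(S, Sᶜ)/μ(S)`. -/
theorem stmt6 {Ω : Type*} [Fintype Ω] [Nonempty Ω] [DecidableEq Ω]
    (P : Matrix Ω Ω ℝ) (μ : Ω → ℝ)
    (hPnn : ∀ x y, 0 ≤ P x y) (hProw : ∀ x, ∑ y, P x y = 1)
    (hμnn : ∀ x, 0 ≤ μ x) (hμsum : ∑ x, μ x = 1)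
    (hstat : ∀ y, ∑ x, μ x * P x y = μ y)
    (hrev : ∀ x y, μ x * P x y = μ y * P y x)
    (herg : ∃ t : ℕ, ∀ x y, 0 < (P ^ t) x y)
    (S : Finset Ω) (hS : ∑ x ∈ S, μ x ≤ 1 / 2)
    (t : ℕ) (hmix : ∀ x, (1 / 2) * ∑ z, |(P ^ t) x z - μ z| ≤ 1 / 4) :
    1 / (4 * ((∑ x ∈ S, ∑ y ∈ Sᶜ, μ x * P x y) / ∑ x ∈ S, μ x)) ≤ (t : ℝ) := by
  set m := ∑ x ∈ S, μ x with hm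
  set Q := ∑ x ∈ S, ∑ y ∈ Sᶜ, μ x * P x y with hQdef
  have hQnn : 0 ≤ Q := Finset.sum_nonneg fun x _ => Finset.sum_nonneg fun y _ =>
    mul_nonneg (hμnn x) (hPnn x y)
  have hmnn : 0 ≤ m := Finset.sum_nonneg fun x _ => hμnn x
  -- powers have nonneg entries
  have hPnnn : ∀ (n : ℕ) x y, 0 ≤ (P ^ n) x y := by
    intro n
    induction n with
    | zero => intro x y; simp [Matrix.one_apply]; split <;> norm_num
    | succ n ih =>
      intro x y
      rw [pow_succ, Matrix.mul_apply]
      exact Finset.sum_nonneg fun z _ => mul_nonneg (ih x z) (hPnn z y)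
  -- row sums of powers are 1
  have hrown : ∀ (n : ℕ) x, ∑ y, (P ^ n) x y = 1 := by
    intro n
    induction n with
    | zero => intro x; simp [Matrix.one_apply]
    | succ n ih =>
      intro x
      simp_rw [pow_succ, Matrix.mul_apply]
      rw [Finset.sum_comm]
      simp_rw [← Finset.mul_sum, hProw, mul_one]
      exact ih x
  -- stationarity of powers
  have hstatn : ∀ (n : ℕ) z, ∑ x, μ x * (P ^ n) x z = μ z := by
    intro n
    induction n with
    | zero => intro z; simp [Matrix.one_apply]
    | succ n ih =>
      intro z
      simp_rw [pow_succ, Matrix.mul_apply, Finset.mul_sum]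
      rw [Finset.sum_comm]
      simp_rw [← mul_assoc, ← Finset.sum_mul, ih]
      exact hstat z
  -- escaped mass bound: g n ≤ n * Q
  have key : ∀ n : ℕ, ∑ x ∈ S, μ x * ∑ y ∈ Sᶜ, (P ^ n) x y ≤ n * Q := by
    intro n
    induction n with
    | zero =>
      simp only [pow_zero, Nat.cast_zero, zero_mul]
      have : ∀ x ∈ S, μ x * ∑ y ∈ Sᶜ, (1 : Matrix Ω Ω ℝ) x y = 0 := by
        intro x hx
        have : ∑ y ∈ Sᶜ, (1 : Matrix Ω Ω ℝ) x y = 0 := by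
          apply Finset.sum_eq_zero
          intro y hy
          rw [Matrix.one_apply]
          have : x ≠ y := by
            rintro rfl; exact (Finset.mem_compl.mp hy) hx
          simp [this]
        rw [this, mul_zero]
      rw [Finset.sum_congr rfl this]
      simp
    | succ n ih =>
      have hrw : ∑ x ∈ S, μ x * ∑ y ∈ Sᶜ, (P ^ (n+1)) x y
          = ∑ z, (∑ x ∈ S, μ x * (P ^ n) x z) * (∑ y ∈ Sᶜ, P z y) := by
        calc ∑ x ∈ S, μ x * ∑ y ∈ Sᶜ, (P ^ (n+1)) x y
            = ∑ x ∈ S, ∑ z, (μ x * (P ^ n) x z) * ∑ y ∈ Sᶜ, P z y := by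
              apply Finset.sum_congr rfl
              intro x _
              simp_rw [pow_succ, Matrix.mul_apply]
              rw [Finset.sum_comm]
              rw [Finset.mul_sum]
              apply Finset.sum_congr rfl
              intro z _
              simp [Finset.mul_sum, mul_assoc]
          _ = ∑ z, (∑ x ∈ S, μ x * (P ^ n) x z) * ∑ y ∈ Sᶜ, P z y := by
              rw [Finset.sum_comm]
              simp_rw [Finset.sum_mul]
      rw [hrw]
      have haz : ∀ z, ∑ x ∈ S, μ x * (P ^ n) x z ≤ μ z := by
        intro z
        rw [← hstatn n z]
        exact Finset.sum_le_sum_of_subset_of_nonneg (Finset.subset_univ S)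
          (fun x _ _ => mul_nonneg (hμnn x) (hPnnn n x z))
      have haznn : ∀ z, 0 ≤ ∑ x ∈ S, μ x * (P ^ n) x z := fun z =>
        Finset.sum_nonneg fun x _ => mul_nonneg (hμnn x) (hPnnn n x z)
      have hbz : ∀ z, ∑ y ∈ Sᶜ, P z y ≤ 1 := by
        intro z
        rw [← hProw z]
        exact Finset.sum_le_sum_of_subset_of_nonneg (Finset.subset_univ _)
          (fun y _ _ => hPnn z y)
      have hbznn : ∀ z, 0 ≤ ∑ y ∈ Sᶜ, P z y := fun z =>
        Finset.sum_nonneg fun y _ => hPnn z y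
      rw [← Finset.sum_add_sum_compl S]
      have h1 : ∑ z ∈ S, (∑ x ∈ S, μ x * (P ^ n) x z) * (∑ y ∈ Sᶜ, P z y) ≤ Q := by
        rw [hQdef]
        apply Finset.sum_le_sum
        intro z hz
        rw [← Finset.mul_sum]
        exact mul_le_mul_of_nonneg_right (haz z) (hbznn z)
      have h2 : ∑ z ∈ Sᶜ, (∑ x ∈ S, μ x * (P ^ n) x z) * (∑ y ∈ Sᶜ, P z y)
          ≤ ∑ x ∈ S, μ x * ∑ y ∈ Sᶜ, (P ^ n) x y := by
        have : ∑ z ∈ Sᶜ, (∑ x ∈ S, μ x * (P ^ n) x z) * (∑ y ∈ Sᶜ, P z y)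
            ≤ ∑ z ∈ Sᶜ, ∑ x ∈ S, μ x * (P ^ n) x z := by
          apply Finset.sum_le_sum
          intro z hz
          calc (∑ x ∈ S, μ x * (P ^ n) x z) * (∑ y ∈ Sᶜ, P z y)
              ≤ (∑ x ∈ S, μ x * (P ^ n) x z) * 1 :=
                mul_le_mul_of_nonneg_left (hbz z) (haznn z)
            _ = ∑ x ∈ S, μ x * (P ^ n) x z := mul_one _
        refine this.trans_eq ?_
        rw [Finset.sum_comm]
        simp_rw [Finset.mul_sum]
      calc ∑ z ∈ S, (∑ x ∈ S, μ x * (P ^ n) x z) * (∑ y ∈ Sᶜ, P z y)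
            + ∑ z ∈ Sᶜ, (∑ x ∈ S, μ x * (P ^ n) x z) * (∑ y ∈ Sᶜ, P z y)
          ≤ Q + n * Q := add_le_add h1 (h2.trans ih)
        _ = (↑(n + 1)) * Q := by push_cast; ring
  -- mixing forces escape probability ≥ 1/4 from each x ∈ S
  have hesc : ∀ x ∈ S, (1:ℝ)/4 ≤ ∑ y ∈ Sᶜ, (P ^ t) x y := by
    intro x hx
    have hsum0 : ∑ y, ((P ^ t) x y - μ y) = 0 := by
      rw [Finset.sum_sub_distrib, hrown t x, hμsum]; ring
    have hsplit : ∑ y ∈ Sᶜ, (μ y - (P ^ t) x y) = ∑ y ∈ S, ((P ^ t) x y - μ y) := by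
      have := Finset.sum_add_sum_compl S (fun y => ((P ^ t) x y - μ y))
      rw [hsum0] at this
      have h2 : ∑ y ∈ Sᶜ, (μ y - (P ^ t) x y) = - ∑ y ∈ Sᶜ, ((P ^ t) x y - μ y) := by
        rw [← Finset.sum_neg_distrib]; congr 1; ext y; ring
      linarith
    have habs1 : ∑ y ∈ Sᶜ, (μ y - (P ^ t) x y) ≤ ∑ y ∈ Sᶜ, |(P ^ t) x y - μ y| := by
      apply Finset.sum_le_sum
      intro y _
      rw [abs_sub_comm]
      exact le_abs_self _
    have habs2 : ∑ y ∈ S, ((P ^ t) x y - μ y) ≤ ∑ y ∈ S, |(P ^ t) x y - μ y| := by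
      apply Finset.sum_le_sum
      intro y _
      exact le_abs_self _
    have htot : ∑ y ∈ S, |(P ^ t) x y - μ y| + ∑ y ∈ Sᶜ, |(P ^ t) x y - μ y|
        = ∑ y, |(P ^ t) x y - μ y| := Finset.sum_add_sum_compl S _
    have hmx := hmix x
    have hcompl : ∑ y ∈ Sᶜ, μ y = 1 - m := by
      have := Finset.sum_add_sum_compl S μ
      rw [hμsum] at this
      linarith [this]
    have : ∑ y ∈ Sᶜ, (μ y - (P ^ t) x y) ≤ 1/4 := by
      nlinarith [habs1, habs2, hsplit, htot, hmx]
    rw [Finset.sum_sub_distrib, hcompl] at this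
    linarith
  -- combine: m/4 ≤ t * Q
  have hmain : m / 4 ≤ (t : ℝ) * Q := by
    have : ∑ x ∈ S, μ x * (1/4 : ℝ) ≤ ∑ x ∈ S, μ x * ∑ y ∈ Sᶜ, (P ^ t) x y := by
      apply Finset.sum_le_sum
      intro x hx
      exact mul_le_mul_of_nonneg_left (hesc x hx) (hμnn x)
    rw [← Finset.sum_mul] at this
    have := this.trans (key t)
    linarith
  rcases eq_or_lt_of_le hmnn with hm0 | hmpos
  · rw [← hm0]
    simp
  · have hQpos : 0 < Q := by
      rcases eq_or_lt_of_le hQnn with hQ0 | h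
      · exfalso; rw [← hQ0] at hmain; simp at hmain; linarith
      · exact h
    have heq : 1 / (4 * (Q / m)) = m / (4 * Q) := by
      field_simp
    rw [heq, div_le_iff₀ (by positivity)]
    nlinarith
end

section
/- Let P and P' be two reversible Markov chains on the same finite state space with stationary distributions π and π'. Suppose for some constant A ≥ 1 we have π(x)P(x,y) ≥ A^{-1} π'(x)P'(x,y) for all x ≠ y, and π(x) ≤ A π'(x) for all x. Then the Poincaré constant (spectral gap) satisfies gap(P) ≥ A^{-2} gap(P'). -/
/-- The Dirichlet form `E_P(f,f) = (1/2) Σ_{x,y} π(x) P(x,y) (f(x) - f(y))²`. -/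
noncomputable def dirichletForm {Ω : Type*} [Fintype Ω] (π : Ω → ℝ) (P : Matrix Ω Ω ℝ)
    (f : Ω → ℝ) : ℝ :=
  (1 / 2) * ∑ x, ∑ y, π x * P x y * (f x - f y) ^ 2

/-- The variance `Var_π(f) = E_π[f²] - (E_π[f])²`. -/
noncomputable def variance {Ω : Type*} [Fintype Ω] (π : Ω → ℝ) (f : Ω → ℝ) : ℝ :=
  ∑ x, π x * f x ^ 2 - (∑ x, π x * f x) ^ 2

/-- The Poincaré constant (spectral gap): infimum of `E_P(f,f)/Var_π(f)` over nonconstant `f`. -/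
noncomputable def specGap {Ω : Type*} [Fintype Ω] (π : Ω → ℝ) (P : Matrix Ω Ω ℝ) : ℝ :=
  sInf {r : ℝ | ∃ f : Ω → ℝ, variance π f ≠ 0 ∧ r = dirichletForm π P f / variance π f}

lemma var_second_moment' {Ω : Type*} [Fintype Ω] (π : Ω → ℝ) (f : Ω → ℝ)
    (hπsum : ∑ x, π x = 1) (c : ℝ) :
    ∑ x, π x * (f x - c) ^ 2 = variance π f + (∑ x, π x * f x - c) ^ 2 := by
  have h : ∑ x, π x * (f x - c) ^ 2
      = ∑ x, (π x * f x ^ 2 - 2 * c * (π x * f x) + c ^ 2 * π x) := by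
    apply Finset.sum_congr rfl; intro x _; ring
  rw [h, Finset.sum_add_distrib, Finset.sum_sub_distrib, ← Finset.mul_sum, ← Finset.mul_sum,
    hπsum, variance]
  ring

lemma var_nonneg {Ω : Type*} [Fintype Ω] (π : Ω → ℝ) (f : Ω → ℝ)
    (hπnn : ∀ x, 0 ≤ π x) (hπsum : ∑ x, π x = 1) : 0 ≤ variance π f := by
  have h := var_second_moment' π f hπsum (∑ x, π x * f x)
  simp at h
  rw [← h]
  apply Finset.sum_nonneg
  intro x _
  exact mul_nonneg (hπnn x) (sq_nonneg _)

lemma dir_nonneg {Ω : Type*} [Fintype Ω] (π : Ω → ℝ) (P : Matrix Ω Ω ℝ) (f : Ω → ℝ)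
    (hπnn : ∀ x, 0 ≤ π x) (hPnn : ∀ x y, 0 ≤ P x y) : 0 ≤ dirichletForm π P f := by
  unfold dirichletForm
  have : 0 ≤ ∑ x, ∑ y, π x * P x y * (f x - f y) ^ 2 := by
    apply Finset.sum_nonneg; intro x _; apply Finset.sum_nonneg; intro y _
    exact mul_nonneg (mul_nonneg (hπnn x) (hPnn x y)) (sq_nonneg _)
  linarith

/-- comparison of Poincaré constants. If `π(x)P(x,y) ≥ A⁻¹ π'(x)P'(x,y)` for
all `x ≠ y` and `π(x) ≤ A π'(x)`, then `gap(P) ≥ A⁻² gap(P')`. -/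
theorem stmt7 {Ω : Type*} [Fintype Ω] [Nonempty Ω]
    (P P' : Matrix Ω Ω ℝ) (π π' : Ω → ℝ)
    (hPnn : ∀ x y, 0 ≤ P x y) (hProw : ∀ x, ∑ y, P x y = 1)
    (hP'nn : ∀ x y, 0 ≤ P' x y) (hP'row : ∀ x, ∑ y, P' x y = 1)
    (hπnn : ∀ x, 0 ≤ π x) (hπsum : ∑ x, π x = 1)
    (hπ'nn : ∀ x, 0 ≤ π' x) (hπ'sum : ∑ x, π' x = 1)
    (hrev : ∀ x y, π x * P x y = π y * P y x)
    (hrev' : ∀ x y, π' x * P' x y = π' y * P' y x)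
    (A : ℝ) (hA : 1 ≤ A)
    (hflow : ∀ x y, x ≠ y → A⁻¹ * (π' x * P' x y) ≤ π x * P x y)
    (hmass : ∀ x, π x ≤ A * π' x) :
    (A ^ 2)⁻¹ * specGap π' P' ≤ specGap π P := by
  classical
  have hA0 : (0:ℝ) < A := lt_of_lt_of_le one_pos hA
  -- variance comparison
  have hvar : ∀ f : Ω → ℝ, variance π f ≤ A * variance π' f := by
    intro f
    set c := ∑ x, π' x * f x with hc
    have h1 : variance π f ≤ ∑ x, π x * (f x - c) ^ 2 := by
      rw [var_second_moment' π f hπsum c]; nlinarith [sq_nonneg (∑ x, π x * f x - c)]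
    have h2 : ∑ x, π x * (f x - c) ^ 2 ≤ A * ∑ x, π' x * (f x - c) ^ 2 := by
      rw [Finset.mul_sum]
      apply Finset.sum_le_sum; intro x _
      have := hmass x
      nlinarith [sq_nonneg (f x - c)]
    have h3 : ∑ x, π' x * (f x - c) ^ 2 = variance π' f := by
      rw [var_second_moment' π' f hπ'sum c, ← hc]; ring
    calc variance π f ≤ ∑ x, π x * (f x - c) ^ 2 := h1
      _ ≤ A * ∑ x, π' x * (f x - c) ^ 2 := h2
      _ = A * variance π' f := by rw [h3]
  -- Dirichlet comparison
  have hdir : ∀ f : Ω → ℝ, A⁻¹ * dirichletForm π' P' f ≤ dirichletForm π P f := by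
    intro f
    unfold dirichletForm
    rw [← mul_assoc, mul_comm A⁻¹ (1/2), mul_assoc, Finset.mul_sum]
    apply mul_le_mul_of_nonneg_left _ (by norm_num : (0:ℝ) ≤ 1/2)
    apply Finset.sum_le_sum; intro x _
    rw [Finset.mul_sum]
    apply Finset.sum_le_sum; intro y _
    rcases eq_or_ne x y with rfl | hxy
    · simp
    · have := hflow x y hxy
      nlinarith [sq_nonneg (f x - f y)]
  -- the set for π', P'
  set S' := {r : ℝ | ∃ f : Ω → ℝ, variance π' f ≠ 0 ∧ r = dirichletForm π' P' f / variance π' f}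
    with hS'
  have hS'lb : ∀ r ∈ S', (0:ℝ) ≤ r := by
    rintro r ⟨f, hv, rfl⟩
    have hv0 : 0 < variance π' f := lt_of_le_of_ne (var_nonneg π' f hπ'nn hπ'sum) (Ne.symm hv)
    exact div_nonneg (dir_nonneg π' P' f hπ'nn hP'nn) hv0.le
  have hgap'nn : 0 ≤ specGap π' P' := Real.sInf_nonneg hS'lb
  set S := {r : ℝ | ∃ f : Ω → ℝ, variance π f ≠ 0 ∧ r = dirichletForm π P f / variance π f}
    with hS
  rcases Set.eq_empty_or_nonempty S with hSe | hSne
  · -- degenerate case: every f has variance 0 under π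
    have hvz : ∀ f : Ω → ℝ, variance π f = 0 := by
      intro f
      by_contra h
      exact Set.eq_empty_iff_forall_notMem.mp hSe _ ⟨f, h, rfl⟩
    -- π is a point mass
    have hpt : ∀ x, π x = 0 ∨ π x = 1 := by
      intro x
      have := hvz (fun y => if y = x then 1 else 0)
      simp only [variance] at this
      have h1 : ∑ y, π y * (if y = x then (1:ℝ) else 0) ^ 2 = π x := by
        simp [ite_pow, mul_ite]
      have h2 : ∑ y, π y * (if y = x then (1:ℝ) else 0) = π x := by
        simp [mul_ite]
      rw [h1, h2] at this
      rcases mul_self_eq_zero.mp (by nlinarith : (π x) * (π x - 1) * ((π x) * (π x - 1)) = 0) with h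
      rcases mul_eq_zero.mp h with h | h
      · exact Or.inl h
      · exact Or.inr (by linarith)
    obtain ⟨x0, hx0⟩ : ∃ x0, π x0 = 1 := by
      by_contra h
      push_neg at h
      have : ∑ x, π x = 0 := by
        apply Finset.sum_eq_zero; intro x _
        rcases hpt x with h0 | h1
        · exact h0
        · exact absurd h1 (h x)
      rw [hπsum] at this; norm_num at this
    have hπz : ∀ x, x ≠ x0 → π x = 0 := by
      intro x hx
      rcases hpt x with h0 | h1
      · exact h0
      · exfalso
        have : (1:ℝ) + 1 ≤ ∑ x, π x := by
          have := Finset.add_sum_erase Finset.univ π (Finset.mem_univ x)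
          have h2 : π x0 ≤ ∑ y ∈ Finset.univ.erase x, π y := by
            apply Finset.single_le_sum (fun i _ => hπnn i)
            exact Finset.mem_erase.mpr ⟨Ne.symm hx, Finset.mem_univ x0⟩
          linarith [this]
        rw [hπsum] at this; linarith
    -- all off-diagonal π' P' vanish
    have hoff : ∀ x y, x ≠ y → π' x * P' x y = 0 := by
      have key : ∀ x y, x ≠ x0 → x ≠ y → π' x * P' x y = 0 := by
        intro x y hx hxy
        have h1 := hflow x y hxy
        rw [hπz x hx, zero_mul] at h1
        have h2 : 0 ≤ π' x * P' x y := mul_nonneg (hπ'nn x) (hP'nn x y)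
        have h3 : 0 < A⁻¹ := inv_pos.mpr hA0
        nlinarith
      intro x y hxy
      rcases eq_or_ne x x0 with rfl | hx
      · rw [hrev' x y]
        exact key y x (Ne.symm hxy) (Ne.symm hxy)
      · exact key x y hx hxy
    have hdz : ∀ f : Ω → ℝ, dirichletForm π' P' f = 0 := by
      intro f
      unfold dirichletForm
      rw [mul_eq_zero]; right
      apply Finset.sum_eq_zero; intro x _
      apply Finset.sum_eq_zero; intro y _
      rcases eq_or_ne x y with rfl | hxy
      · simp
      · rw [hoff x y hxy]; ring
    have hgap'le : specGap π' P' ≤ 0 := by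
      rcases Set.eq_empty_or_nonempty S' with hS'e | ⟨r, hr⟩
      · unfold specGap; rw [← hS', hS'e, Real.sInf_empty]
      · obtain ⟨f, hv, hrr⟩ := hr
        have : r = 0 := by rw [hrr, hdz f, zero_div]
        have hle : sInf S' ≤ r := csInf_le ⟨0, fun s hs => hS'lb s hs⟩ ⟨f, hv, hrr⟩
        unfold specGap; rw [← hS']; linarith
    have hg0 : specGap π' P' = 0 := le_antisymm hgap'le hgap'nn
    have hgap0 : specGap π P = 0 := by
      rw [show specGap π P = sInf S from rfl, hSe, Real.sInf_empty]
    rw [hgap0, hg0, mul_zero]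
  · -- main case
    have key : ∀ r ∈ S, (A ^ 2)⁻¹ * specGap π' P' ≤ r := by
      rintro r ⟨f, hv, rfl⟩
      have hvπ : 0 < variance π f := lt_of_le_of_ne (var_nonneg π f hπnn hπsum) (Ne.symm hv)
      have hvπ' : 0 < variance π' f := by
        have := hvar f
        nlinarith
      have hmem : dirichletForm π' P' f / variance π' f ∈ S' := ⟨f, ne_of_gt hvπ', rfl⟩
      have hg' : specGap π' P' ≤ dirichletForm π' P' f / variance π' f :=
        csInf_le ⟨0, fun s hs => hS'lb s hs⟩ hmem
      have hdiv : A⁻¹ * dirichletForm π' P' f / (A * variance π' f)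
          ≤ dirichletForm π P f / variance π f := by
        apply div_le_div₀ (dir_nonneg π P f hπnn hPnn) (hdir f) hvπ (hvar f)
      have heq : A⁻¹ * dirichletForm π' P' f / (A * variance π' f)
          = (A ^ 2)⁻¹ * (dirichletForm π' P' f / variance π' f) := by
        rw [mul_div_mul_comm, div_eq_mul_inv A⁻¹ A, ← mul_inv, ← sq]
      have h2 : (A ^ 2)⁻¹ * specGap π' P' ≤ (A ^ 2)⁻¹ * (dirichletForm π' P' f / variance π' f) := by
        apply mul_le_mul_of_nonneg_left hg' (by positivity)
      linarith [heq ▸ hdiv]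
    unfold specGap
    rw [← hS]
    exact le_csInf hSne key
end

section
/- The number of spanning trees of the 2×n grid graph satisfies the recurrence T_n = 4T_{n−1} − T_{n−2} with T_1 = 1, T_2 = 4; consequently T_n = ((2+√3)^n − (2−√3)^n)/(2√3) and there exist constants c > 0 and a = 2+√3 such that c(a^n − 1) ≤ T_n ≤ c·a^n for all n ≥ 1. -/
open SimpleGraph

namespace GridAux


variable {V : Type*}

lemma reachable_mono_of_adj {G G' : SimpleGraph V}
    (hadj : ∀ a b, G.Adj a b → G'.Reachable a b) {x y : V} (h : G.Reachable x y) :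
    G'.Reachable x y := by
  obtain ⟨w⟩ := h
  induction w with
  | nil => exact Reachable.refl _
  | cons h w ih => exact (hadj _ _ h).trans ih

lemma connected_of_adj_reachable {G G' : SimpleGraph V} (h : G.Connected)
    (hadj : ∀ a b, G.Adj a b → G'.Reachable a b) : G'.Connected := by
  have : Nonempty V := h.nonempty
  exact ⟨fun x y => reachable_mono_of_adj hadj (h.preconnected x y)⟩

/-- A connected graph on a finite vertex set has at least `card V - 1` edges, and if it has
exactly `card V - 1` edges it is a tree. -/
lemma card_le_and_isTree_of_connected [Fintype V] {G : SimpleGraph V} (h : G.Connected) :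
    Fintype.card V ≤ G.edgeSet.ncard + 1 ∧
      (G.edgeSet.ncard + 1 = Fintype.card V → G.IsTree) := by
  classical
  generalize hk : G.edgeSet.ncard = k
  induction k using Nat.strong_induction_on generalizing G with
  | _ k ih =>
  by_cases hac : G.IsAcyclic
  · have htree : G.IsTree := ⟨h, hac⟩
    have : Fintype G.edgeSet := Fintype.ofFinite _
    have hcard := htree.card_edgeFinset
    have : G.edgeSet.ncard = G.edgeFinset.card := by
      rw [Set.ncard_eq_toFinset_card']
      exact congrArg Finset.card (by ext e; simp)
    exact ⟨by omega, fun _ => htree⟩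
  · simp only [IsAcyclic, not_forall, not_not] at hac
    obtain ⟨v, c, hc⟩ := hac
    cases c with
    | nil => exact absurd hc Walk.IsCycle.not_of_nil
    | @cons _ w _ hvw c' =>
      have hmem : s(v, w) ∈ (Walk.cons hvw c').edges := by simp
      have hnb : ¬ G.IsBridge s(v, w) := by
        rw [isBridge_iff_adj_and_forall_cycle_notMem hvw]
        intro hb
        exact hb _ hc hmem
      rw [isBridge_iff] at hnb
      push_neg at hnb
      have hreach := hnb
      set G' := G \ fromEdgeSet {s(v, w)} with hG'
      have hedG' : G'.edgeSet = G.edgeSet \ {s(v, w)} := by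
        simp [hG', edgeSet_sdiff, edgeSet_fromEdgeSet, edgeSet_sdiff_sdiff_isDiag]
      have hG'adj : ∀ a b, G'.Adj a b → G.Adj a b := by
        intro a b hab
        exact hab.1
      have hconn' : G'.Connected := by
        refine connected_of_adj_reachable h ?_
        intro a b hab
        by_cases he : s(a, b) = s(v, w)
        · rw [Sym2.eq_iff] at he
          rcases he with ⟨rfl, rfl⟩ | ⟨rfl, rfl⟩
          · exact hreach
          · exact hreach.symm
        · exact Adj.reachable (by exact ⟨hab, by simp [he]⟩)
      have hvwmem : s(v, w) ∈ G.edgeSet := hvw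
      have hcard' : G'.edgeSet.ncard = k - 1 ∧ 1 ≤ k := by
        rw [hedG']
        have hfin : G.edgeSet.Finite := Set.toFinite _
        constructor
        · rw [Set.ncard_diff_singleton_of_mem hvwmem, hk]
        · have := Set.ncard_pos (s := G.edgeSet) hfin |>.mpr ⟨_, hvwmem⟩
          omega
      have := ih (k - 1) (by omega) hconn' hcard'.1
      constructor
      · omega
      · intro hcc
        omega

lemma isTree_of_connected_of_ncard {V : Type*} [Fintype V] {G : SimpleGraph V}
    (h : G.Connected) (hcard : G.edgeSet.ncard + 1 = Fintype.card V) : G.IsTree :=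
  (card_le_and_isTree_of_connected h).2 hcard

lemma le_ncard_of_connected {V : Type*} [Fintype V] {G : SimpleGraph V} (h : G.Connected) :
    Fintype.card V ≤ G.edgeSet.ncard + 1 :=
  (card_le_and_isTree_of_connected h).1

lemma isTree_ncard_edges {V : Type*} [Fintype V] {G : SimpleGraph V} (h : G.IsTree) :
    G.edgeSet.ncard + 1 = Fintype.card V := by
  classical
  have : Fintype G.edgeSet := Fintype.ofFinite _
  have hcard := h.card_edgeFinset
  have : G.edgeSet.ncard = G.edgeFinset.card := by
    rw [Set.ncard_eq_toFinset_card']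
    exact congrArg Finset.card (by ext e; simp)
  omega



abbrev VV (n : ℕ) := Fin 2 × Fin n

abbrev LL (n : ℕ) : SimpleGraph (VV n) := pathGraph 2 □ pathGraph n

instance {n : ℕ} : Finite (SimpleGraph (VV n)) :=
  Finite.of_injective (fun G => G.Adj) (fun _ _ h => SimpleGraph.ext h)

def Ap (n : ℕ) : VV (n+1) := (0, Fin.last n)
def Bp (n : ℕ) : VV (n+1) := (1, Fin.last n)

def ι {n : ℕ} : VV (n+1) ↪ VV (n+2) :=
  ⟨fun p => (p.1, p.2.castSucc), by
    rintro ⟨a, i⟩ ⟨b, j⟩ h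
    simp only [Prod.mk.injEq] at h
    exact Prod.ext h.1 (Fin.castSucc_injective _ h.2)⟩

lemma ι_apply {n : ℕ} (p : VV (n+1)) : (ι p : VV (n+2)) = (p.1, p.2.castSucc) := rfl

lemma ι_snd_ne_last {n : ℕ} (p : VV (n+1)) : (ι p : VV (n+2)).2 ≠ Fin.last (n+1) :=
  (Fin.castSucc_lt_last _).ne

lemma ne_ι_Ap {n : ℕ} (p : VV (n+1)) : (ι p : VV (n+2)) ≠ Ap (n+1) := by
  intro h
  exact ι_snd_ne_last p (by rw [h]; rfl)

lemma ne_ι_Bp {n : ℕ} (p : VV (n+1)) : (ι p : VV (n+2)) ≠ Bp (n+1) := by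
  intro h
  exact ι_snd_ne_last p (by rw [h]; rfl)

def etE (n : ℕ) : Sym2 (VV (n+2)) := s(ι (Ap n), Ap (n+1))
def ebE (n : ℕ) : Sym2 (VV (n+2)) := s(ι (Bp n), Bp (n+1))
def erE (n : ℕ) : Sym2 (VV (n+2)) := s(Ap (n+1), Bp (n+1))

lemma Ap_ne_Bp (n : ℕ) : Ap n ≠ Bp n := by
  simp [Ap, Bp, Prod.ext_iff, Fin.ext_iff]

lemma et_ne_eb (n : ℕ) : etE n ≠ ebE n := by
  rw [etE, ebE, Ne, Sym2.eq_iff]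
  rintro (⟨h1, h2⟩ | ⟨h1, h2⟩) <;>
    first | exact ne_ι_Ap _ h1 | exact ne_ι_Bp _ h1 | exact Ap_ne_Bp _ h2

lemma et_ne_er (n : ℕ) : etE n ≠ erE n := by
  rw [etE, erE, Ne, Sym2.eq_iff]
  rintro (⟨h1, h2⟩ | ⟨h1, h2⟩) <;>
    first | exact ne_ι_Ap _ h1 | exact ne_ι_Bp _ h1 | exact Ap_ne_Bp _ h2

lemma eb_ne_er (n : ℕ) : ebE n ≠ erE n := by
  rw [ebE, erE, Ne, Sym2.eq_iff]
  rintro (⟨h1, h2⟩ | ⟨h1, h2⟩) <;>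
    first | exact ne_ι_Ap _ h1 | exact ne_ι_Bp _ h1 | exact Ap_ne_Bp _ h2

def tripleE (n : ℕ) : Set (Sym2 (VV (n+2))) := {etE n, ebE n, erE n}

lemma mem_triple_et (n : ℕ) : etE n ∈ tripleE n := by simp [tripleE]
lemma mem_triple_eb (n : ℕ) : ebE n ∈ tripleE n := by simp [tripleE]
lemma mem_triple_er (n : ℕ) : erE n ∈ tripleE n := by simp [tripleE]

lemma not_isDiag_of_mem_triple {n : ℕ} {e : Sym2 (VV (n+2))} (he : e ∈ tripleE n) :
    ¬ e.IsDiag := by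
  rcases he with rfl | rfl | rfl
  · rw [etE]
    simpa [Sym2.isDiag_iff_proj_eq] using ne_ι_Ap (Ap n)
  · rw [ebE]
    simpa [Sym2.isDiag_iff_proj_eq] using ne_ι_Bp (Bp n)
  · rw [erE]
    simpa [Sym2.isDiag_iff_proj_eq] using Ap_ne_Bp (n+1)

lemma LL_adj_iff {n : ℕ} {u v : VV n} :
    (LL n).Adj u v ↔
      ((u.1 ≠ v.1 ∧ u.2 = v.2) ∨ (u.1 = v.1 ∧ (u.2.val + 1 = v.2.val ∨ v.2.val + 1 = u.2.val))) := by
  rw [boxProd_adj]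
  constructor
  · rintro (⟨h1, h2⟩ | ⟨h1, h2⟩)
    · exact Or.inl ⟨h1.ne, h2⟩
    · exact Or.inr ⟨h2, (pathGraph_adj.mp h1)⟩
  · rintro (⟨h1, h2⟩ | ⟨h1, h2⟩)
    · refine Or.inl ⟨?_, h2⟩
      rw [pathGraph_two_eq_top]
      exact h1
    · exact Or.inr ⟨pathGraph_adj.mpr h2, h1⟩

lemma fin2_cases_ne {a b : Fin 2} (h : a ≠ b) : (a = 0 ∧ b = 1) ∨ (a = 1 ∧ b = 0) := by
  revert h; revert a b; decide

lemma fin2_cases (a : Fin 2) : a = 0 ∨ a = 1 := by revert a; decide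

lemma eq_castSucc_last {n : ℕ} {v2 : Fin (n+2)}
    (h : v2.val + 1 = (Fin.last (n+1)).val ∨ (Fin.last (n+1)).val + 1 = v2.val) :
    v2 = (Fin.last n).castSucc := by
  have hv := v2.isLt
  apply Fin.ext
  simp only [Fin.val_last] at h
  simp only [Fin.coe_castSucc, Fin.val_last]
  omega

/-- Every edge of a subgraph of the (n+2)-grid is between old vertices or is
one of the three new edges. -/
lemma adj_shape {n : ℕ} {H : SimpleGraph (VV (n+2))} (hle : H ≤ LL (n+2)) {u v : VV (n+2)}
    (h : H.Adj u v) :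
    (∃ x y : VV (n+1), u = ι x ∧ v = ι y) ∨ s(u, v) ∈ tripleE n := by
  have hL := hle h
  rw [LL_adj_iff] at hL
  obtain ⟨u1, u2⟩ := u
  obtain ⟨v1, v2⟩ := v
  simp only at hL
  by_cases hu : u2 = Fin.last (n+1) <;> by_cases hv : v2 = Fin.last (n+1)
  · -- both in the last column: must be the rung
    subst hu hv
    right
    have h1 : u1 ≠ v1 := by
      rcases hL with ⟨h1, _⟩ | ⟨_, h2⟩
      · exact h1
      · simp only [Fin.val_last] at h2; omega
    rcases fin2_cases_ne h1 with ⟨rfl, rfl⟩ | ⟨rfl, rfl⟩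
    · have hEq : s(((0 : Fin 2), Fin.last (n+1)), ((1 : Fin 2), Fin.last (n+1))) = erE n := rfl
      rw [hEq]; exact mem_triple_er n
    · have hEq : s(((1 : Fin 2), Fin.last (n+1)), ((0 : Fin 2), Fin.last (n+1))) = erE n :=
        Sym2.eq_swap
      rw [hEq]; exact mem_triple_er n
  · -- u in last column, v not
    subst hu
    right
    have hv2 : v2 = (Fin.last n).castSucc := by
      rcases hL with ⟨_, h2⟩ | ⟨_, h2⟩
      · exact absurd h2.symm hv
      · exact eq_castSucc_last (by tauto)
    subst hv2
    have h1 : u1 = v1 := by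
      rcases hL with ⟨_, h2⟩ | ⟨h1, _⟩
      · exact absurd h2.symm ((Fin.castSucc_lt_last _).ne)
      · exact h1
    subst h1
    rcases fin2_cases u1 with rfl | rfl
    · have hEq : s(((0 : Fin 2), Fin.last (n+1)), ((0 : Fin 2), (Fin.last n).castSucc)) = etE n :=
        Sym2.eq_swap
      rw [hEq]; exact mem_triple_et n
    · have hEq : s(((1 : Fin 2), Fin.last (n+1)), ((1 : Fin 2), (Fin.last n).castSucc)) = ebE n :=
        Sym2.eq_swap
      rw [hEq]; exact mem_triple_eb n
  · -- v in last column, u not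
    subst hv
    right
    have hu2 : u2 = (Fin.last n).castSucc := by
      rcases hL with ⟨_, h2⟩ | ⟨_, h2⟩
      · exact absurd h2 hu
      · exact eq_castSucc_last (by tauto)
    subst hu2
    have h1 : u1 = v1 := by
      rcases hL with ⟨_, h2⟩ | ⟨h1, _⟩
      · exact absurd h2 ((Fin.castSucc_lt_last _).ne)
      · exact h1
    subst h1
    rcases fin2_cases u1 with rfl | rfl
    · exact mem_triple_et n
    · exact mem_triple_eb n
  · -- neither in last column
    left
    exact ⟨(u1, u2.castPred hu), (v1, v2.castPred hv), by simp [ι_apply], by simp [ι_apply]⟩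

lemma LL_adj_ι {n : ℕ} {x y : VV (n+1)} :
    (LL (n+2)).Adj (ι x) (ι y) ↔ (LL (n+1)).Adj x y := by
  simp only [LL_adj_iff, ι_apply, Fin.coe_castSucc, ne_eq, Fin.castSucc_inj]


/-! ### restriction and extension -/

def res {n : ℕ} (H' : SimpleGraph (VV (n+2))) : SimpleGraph (VV (n+1)) := H'.comap ι

lemma res_adj {n : ℕ} {H' : SimpleGraph (VV (n+2))} {x y : VV (n+1)} :
    (res H').Adj x y ↔ H'.Adj (ι x) (ι y) := Iff.rfl

def ext {n : ℕ} (H : SimpleGraph (VV (n+1))) (s : Set (Sym2 (VV (n+2)))) :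
    SimpleGraph (VV (n+2)) :=
  H.map ι ⊔ fromEdgeSet s

lemma ext_adj {n : ℕ} {H : SimpleGraph (VV (n+1))} {s : Set (Sym2 (VV (n+2)))}
    {u v : VV (n+2)} :
    (ext H s).Adj u v ↔ (∃ x y, H.Adj x y ∧ ι x = u ∧ ι y = v) ∨ (s(u, v) ∈ s ∧ u ≠ v) := by
  rw [ext, sup_adj, map_adj, fromEdgeSet_adj]

lemma notmem_triple_ι {n : ℕ} (x y : VV (n+1)) : s(ι x, ι y) ∉ tripleE n := by
  rintro (h | h | h) <;>
    [rw [etE, Sym2.eq_iff] at h;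
     rw [ebE, Sym2.eq_iff] at h;
     rw [Set.mem_singleton_iff, erE, Sym2.eq_iff] at h] <;>
    rcases h with ⟨h1, h2⟩ | ⟨h1, h2⟩ <;>
    first
      | exact ne_ι_Ap _ h1 | exact ne_ι_Ap _ h2
      | exact ne_ι_Bp _ h1 | exact ne_ι_Bp _ h2

lemma ext_adj_ι {n : ℕ} {H : SimpleGraph (VV (n+1))} {s : Set (Sym2 (VV (n+2)))}
    (hs : s ⊆ tripleE n) {x y : VV (n+1)} :
    (ext H s).Adj (ι x) (ι y) ↔ H.Adj x y := by
  rw [ext_adj]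
  constructor
  · rintro (⟨x', y', hxy, hx, hy⟩ | ⟨hmem, hne⟩)
    · rwa [← ι.injective hx, ← ι.injective hy]
    · exact absurd (hs hmem) (notmem_triple_ι x y)
  · intro h
    exact Or.inl ⟨x, y, h, rfl, rfl⟩

lemma res_ext {n : ℕ} (H : SimpleGraph (VV (n+1))) {s : Set (Sym2 (VV (n+2)))}
    (hs : s ⊆ tripleE n) : res (ext H s) = H := by
  ext x y
  rw [res_adj, ext_adj_ι hs]

lemma ext_injective {n : ℕ} {s : Set (Sym2 (VV (n+2)))} (hs : s ⊆ tripleE n) :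
    Function.Injective (fun H : SimpleGraph (VV (n+1)) => ext H s) := by
  intro H1 H2 h
  have := congrArg res h
  rwa [res_ext _ hs, res_ext _ hs] at this

lemma ext_res {n : ℕ} {H' : SimpleGraph (VV (n+2))} (hle : H' ≤ LL (n+2)) :
    ext (res H') (H'.edgeSet ∩ tripleE n) = H' := by
  ext u v
  rw [ext_adj]
  constructor
  · rintro (⟨x, y, hxy, rfl, rfl⟩ | ⟨⟨hmem, _⟩, _⟩)
    · exact hxy
    · exact hmem
  · intro h
    rcases adj_shape hle h with ⟨x, y, rfl, rfl⟩ | hmem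
    · exact Or.inl ⟨x, y, h, rfl, rfl⟩
    · exact Or.inr ⟨⟨h, hmem⟩, h.ne⟩

lemma res_le {n : ℕ} {H' : SimpleGraph (VV (n+2))} (hle : H' ≤ LL (n+2)) :
    res H' ≤ LL (n+1) := fun _ _ h => LL_adj_ι.mp (hle h)

lemma LL_adj_et (n : ℕ) : (LL (n+2)).Adj (ι (Ap n)) (Ap (n+1)) := by
  rw [LL_adj_iff]
  right
  refine ⟨rfl, Or.inl ?_⟩
  simp [ι_apply, Ap]

lemma LL_adj_eb (n : ℕ) : (LL (n+2)).Adj (ι (Bp n)) (Bp (n+1)) := by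
  rw [LL_adj_iff]
  right
  refine ⟨rfl, Or.inl ?_⟩
  simp [ι_apply, Bp]

lemma LL_adj_er (n : ℕ) : (LL (n+2)).Adj (Ap (n+1)) (Bp (n+1)) := by
  rw [LL_adj_iff]
  left
  exact ⟨by simp [Ap, Bp], rfl⟩

lemma LL_adj_of_mem_triple {n : ℕ} {u v : VV (n+2)} (h : s(u, v) ∈ tripleE n) (hne : u ≠ v) :
    (LL (n+2)).Adj u v := by
  rcases h with h | h | h <;>
    [rw [etE, Sym2.eq_iff] at h;
     rw [ebE, Sym2.eq_iff] at h;
     rw [Set.mem_singleton_iff, erE, Sym2.eq_iff] at h] <;>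
    rcases h with ⟨rfl, rfl⟩ | ⟨rfl, rfl⟩ <;>
    first
      | exact LL_adj_et n | exact (LL_adj_et n).symm
      | exact LL_adj_eb n | exact (LL_adj_eb n).symm
      | exact LL_adj_er n | exact (LL_adj_er n).symm

lemma ext_le {n : ℕ} {H : SimpleGraph (VV (n+1))} (hle : H ≤ LL (n+1))
    {s : Set (Sym2 (VV (n+2)))} (hs : s ⊆ tripleE n) : ext H s ≤ LL (n+2) := by
  intro u v h
  rw [ext_adj] at h
  rcases h with ⟨x, y, hxy, rfl, rfl⟩ | ⟨hmem, hne⟩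
  · exact LL_adj_ι.mpr (hle hxy)
  · exact LL_adj_of_mem_triple (hs hmem) hne

lemma edgeSet_map' {V W : Type*} (f : V ↪ W) (G : SimpleGraph V) :
    (G.map f).edgeSet = Sym2.map f '' G.edgeSet := by
  ext e
  induction e using Sym2.ind with
  | _ u v =>
    rw [mem_edgeSet, SimpleGraph.map_adj]
    constructor
    · rintro ⟨x, y, h, rfl, rfl⟩
      exact ⟨s(x, y), h, by rw [Sym2.map_pair_eq]⟩
    · rintro ⟨e', he', hmap⟩
      induction e' using Sym2.ind with
      | _ x y =>
        rw [Sym2.map_pair_eq, Sym2.eq_iff] at hmap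
        have hxy : G.Adj x y := he'
        rcases hmap with ⟨rfl, rfl⟩ | ⟨h1, h2⟩
        · exact ⟨x, y, hxy, rfl, rfl⟩
        · exact ⟨y, x, hxy.symm, h2, h1⟩

lemma ext_edgeSet {n : ℕ} (H : SimpleGraph (VV (n+1))) {s : Set (Sym2 (VV (n+2)))}
    (hs : s ⊆ tripleE n) :
    (ext H s).edgeSet = Sym2.map ι '' H.edgeSet ∪ s := by
  rw [ext, edgeSet_sup, edgeSet_fromEdgeSet, edgeSet_map']
  congr 1
  apply sdiff_eq_left.mpr
  rw [Set.disjoint_left]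
  intro e hes hd
  exact absurd hd (not_isDiag_of_mem_triple (hs hes))

lemma disj_image_triple {n : ℕ} (H : SimpleGraph (VV (n+1))) {s : Set (Sym2 (VV (n+2)))}
    (hs : s ⊆ tripleE n) : Disjoint (Sym2.map ι '' H.edgeSet) s := by
  rw [Set.disjoint_left]
  rintro e ⟨e', he', rfl⟩ hes
  induction e' using Sym2.ind with
  | _ x y =>
    rw [Sym2.map_pair_eq] at hes
    exact notmem_triple_ι x y (hs hes)

lemma ext_ncard {n : ℕ} (H : SimpleGraph (VV (n+1))) {s : Set (Sym2 (VV (n+2)))}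
    (hs : s ⊆ tripleE n) :
    (ext H s).edgeSet.ncard = H.edgeSet.ncard + s.ncard := by
  rw [ext_edgeSet H hs,
    Set.ncard_union_eq (disj_image_triple H hs) (Set.toFinite _) (Set.toFinite _),
    Set.ncard_image_of_injective _ (Sym2.map.injective ι.injective)]

def extHom {n : ℕ} (H : SimpleGraph (VV (n+1))) (s : Set (Sym2 (VV (n+2)))) :
    H →g ext H s where
  toFun := ι
  map_rel' := fun h => ext_adj.mpr (Or.inl ⟨_, _, h, rfl, rfl⟩)

lemma reach_up {n : ℕ} {H : SimpleGraph (VV (n+1))} {s : Set (Sym2 (VV (n+2)))}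
    {x y : VV (n+1)} (h : H.Reachable x y) : (ext H s).Reachable (ι x) (ι y) :=
  h.map (extHom H s)

lemma ext_adj_et {n : ℕ} {H : SimpleGraph (VV (n+1))} {s : Set (Sym2 (VV (n+2)))}
    (h : etE n ∈ s) : (ext H s).Adj (ι (Ap n)) (Ap (n+1)) :=
  ext_adj.mpr (Or.inr ⟨h, ne_ι_Ap _⟩)

lemma ext_adj_eb {n : ℕ} {H : SimpleGraph (VV (n+1))} {s : Set (Sym2 (VV (n+2)))}
    (h : ebE n ∈ s) : (ext H s).Adj (ι (Bp n)) (Bp (n+1)) :=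
  ext_adj.mpr (Or.inr ⟨h, ne_ι_Bp _⟩)

lemma ext_adj_er {n : ℕ} {H : SimpleGraph (VV (n+1))} {s : Set (Sym2 (VV (n+2)))}
    (h : erE n ∈ s) : (ext H s).Adj (Ap (n+1)) (Bp (n+1)) :=
  ext_adj.mpr (Or.inr ⟨h, Ap_ne_Bp _⟩)


/-! ### invariants along reachability -/

lemma invariant_of_reachable {V : Type*} {G : SimpleGraph V} (p : V → Prop)
    (hp : ∀ a b, G.Adj a b → (p a ↔ p b)) {x y : V} (h : G.Reachable x y) : p x ↔ p y := by
  obtain ⟨w⟩ := h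
  induction w with
  | nil => rfl
  | cons h w ih => exact (hp _ _ h).trans ih

lemma eq_of_reachable_isolated {V : Type*} {G : SimpleGraph V} {v y : V}
    (h : ∀ w, ¬ G.Adj v w) (hr : G.Reachable v y) : v = y := by
  obtain ⟨w⟩ := hr
  cases w with
  | nil => rfl
  | cons h' _ => exact absurd h' (h _)

lemma connected_of_forall_reach {V : Type*} {G : SimpleGraph V} (v0 : V)
    (h : ∀ v, G.Reachable v v0) : G.Connected := by
  have : Nonempty V := ⟨v0⟩
  exact ⟨fun a b => (h a).trans (h b).symm⟩

lemma casesVV {n : ℕ} (v : VV (n+2)) :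
    (∃ x, v = ι x) ∨ v = Ap (n+1) ∨ v = Bp (n+1) := by
  obtain ⟨v1, v2⟩ := v
  by_cases h : v2 = Fin.last (n+1)
  · subst h
    rcases fin2_cases v1 with rfl | rfl
    · exact Or.inr (Or.inl rfl)
    · exact Or.inr (Or.inr rfl)
  · exact Or.inl ⟨(v1, v2.castPred h), by simp [ι_apply]⟩

def down {n : ℕ} (v : VV (n+2)) : VV (n+1) :=
  if h : v.2 = Fin.last (n+1) then (v.1, Fin.last n) else (v.1, v.2.castPred h)

lemma down_ι {n : ℕ} (x : VV (n+1)) : down (ι x) = x := by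
  rw [down, dif_neg (ι_snd_ne_last x)]
  simp [ι_apply]

lemma down_Ap {n : ℕ} : down (Ap (n+1)) = Ap n := dif_pos rfl

lemma down_Bp {n : ℕ} : down (Bp (n+1)) = Bp n := dif_pos rfl

def resHom {n : ℕ} (H' : SimpleGraph (VV (n+2))) : res H' →g H' where
  toFun := ι
  map_rel' := fun h => h

lemma res_reach_up {n : ℕ} {H' : SimpleGraph (VV (n+2))} {x y : VV (n+1)}
    (h : (res H').Reachable x y) : H'.Reachable (ι x) (ι y) :=
  h.map (resHom H')

lemma invariant_step {n : ℕ} {H' : SimpleGraph (VV (n+2))} (hle : H' ≤ LL (n+2))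
    (q : VV (n+2) → Prop)
    (hold : ∀ x y : VV (n+1), H'.Adj (ι x) (ι y) → (q (ι x) ↔ q (ι y)))
    (het : H'.Adj (ι (Ap n)) (Ap (n+1)) → (q (ι (Ap n)) ↔ q (Ap (n+1))))
    (heb : H'.Adj (ι (Bp n)) (Bp (n+1)) → (q (ι (Bp n)) ↔ q (Bp (n+1))))
    (her : H'.Adj (Ap (n+1)) (Bp (n+1)) → (q (Ap (n+1)) ↔ q (Bp (n+1))))
    {u v : VV (n+2)} (h : H'.Reachable u v) : q u ↔ q v := by
  refine invariant_of_reachable q (fun a b hab => ?_) h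
  rcases adj_shape hle hab with ⟨x, y, rfl, rfl⟩ | hm
  · exact hold x y hab
  · rcases hm with hm | hm | hm <;>
      [rw [etE, Sym2.eq_iff] at hm;
       rw [ebE, Sym2.eq_iff] at hm;
       rw [Set.mem_singleton_iff, erE, Sym2.eq_iff] at hm] <;>
      rcases hm with ⟨rfl, rfl⟩ | ⟨rfl, rfl⟩
    · exact het hab
    · exact (het hab.symm).symm
    · exact heb hab
    · exact (heb hab.symm).symm
    · exact her hab
    · exact (her hab.symm).symm

lemma res_adj_iff_of_adj {n : ℕ} {H' : SimpleGraph (VV (n+2))} {x y : VV (n+1)}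
    (hab : H'.Adj (ι x) (ι y)) {c : VV (n+1)} :
    ((res H').Reachable x c ↔ (res H').Reachable y c) := by
  have hadj : (res H').Adj x y := hab
  exact ⟨fun h => hadj.symm.reachable.trans h, fun h => hadj.reachable.trans h⟩

/-- invariant: reaches `Ap n` in the restriction (valid when the rung is absent) -/
lemma qA_invariant {n : ℕ} {H' : SimpleGraph (VV (n+2))} (hle : H' ≤ LL (n+2))
    (hner : ¬ H'.Adj (Ap (n+1)) (Bp (n+1)))
    {u v : VV (n+2)} (h : H'.Reachable u v) :
    ((res H').Reachable (down u) (Ap n) ↔ (res H').Reachable (down v) (Ap n)) := by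
  refine invariant_step hle (fun w => (res H').Reachable (down w) (Ap n)) ?_ ?_ ?_ ?_ h
  · intro x y hab
    simp only [down_ι]
    exact res_adj_iff_of_adj hab
  · intro _
    simp only [down_ι, down_Ap]
  · intro _
    simp only [down_ι, down_Bp]
  · intro hadj
    exact absurd hadj hner

lemma qB_invariant {n : ℕ} {H' : SimpleGraph (VV (n+2))} (hle : H' ≤ LL (n+2))
    (hner : ¬ H'.Adj (Ap (n+1)) (Bp (n+1)))
    {u v : VV (n+2)} (h : H'.Reachable u v) :
    ((res H').Reachable (down u) (Bp n) ↔ (res H').Reachable (down v) (Bp n)) := by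
  refine invariant_step hle (fun w => (res H').Reachable (down w) (Bp n)) ?_ ?_ ?_ ?_ h
  · intro x y hab
    simp only [down_ι]
    exact res_adj_iff_of_adj hab
  · intro _
    simp only [down_ι, down_Ap]
  · intro _
    simp only [down_ι, down_Bp]
  · intro hadj
    exact absurd hadj hner

/-- invariant: reaches `Ap n` or `Bp n` in the restriction (always valid) -/
lemma qAB_invariant {n : ℕ} {H' : SimpleGraph (VV (n+2))} (hle : H' ≤ LL (n+2))
    {u v : VV (n+2)} (h : H'.Reachable u v) :
    (((res H').Reachable (down u) (Ap n) ∨ (res H').Reachable (down u) (Bp n)) ↔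
      ((res H').Reachable (down v) (Ap n) ∨ (res H').Reachable (down v) (Bp n))) := by
  refine invariant_step hle
    (fun w => (res H').Reachable (down w) (Ap n) ∨ (res H').Reachable (down w) (Bp n))
    ?_ ?_ ?_ ?_ h
  · intro x y hab
    simp only [down_ι]
    exact or_congr (res_adj_iff_of_adj hab) (res_adj_iff_of_adj hab)
  · intro _
    simp only [down_ι, down_Ap]
  · intro _
    simp only [down_ι, down_Bp]
  · intro _
    simp only [down_Ap, down_Bp]
    exact iff_of_true (Or.inl (Reachable.refl _)) (Or.inr (Reachable.refl _))

/-- invariant: in last column, or reaches `Ap n` (valid when bottom new edge absent) -/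
lemma qTop_invariant {n : ℕ} {H' : SimpleGraph (VV (n+2))} (hle : H' ≤ LL (n+2))
    (hneb : ¬ H'.Adj (ι (Bp n)) (Bp (n+1)))
    {u v : VV (n+2)} (h : H'.Reachable u v) :
    ((u.2 = Fin.last (n+1) ∨ (res H').Reachable (down u) (Ap n)) ↔
      (v.2 = Fin.last (n+1) ∨ (res H').Reachable (down v) (Ap n))) := by
  refine invariant_step hle
    (fun w => w.2 = Fin.last (n+1) ∨ (res H').Reachable (down w) (Ap n)) ?_ ?_ ?_ ?_ h
  · intro x y hab
    simp only [down_ι]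
    exact or_congr (iff_of_false (ι_snd_ne_last x) (ι_snd_ne_last y)) (res_adj_iff_of_adj hab)
  · intro _
    simp only [down_ι]
    exact iff_of_true (Or.inr (Reachable.refl _)) (Or.inl rfl)
  · intro hadj
    exact absurd hadj hneb
  · intro _
    exact iff_of_true (Or.inl rfl) (Or.inl rfl)

lemma qBot_invariant {n : ℕ} {H' : SimpleGraph (VV (n+2))} (hle : H' ≤ LL (n+2))
    (hnet : ¬ H'.Adj (ι (Ap n)) (Ap (n+1)))
    {u v : VV (n+2)} (h : H'.Reachable u v) :
    ((u.2 = Fin.last (n+1) ∨ (res H').Reachable (down u) (Bp n)) ↔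
      (v.2 = Fin.last (n+1) ∨ (res H').Reachable (down v) (Bp n))) := by
  refine invariant_step hle
    (fun w => w.2 = Fin.last (n+1) ∨ (res H').Reachable (down w) (Bp n)) ?_ ?_ ?_ ?_ h
  · intro x y hab
    simp only [down_ι]
    exact or_congr (iff_of_false (ι_snd_ne_last x) (ι_snd_ne_last y)) (res_adj_iff_of_adj hab)
  · intro hadj
    exact absurd hadj hnet
  · intro _
    simp only [down_ι]
    exact iff_of_true (Or.inr (Reachable.refl _)) (Or.inl rfl)
  · intro _
    exact iff_of_true (Or.inl rfl) (Or.inl rfl)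

/-- invariant: in last column (valid when both rail edges are absent) -/
lemma qLast_invariant {n : ℕ} {H' : SimpleGraph (VV (n+2))} (hle : H' ≤ LL (n+2))
    (hnet : ¬ H'.Adj (ι (Ap n)) (Ap (n+1))) (hneb : ¬ H'.Adj (ι (Bp n)) (Bp (n+1)))
    {u v : VV (n+2)} (h : H'.Reachable u v) :
    (u.2 = Fin.last (n+1) ↔ v.2 = Fin.last (n+1)) := by
  refine invariant_step hle (fun w => w.2 = Fin.last (n+1)) ?_ ?_ ?_ ?_ h
  · intro x y _
    exact iff_of_false (ι_snd_ne_last x) (ι_snd_ne_last y)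
  · intro hadj
    exact absurd hadj hnet
  · intro hadj
    exact absurd hadj hneb
  · intro _
    exact iff_of_true rfl rfl

lemma isolated_Ap {n : ℕ} {H' : SimpleGraph (VV (n+2))} (hle : H' ≤ LL (n+2))
    (hnet : ¬ H'.Adj (ι (Ap n)) (Ap (n+1))) (hner : ¬ H'.Adj (Ap (n+1)) (Bp (n+1))) :
    ∀ w, ¬ H'.Adj (Ap (n+1)) w := by
  intro w hadj
  rcases adj_shape hle hadj with ⟨x, y, hx, _⟩ | hm
  · exact ne_ι_Ap x hx.symm
  · rcases hm with hm | hm | hm <;>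
      [rw [etE, Sym2.eq_iff] at hm;
       rw [ebE, Sym2.eq_iff] at hm;
       rw [Set.mem_singleton_iff, erE, Sym2.eq_iff] at hm] <;>
      rcases hm with ⟨h1, h2⟩ | ⟨h1, h2⟩
    · exact ne_ι_Ap _ h1.symm
    · exact hnet (h2 ▸ hadj).symm
    · exact ne_ι_Ap _ h1.symm
    · exact Ap_ne_Bp (n+1) h1
    · exact hner (h2 ▸ hadj)
    · exact Ap_ne_Bp (n+1) h1

lemma isolated_Bp {n : ℕ} {H' : SimpleGraph (VV (n+2))} (hle : H' ≤ LL (n+2))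
    (hneb : ¬ H'.Adj (ι (Bp n)) (Bp (n+1))) (hner : ¬ H'.Adj (Ap (n+1)) (Bp (n+1))) :
    ∀ w, ¬ H'.Adj (Bp (n+1)) w := by
  intro w hadj
  rcases adj_shape hle hadj with ⟨x, y, hx, _⟩ | hm
  · exact ne_ι_Bp x hx.symm
  · rcases hm with hm | hm | hm <;>
      [rw [etE, Sym2.eq_iff] at hm;
       rw [ebE, Sym2.eq_iff] at hm;
       rw [Set.mem_singleton_iff, erE, Sym2.eq_iff] at hm] <;>
      rcases hm with ⟨h1, h2⟩ | ⟨h1, h2⟩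
    · exact ne_ι_Bp _ h1.symm
    · exact Ap_ne_Bp (n+1) h1.symm
    · exact ne_ι_Bp _ h1.symm
    · exact hneb (h2 ▸ hadj).symm
    · exact Ap_ne_Bp (n+1) h1.symm
    · exact hner (h2 ▸ hadj).symm


/-! ### the counted structures -/

def TreePred (n : ℕ) (H : SimpleGraph (VV n)) : Prop := H ≤ LL n ∧ H.IsTree

def ForestPred (n : ℕ) (H : SimpleGraph (VV (n+1))) : Prop :=
  H ≤ LL (n+1) ∧ ¬ H.Reachable (Ap n) (Bp n) ∧
    (∀ v, H.Reachable v (Ap n) ∨ H.Reachable v (Bp n)) ∧ H.edgeSet.ncard = 2 * n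

noncomputable def Tc (n : ℕ) : ℕ := ({H : SimpleGraph (VV n) | TreePred n H}).ncard
noncomputable def Fc (n : ℕ) : ℕ := ({H : SimpleGraph (VV (n+1)) | ForestPred n H}).ncard

lemma card_VV (n : ℕ) : Fintype.card (VV n) = 2 * n := by simp

lemma tree_ncard {n : ℕ} {H : SimpleGraph (VV n)} (h : H.IsTree) :
    H.edgeSet.ncard + 1 = 2 * n := by
  have := isTree_ncard_edges h
  rwa [card_VV] at this

def adjT (n : ℕ) (H' : SimpleGraph (VV (n+2))) : Prop := H'.Adj (ι (Ap n)) (Ap (n+1))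
def adjB (n : ℕ) (H' : SimpleGraph (VV (n+2))) : Prop := H'.Adj (ι (Bp n)) (Bp (n+1))
def adjR (n : ℕ) (H' : SimpleGraph (VV (n+2))) : Prop := H'.Adj (Ap (n+1)) (Bp (n+1))

section Step

variable {n : ℕ}

lemma hs_tb : ({etE n, ebE n} : Set (Sym2 (VV (n+2)))) ⊆ tripleE n := by
  rintro e (rfl | rfl)
  · exact mem_triple_et n
  · exact mem_triple_eb n

lemma hs_tr : ({etE n, erE n} : Set (Sym2 (VV (n+2)))) ⊆ tripleE n := by
  rintro e (rfl | rfl)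
  · exact mem_triple_et n
  · exact mem_triple_er n

lemma hs_br : ({ebE n, erE n} : Set (Sym2 (VV (n+2)))) ⊆ tripleE n := by
  rintro e (rfl | rfl)
  · exact mem_triple_eb n
  · exact mem_triple_er n

lemma hs_t : ({etE n} : Set (Sym2 (VV (n+2)))) ⊆ tripleE n := by
  rintro e rfl
  exact mem_triple_et n

lemma hs_b : ({ebE n} : Set (Sym2 (VV (n+2)))) ⊆ tripleE n := by
  rintro e rfl
  exact mem_triple_eb n

lemma ncard_triple : (tripleE n).ncard = 3 := by
  rw [tripleE, Set.ncard_insert_of_notMem (by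
    rintro (h | h)
    · exact et_ne_eb n h
    · exact et_ne_er n h), Set.ncard_pair (eb_ne_er n)]

/-- extension graphs have prescribed new-edge profile -/
lemma ext_not_adj_et {H : SimpleGraph (VV (n+1))} {s : Set (Sym2 (VV (n+2)))}
    (h : etE n ∉ s) : ¬ adjT n (ext H s) := by
  intro hadj
  rw [adjT, ext_adj] at hadj
  rcases hadj with ⟨x, y, _, _, hy⟩ | ⟨hm, _⟩
  · exact ne_ι_Ap y hy
  · exact h hm

lemma ext_not_adj_eb {H : SimpleGraph (VV (n+1))} {s : Set (Sym2 (VV (n+2)))}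
    (h : ebE n ∉ s) : ¬ adjB n (ext H s) := by
  intro hadj
  rw [adjB, ext_adj] at hadj
  rcases hadj with ⟨x, y, _, _, hy⟩ | ⟨hm, _⟩
  · exact ne_ι_Bp y hy
  · exact h hm

lemma ext_not_adj_er {H : SimpleGraph (VV (n+1))} {s : Set (Sym2 (VV (n+2)))}
    (h : erE n ∉ s) : ¬ adjR n (ext H s) := by
  intro hadj
  rw [adjR, ext_adj] at hadj
  rcases hadj with ⟨x, y, _, hx, _⟩ | ⟨hm, _⟩
  · exact ne_ι_Ap x hx
  · exact h hm

/-- the intersection of the edge set with the triple is determined by the profile -/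
lemma profile_eq {H' : SimpleGraph (VV (n+2))} {s : Set (Sym2 (VV (n+2)))}
    (hs : s ⊆ tripleE n)
    (ht : adjT n H' ↔ etE n ∈ s) (hb : adjB n H' ↔ ebE n ∈ s)
    (hr : adjR n H' ↔ erE n ∈ s) :
    H'.edgeSet ∩ tripleE n = s := by
  ext e
  constructor
  · rintro ⟨hee, hm⟩
    rcases hm with rfl | rfl | hm
    · exact ht.mp hee
    · exact hb.mp hee
    · rw [Set.mem_singleton_iff] at hm
      subst hm
      exact hr.mp hee
  · intro hes
    refine ⟨?_, hs hes⟩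
    rcases hs hes with rfl | rfl | hm
    · exact ht.mpr hes
    · exact hb.mpr hes
    · rw [Set.mem_singleton_iff] at hm
      subst hm
      exact hr.mpr hes

lemma ext_eq_of_profile {H' : SimpleGraph (VV (n+2))} (hle : H' ≤ LL (n+2))
    {s : Set (Sym2 (VV (n+2)))} (hs : s ⊆ tripleE n)
    (ht : adjT n H' ↔ etE n ∈ s) (hb : adjB n H' ↔ ebE n ∈ s)
    (hr : adjR n H' ↔ erE n ∈ s) :
    ext (res H') s = H' := by
  rw [← profile_eq hs ht hb hr]
  exact ext_res hle

lemma res_ncard {H' : SimpleGraph (VV (n+2))} (hle : H' ≤ LL (n+2))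
    {s : Set (Sym2 (VV (n+2)))} (hs : s ⊆ tripleE n) (heq : ext (res H') s = H') :
    (res H').edgeSet.ncard + s.ncard = H'.edgeSet.ncard := by
  conv_rhs => rw [← heq]
  rw [ext_ncard _ hs]

/-! ### infeasible profiles -/

lemma infeasible_T1 {H' : SimpleGraph (VV (n+2))} (h : TreePred (n+2) H')
    (hnet : ¬ adjT n H') (hner : ¬ adjR n H') : False := by
  have hR : H'.Reachable (Ap (n+1)) (ι (Ap n)) :=
    h.2.isConnected.preconnected _ _
  exact ne_ι_Ap (Ap n) (eq_of_reachable_isolated (isolated_Ap h.1 hnet hner) hR).symm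

lemma infeasible_T2 {H' : SimpleGraph (VV (n+2))} (h : TreePred (n+2) H')
    (hneb : ¬ adjB n H') (hner : ¬ adjR n H') : False := by
  have hR : H'.Reachable (Bp (n+1)) (ι (Bp n)) :=
    h.2.isConnected.preconnected _ _
  exact ne_ι_Bp (Bp n) (eq_of_reachable_isolated (isolated_Bp h.1 hneb hner) hR).symm

lemma infeasible_T3 {H' : SimpleGraph (VV (n+2))} (h : TreePred (n+2) H')
    (hnet : ¬ adjT n H') (hneb : ¬ adjB n H') : False := by
  have hR : H'.Reachable (Ap (n+1)) (ι (Ap n)) :=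
    h.2.isConnected.preconnected _ _
  exact ι_snd_ne_last (Ap n) ((qLast_invariant h.1 hnet hneb hR).mp rfl)

lemma infeasible_F_R {H' : SimpleGraph (VV (n+2))} (h : ForestPred (n+1) H')
    (hr : adjR n H') : False :=
  h.2.1 hr.reachable

lemma infeasible_F_0 {H' : SimpleGraph (VV (n+2))} (h : ForestPred (n+1) H')
    (hnet : ¬ adjT n H') (hneb : ¬ adjB n H') : False := by
  have hner : ¬ adjR n H' := fun hr => infeasible_F_R h hr
  rcases h.2.2.1 (ι (Ap n)) with hR | hR
  · exact ne_ι_Ap (Ap n) (eq_of_reachable_isolated (isolated_Ap h.1 hnet hner) hR.symm).symm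
  · exact ne_ι_Bp (Ap n) (eq_of_reachable_isolated (isolated_Bp h.1 hneb hner) hR.symm).symm

/-! ### class TB : trees with top and bottom rails, no rung -/

lemma classTB_eq :
    {H' : SimpleGraph (VV (n+2)) | TreePred (n+2) H' ∧ adjT n H' ∧ adjB n H' ∧ ¬ adjR n H'}
      = (fun H => ext H {etE n, ebE n}) '' {H | TreePred (n+1) H} := by
  ext H'
  constructor
  · rintro ⟨⟨hle, htree⟩, ht, hb, hnr⟩
    have hmt : etE n ∈ ({etE n, ebE n} : Set (Sym2 (VV (n+2)))) := Or.inl rfl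
    have hmb : ebE n ∈ ({etE n, ebE n} : Set (Sym2 (VV (n+2)))) := Or.inr rfl
    have heq : ext (res H') {etE n, ebE n} = H' :=
      ext_eq_of_profile hle hs_tb (iff_of_true ht hmt) (iff_of_true hb hmb)
        (iff_of_false hnr (by
          rintro (h | h)
          · exact et_ne_er n h.symm
          · exact eb_ne_er n h.symm))
    refine ⟨res H', ⟨res_le hle, ?_⟩, heq⟩
    -- the restriction is a tree
    have hcard : (res H').edgeSet.ncard + 1 = 2 * (n + 1) := by
      have h1 := res_ncard hle hs_tb heq
      have h2 := tree_ncard htree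
      rw [Set.ncard_pair (et_ne_eb n)] at h1
      omega
    have hBA : (res H').Reachable (Bp n) (Ap n) := by
      have hR : H'.Reachable (ι (Ap n)) (ι (Bp n)) := htree.isConnected.preconnected _ _
      have := qA_invariant hle hnr hR
      rw [down_ι, down_ι] at this
      exact this.mp (Reachable.refl _)
    have hall : ∀ x, (res H').Reachable x (Ap n) := by
      intro x
      have hR : H'.Reachable (ι x) (ι (Ap n)) := htree.isConnected.preconnected _ _
      have := qA_invariant hle hnr hR
      rw [down_ι, down_ι] at this
      exact this.mpr (Reachable.refl _)
    exact isTree_of_connected_of_ncard (connected_of_forall_reach _ hall)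
      (by rw [hcard, card_VV])
  · rintro ⟨H, hH, rfl⟩
    obtain ⟨hle, htree⟩ := hH
    have hle' : ext H {etE n, ebE n} ≤ LL (n+2) := ext_le hle hs_tb
    have hmt : etE n ∈ ({etE n, ebE n} : Set (Sym2 (VV (n+2)))) := Or.inl rfl
    have hmb : ebE n ∈ ({etE n, ebE n} : Set (Sym2 (VV (n+2)))) := Or.inr rfl
    refine ⟨⟨hle', ?_⟩, ext_adj_et hmt, ext_adj_eb hmb, ext_not_adj_er (by
      rintro (h | h)
      · exact et_ne_er n h.symm
      · exact eb_ne_er n h.symm)⟩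
    have hconn : (ext H {etE n, ebE n}).Connected := by
      refine connected_of_forall_reach (ι (Ap n)) ?_
      intro v
      rcases casesVV v with ⟨x, rfl⟩ | rfl | rfl
      · exact reach_up (htree.isConnected.preconnected _ _)
      · exact (ext_adj_et hmt).symm.reachable
      · exact ((ext_adj_eb hmb).symm.reachable).trans
          (reach_up (htree.isConnected.preconnected _ _))
    refine isTree_of_connected_of_ncard hconn ?_
    rw [ext_ncard _ hs_tb, Set.ncard_pair (et_ne_eb n), card_VV]
    have := tree_ncard htree
    omega

/-! ### class TR : trees with top rail and rung -/

lemma classTR_eq :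
    {H' : SimpleGraph (VV (n+2)) | TreePred (n+2) H' ∧ adjT n H' ∧ ¬ adjB n H' ∧ adjR n H'}
      = (fun H => ext H {etE n, erE n}) '' {H | TreePred (n+1) H} := by
  ext H'
  constructor
  · rintro ⟨⟨hle, htree⟩, ht, hnb, hr⟩
    have hmt : etE n ∈ ({etE n, erE n} : Set (Sym2 (VV (n+2)))) := Or.inl rfl
    have hmr : erE n ∈ ({etE n, erE n} : Set (Sym2 (VV (n+2)))) := Or.inr rfl
    have heq : ext (res H') {etE n, erE n} = H' :=
      ext_eq_of_profile hle hs_tr (iff_of_true ht hmt)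
        (iff_of_false hnb (by
          rintro (h | h)
          · exact et_ne_eb n h.symm
          · exact eb_ne_er n h))
        (iff_of_true hr hmr)
    refine ⟨res H', ⟨res_le hle, ?_⟩, heq⟩
    have hcard : (res H').edgeSet.ncard + 1 = 2 * (n + 1) := by
      have h1 := res_ncard hle hs_tr heq
      have h2 := tree_ncard htree
      rw [Set.ncard_pair (et_ne_er n)] at h1
      omega
    have hall : ∀ x, (res H').Reachable x (Ap n) := by
      intro x
      have hR : H'.Reachable (ι x) (ι (Ap n)) := htree.isConnected.preconnected _ _
      have := qTop_invariant hle hnb hR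
      rw [down_ι, down_ι] at this
      rcases this.mpr (Or.inr (Reachable.refl _)) with h | h
      · exact absurd h (ι_snd_ne_last x)
      · exact h
    exact isTree_of_connected_of_ncard (connected_of_forall_reach _ hall)
      (by rw [hcard, card_VV])
  · rintro ⟨H, hH, rfl⟩
    obtain ⟨hle, htree⟩ := hH
    have hle' : ext H {etE n, erE n} ≤ LL (n+2) := ext_le hle hs_tr
    have hmt : etE n ∈ ({etE n, erE n} : Set (Sym2 (VV (n+2)))) := Or.inl rfl
    have hmr : erE n ∈ ({etE n, erE n} : Set (Sym2 (VV (n+2)))) := Or.inr rfl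
    refine ⟨⟨hle', ?_⟩, ext_adj_et hmt, ext_not_adj_eb (by
      rintro (h | h)
      · exact et_ne_eb n h.symm
      · exact eb_ne_er n h), ext_adj_er hmr⟩
    have hconn : (ext H {etE n, erE n}).Connected := by
      refine connected_of_forall_reach (ι (Ap n)) ?_
      intro v
      rcases casesVV v with ⟨x, rfl⟩ | rfl | rfl
      · exact reach_up (htree.isConnected.preconnected _ _)
      · exact (ext_adj_et hmt).symm.reachable
      · exact ((ext_adj_er hmr).symm.reachable).trans (ext_adj_et hmt).symm.reachable
    refine isTree_of_connected_of_ncard hconn ?_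
    rw [ext_ncard _ hs_tr, Set.ncard_pair (et_ne_er n), card_VV]
    have := tree_ncard htree
    omega

/-! ### class BR : trees with bottom rail and rung -/

lemma classBR_eq :
    {H' : SimpleGraph (VV (n+2)) | TreePred (n+2) H' ∧ ¬ adjT n H' ∧ adjB n H' ∧ adjR n H'}
      = (fun H => ext H {ebE n, erE n}) '' {H | TreePred (n+1) H} := by
  ext H'
  constructor
  · rintro ⟨⟨hle, htree⟩, hnt, hb, hr⟩
    have hmb : ebE n ∈ ({ebE n, erE n} : Set (Sym2 (VV (n+2)))) := Or.inl rfl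
    have hmr : erE n ∈ ({ebE n, erE n} : Set (Sym2 (VV (n+2)))) := Or.inr rfl
    have heq : ext (res H') {ebE n, erE n} = H' :=
      ext_eq_of_profile hle hs_br
        (iff_of_false hnt (by
          rintro (h | h)
          · exact et_ne_eb n h
          · exact et_ne_er n h))
        (iff_of_true hb hmb) (iff_of_true hr hmr)
    refine ⟨res H', ⟨res_le hle, ?_⟩, heq⟩
    have hcard : (res H').edgeSet.ncard + 1 = 2 * (n + 1) := by
      have h1 := res_ncard hle hs_br heq
      have h2 := tree_ncard htree
      rw [Set.ncard_pair (eb_ne_er n)] at h1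
      omega
    have hall : ∀ x, (res H').Reachable x (Bp n) := by
      intro x
      have hR : H'.Reachable (ι x) (ι (Bp n)) := htree.isConnected.preconnected _ _
      have := qBot_invariant hle hnt hR
      rw [down_ι, down_ι] at this
      rcases this.mpr (Or.inr (Reachable.refl _)) with h | h
      · exact absurd h (ι_snd_ne_last x)
      · exact h
    exact isTree_of_connected_of_ncard (connected_of_forall_reach _ hall)
      (by rw [hcard, card_VV])
  · rintro ⟨H, hH, rfl⟩
    obtain ⟨hle, htree⟩ := hH
    have hle' : ext H {ebE n, erE n} ≤ LL (n+2) := ext_le hle hs_br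
    have hmb : ebE n ∈ ({ebE n, erE n} : Set (Sym2 (VV (n+2)))) := Or.inl rfl
    have hmr : erE n ∈ ({ebE n, erE n} : Set (Sym2 (VV (n+2)))) := Or.inr rfl
    refine ⟨⟨hle', ?_⟩, ext_not_adj_et (by
      rintro (h | h)
      · exact et_ne_eb n h
      · exact et_ne_er n h), ext_adj_eb hmb, ext_adj_er hmr⟩
    have hconn : (ext H {ebE n, erE n}).Connected := by
      refine connected_of_forall_reach (ι (Bp n)) ?_
      intro v
      rcases casesVV v with ⟨x, rfl⟩ | rfl | rfl
      · exact reach_up (htree.isConnected.preconnected _ _)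
      · exact ((ext_adj_er hmr).reachable).trans (ext_adj_eb hmb).symm.reachable
      · exact (ext_adj_eb hmb).symm.reachable
    refine isTree_of_connected_of_ncard hconn ?_
    rw [ext_ncard _ hs_br, Set.ncard_pair (eb_ne_er n), card_VV]
    have := tree_ncard htree
    omega

/-! ### class 3 : trees with all three new edges -/

lemma class3_eq :
    {H' : SimpleGraph (VV (n+2)) | TreePred (n+2) H' ∧ adjT n H' ∧ adjB n H' ∧ adjR n H'}
      = (fun H => ext H (tripleE n)) '' {H | ForestPred n H} := by
  ext H'
  constructor
  · rintro ⟨⟨hle, htree⟩, ht, hb, hr⟩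
    have heq : ext (res H') (tripleE n) = H' :=
      ext_eq_of_profile hle subset_rfl (iff_of_true ht (mem_triple_et n))
        (iff_of_true hb (mem_triple_eb n)) (iff_of_true hr (mem_triple_er n))
    refine ⟨res H', ⟨res_le hle, ?_, ?_, ?_⟩, heq⟩
    · -- not reachable
      intro hAB
      have hall : ∀ x, (res H').Reachable x (Ap n) := by
        intro x
        have hR : H'.Reachable (ι x) (ι (Ap n)) := htree.isConnected.preconnected _ _
        have := qAB_invariant hle hR
        rw [down_ι, down_ι] at this
        rcases this.mpr (Or.inl (Reachable.refl _)) with h | h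
        · exact h
        · exact h.trans hAB.symm
      have hconn := connected_of_forall_reach _ hall
      have hlow := le_ncard_of_connected hconn
      have h1 := res_ncard hle subset_rfl heq
      have h2 := tree_ncard htree
      rw [ncard_triple] at h1
      rw [card_VV] at hlow
      omega
    · -- everyone reaches an end
      intro v
      have hR : H'.Reachable (ι v) (ι (Ap n)) := htree.isConnected.preconnected _ _
      have := qAB_invariant hle hR
      rw [down_ι, down_ι] at this
      exact this.mpr (Or.inl (Reachable.refl _))
    · -- edge count
      have h1 := res_ncard hle subset_rfl heq
      have h2 := tree_ncard htree
      rw [ncard_triple] at h1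
      omega
  · rintro ⟨H, hH, rfl⟩
    obtain ⟨hle, hnAB, hreach, hcard⟩ := hH
    have hle' : ext H (tripleE n) ≤ LL (n+2) := ext_le hle subset_rfl
    refine ⟨⟨hle', ?_⟩, ext_adj_et (mem_triple_et n), ext_adj_eb (mem_triple_eb n),
      ext_adj_er (mem_triple_er n)⟩
    have hconn : (ext H (tripleE n)).Connected := by
      refine connected_of_forall_reach (Ap (n+1)) ?_
      intro v
      rcases casesVV v with ⟨x, rfl⟩ | rfl | rfl
      · rcases hreach x with h | h
        · exact (reach_up h).trans (ext_adj_et (mem_triple_et n)).reachable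
        · exact ((reach_up h).trans (ext_adj_eb (mem_triple_eb n)).reachable).trans
            (ext_adj_er (mem_triple_er n)).symm.reachable
      · exact Reachable.refl _
      · exact (ext_adj_er (mem_triple_er n)).symm.reachable
    refine isTree_of_connected_of_ncard hconn ?_
    rw [ext_ncard _ subset_rfl, ncard_triple, card_VV]
    omega

/-! ### class F-TB : forests with both rails -/

lemma classFTB_eq :
    {H' : SimpleGraph (VV (n+2)) | ForestPred (n+1) H' ∧ adjT n H' ∧ adjB n H'}
      = (fun H => ext H {etE n, ebE n}) '' {H | ForestPred n H} := by
  ext H'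
  constructor
  · rintro ⟨⟨hle, hnAB, hreach, hcard⟩, ht, hb⟩
    have hnr : ¬ adjR n H' := fun hr => hnAB hr.reachable
    have hmt : etE n ∈ ({etE n, ebE n} : Set (Sym2 (VV (n+2)))) := Or.inl rfl
    have hmb : ebE n ∈ ({etE n, ebE n} : Set (Sym2 (VV (n+2)))) := Or.inr rfl
    have heq : ext (res H') {etE n, ebE n} = H' :=
      ext_eq_of_profile hle hs_tb (iff_of_true ht hmt) (iff_of_true hb hmb)
        (iff_of_false hnr (by
          rintro (h | h)
          · exact et_ne_er n h.symm
          · exact eb_ne_er n h.symm))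
    refine ⟨res H', ⟨res_le hle, ?_, ?_, ?_⟩, heq⟩
    · -- not reachable below
      intro hAB
      exact hnAB ((ht.symm.reachable.trans (res_reach_up hAB)).trans hb.reachable)
    · -- everyone reaches an end below
      intro v
      rcases hreach (ι v) with hR | hR
      · left
        have := qA_invariant hle hnr hR
        rw [down_ι, down_Ap] at this
        exact this.mpr (Reachable.refl _)
      · right
        have := qB_invariant hle hnr hR
        rw [down_ι, down_Bp] at this
        exact this.mpr (Reachable.refl _)
    · -- count
      have h1 := res_ncard hle hs_tb heq
      rw [Set.ncard_pair (et_ne_eb n)] at h1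
      omega
  · rintro ⟨H, hH, rfl⟩
    obtain ⟨hle, hnAB, hreach, hcard⟩ := hH
    have hle' : ext H {etE n, ebE n} ≤ LL (n+2) := ext_le hle hs_tb
    have hmt : etE n ∈ ({etE n, ebE n} : Set (Sym2 (VV (n+2)))) := Or.inl rfl
    have hmb : ebE n ∈ ({etE n, ebE n} : Set (Sym2 (VV (n+2)))) := Or.inr rfl
    have hnr : ¬ adjR n (ext H {etE n, ebE n}) := ext_not_adj_er (by
      rintro (h | h)
      · exact et_ne_er n h.symm
      · exact eb_ne_er n h.symm)
    refine ⟨⟨hle', ?_, ?_, ?_⟩, ext_adj_et hmt, ext_adj_eb hmb⟩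
    · -- new ends not reachable
      intro hR
      have := qA_invariant hle' hnr hR
      rw [down_Ap, down_Bp, res_ext _ hs_tb] at this
      exact hnAB (this.mp (Reachable.refl _)).symm
    · -- everyone reaches a new end
      intro v
      rcases casesVV v with ⟨x, rfl⟩ | rfl | rfl
      · rcases hreach x with h | h
        · exact Or.inl ((reach_up h).trans (ext_adj_et hmt).reachable)
        · exact Or.inr ((reach_up h).trans (ext_adj_eb hmb).reachable)
      · exact Or.inl (Reachable.refl _)
      · exact Or.inr (Reachable.refl _)
    · rw [ext_ncard _ hs_tb, Set.ncard_pair (et_ne_eb n), hcard]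
      ring

/-! ### class F-T : forests with only the top rail -/

lemma classFT_eq :
    {H' : SimpleGraph (VV (n+2)) | ForestPred (n+1) H' ∧ adjT n H' ∧ ¬ adjB n H'}
      = (fun H => ext H {etE n}) '' {H | TreePred (n+1) H} := by
  ext H'
  constructor
  · rintro ⟨⟨hle, hnAB, hreach, hcard⟩, ht, hnb⟩
    have hnr : ¬ adjR n H' := fun hr => hnAB hr.reachable
    have heq : ext (res H') {etE n} = H' :=
      ext_eq_of_profile hle hs_t (iff_of_true ht rfl)
        (iff_of_false hnb (fun h => et_ne_eb n (Set.mem_singleton_iff.mp h).symm))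
        (iff_of_false hnr (fun h => et_ne_er n (Set.mem_singleton_iff.mp h).symm))
    refine ⟨res H', ⟨res_le hle, ?_⟩, heq⟩
    have hiso := isolated_Bp hle hnb hnr
    have hall : ∀ x, (res H').Reachable x (Ap n) := by
      intro x
      rcases hreach (ι x) with hR | hR
      · have := qA_invariant hle hnr hR
        rw [down_ι, down_Ap] at this
        exact this.mpr (Reachable.refl _)
      · exact absurd (eq_of_reachable_isolated hiso hR.symm).symm (ne_ι_Bp x)
    refine isTree_of_connected_of_ncard (connected_of_forall_reach _ hall) ?_
    have h1 := res_ncard hle hs_t heq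
    rw [Set.ncard_singleton] at h1
    rw [card_VV]
    omega
  · rintro ⟨H, hH, rfl⟩
    obtain ⟨hle, htree⟩ := hH
    have hle' : ext H {etE n} ≤ LL (n+2) := ext_le hle hs_t
    have hnb : ¬ adjB n (ext H {etE n}) :=
      ext_not_adj_eb (fun h => et_ne_eb n (Set.mem_singleton_iff.mp h).symm)
    have hnr : ¬ adjR n (ext H {etE n}) :=
      ext_not_adj_er (fun h => et_ne_er n (Set.mem_singleton_iff.mp h).symm)
    have hiso := isolated_Bp hle' hnb hnr
    refine ⟨⟨hle', ?_, ?_, ?_⟩, ext_adj_et rfl, hnb⟩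
    · intro hR
      exact Ap_ne_Bp (n+1) (eq_of_reachable_isolated hiso hR.symm).symm
    · intro v
      rcases casesVV v with ⟨x, rfl⟩ | rfl | rfl
      · exact Or.inl ((reach_up (htree.isConnected.preconnected _ _)).trans
          (ext_adj_et (s := {etE n}) rfl).reachable)
      · exact Or.inl (Reachable.refl _)
      · exact Or.inr (Reachable.refl _)
    · rw [ext_ncard _ hs_t, Set.ncard_singleton]
      have := tree_ncard htree
      omega

/-! ### class F-B : forests with only the bottom rail -/

lemma classFB_eq :
    {H' : SimpleGraph (VV (n+2)) | ForestPred (n+1) H' ∧ ¬ adjT n H' ∧ adjB n H'}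
      = (fun H => ext H {ebE n}) '' {H | TreePred (n+1) H} := by
  ext H'
  constructor
  · rintro ⟨⟨hle, hnAB, hreach, hcard⟩, hnt, hb⟩
    have hnr : ¬ adjR n H' := fun hr => hnAB hr.reachable
    have heq : ext (res H') {ebE n} = H' :=
      ext_eq_of_profile hle hs_b
        (iff_of_false hnt (fun h => et_ne_eb n (Set.mem_singleton_iff.mp h)))
        (iff_of_true hb rfl)
        (iff_of_false hnr (fun h => eb_ne_er n (Set.mem_singleton_iff.mp h).symm))
    refine ⟨res H', ⟨res_le hle, ?_⟩, heq⟩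
    have hiso := isolated_Ap hle hnt hnr
    have hall : ∀ x, (res H').Reachable x (Bp n) := by
      intro x
      rcases hreach (ι x) with hR | hR
      · exact absurd (eq_of_reachable_isolated hiso hR.symm).symm (ne_ι_Ap x)
      · have := qB_invariant hle hnr hR
        rw [down_ι, down_Bp] at this
        exact this.mpr (Reachable.refl _)
    refine isTree_of_connected_of_ncard (connected_of_forall_reach _ hall) ?_
    have h1 := res_ncard hle hs_b heq
    rw [Set.ncard_singleton] at h1
    rw [card_VV]
    omega
  · rintro ⟨H, hH, rfl⟩
    obtain ⟨hle, htree⟩ := hH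
    have hle' : ext H {ebE n} ≤ LL (n+2) := ext_le hle hs_b
    have hnt : ¬ adjT n (ext H {ebE n}) :=
      ext_not_adj_et (fun h => et_ne_eb n (Set.mem_singleton_iff.mp h))
    have hnr : ¬ adjR n (ext H {ebE n}) :=
      ext_not_adj_er (fun h => eb_ne_er n (Set.mem_singleton_iff.mp h).symm)
    have hiso := isolated_Ap hle' hnt hnr
    refine ⟨⟨hle', ?_, ?_, ?_⟩, hnt, ext_adj_eb rfl⟩
    · intro hR
      exact Ap_ne_Bp (n+1) (eq_of_reachable_isolated hiso hR)
    · intro v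
      rcases casesVV v with ⟨x, rfl⟩ | rfl | rfl
      · exact Or.inr ((reach_up (htree.isConnected.preconnected _ _)).trans
          (ext_adj_eb (s := {ebE n}) rfl).reachable)
      · exact Or.inl (Reachable.refl _)
      · exact Or.inr (Reachable.refl _)
    · rw [ext_ncard _ hs_b, Set.ncard_singleton]
      have := tree_ncard htree
      omega

end Step


/-! ### counting -/

section Count

variable {n : ℕ}

lemma Tc_classes :
    {H' : SimpleGraph (VV (n+2)) | TreePred (n+2) H'} =
      ({H' | TreePred (n+2) H' ∧ adjT n H' ∧ adjB n H' ∧ ¬ adjR n H'} ∪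
       {H' | TreePred (n+2) H' ∧ adjT n H' ∧ ¬ adjB n H' ∧ adjR n H'}) ∪
      ({H' | TreePred (n+2) H' ∧ ¬ adjT n H' ∧ adjB n H' ∧ adjR n H'} ∪
       {H' | TreePred (n+2) H' ∧ adjT n H' ∧ adjB n H' ∧ adjR n H'}) := by
  ext H'
  simp only [Set.mem_union, Set.mem_setOf_eq]
  constructor
  · intro h
    by_cases ht : adjT n H' <;> by_cases hb : adjB n H' <;> by_cases hr : adjR n H'
    · exact Or.inr (Or.inr ⟨h, ht, hb, hr⟩)
    · exact Or.inl (Or.inl ⟨h, ht, hb, hr⟩)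
    · exact Or.inl (Or.inr ⟨h, ht, hb, hr⟩)
    · exact (infeasible_T2 h hb hr).elim
    · exact Or.inr (Or.inl ⟨h, ht, hb, hr⟩)
    · exact (infeasible_T1 h ht hr).elim
    · exact (infeasible_T3 h ht hb).elim
    · exact (infeasible_T1 h ht hr).elim
  · rintro ((h | h) | (h | h)) <;> exact h.1

lemma step_T (n : ℕ) : Tc (n+2) = 3 * Tc (n+1) + Fc n := by
  have d12 : Disjoint
      {H' : SimpleGraph (VV (n+2)) | TreePred (n+2) H' ∧ adjT n H' ∧ adjB n H' ∧ ¬ adjR n H'}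
      {H' | TreePred (n+2) H' ∧ adjT n H' ∧ ¬ adjB n H' ∧ adjR n H'} := by
    rw [Set.disjoint_left]
    rintro H' ⟨_, _, hb, _⟩ ⟨_, _, hnb, _⟩
    exact hnb hb
  have d34 : Disjoint
      {H' : SimpleGraph (VV (n+2)) | TreePred (n+2) H' ∧ ¬ adjT n H' ∧ adjB n H' ∧ adjR n H'}
      {H' | TreePred (n+2) H' ∧ adjT n H' ∧ adjB n H' ∧ adjR n H'} := by
    rw [Set.disjoint_left]
    rintro H' ⟨_, hnt, _, _⟩ ⟨_, ht, _, _⟩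
    exact hnt ht
  have dbig : Disjoint
      ({H' : SimpleGraph (VV (n+2)) | TreePred (n+2) H' ∧ adjT n H' ∧ adjB n H' ∧ ¬ adjR n H'} ∪
       {H' | TreePred (n+2) H' ∧ adjT n H' ∧ ¬ adjB n H' ∧ adjR n H'})
      ({H' | TreePred (n+2) H' ∧ ¬ adjT n H' ∧ adjB n H' ∧ adjR n H'} ∪
       {H' | TreePred (n+2) H' ∧ adjT n H' ∧ adjB n H' ∧ adjR n H'}) := by
    rw [Set.disjoint_left]
    rintro H' (⟨_, _, _, hnr⟩ | ⟨_, _, hnb, _⟩) (h2 | h2)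
    · exact hnr h2.2.2.2
    · exact hnr h2.2.2.2
    · exact hnb h2.2.2.1
    · exact hnb h2.2.2.1
  have : Tc (n+2) =
      ({H' : SimpleGraph (VV (n+2)) | TreePred (n+2) H' ∧ adjT n H' ∧ adjB n H' ∧
        ¬ adjR n H'}).ncard +
      ({H' : SimpleGraph (VV (n+2)) | TreePred (n+2) H' ∧ adjT n H' ∧ ¬ adjB n H' ∧
        adjR n H'}).ncard +
      (({H' : SimpleGraph (VV (n+2)) | TreePred (n+2) H' ∧ ¬ adjT n H' ∧ adjB n H' ∧
        adjR n H'}).ncard +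
      ({H' : SimpleGraph (VV (n+2)) | TreePred (n+2) H' ∧ adjT n H' ∧ adjB n H' ∧
        adjR n H'}).ncard) := by
    rw [Tc, Tc_classes,
      Set.ncard_union_eq dbig (Set.toFinite _) (Set.toFinite _),
      Set.ncard_union_eq d12 (Set.toFinite _) (Set.toFinite _),
      Set.ncard_union_eq d34 (Set.toFinite _) (Set.toFinite _)]
  rw [this, classTB_eq, classTR_eq, classBR_eq, class3_eq,
    Set.ncard_image_of_injective _ (ext_injective hs_tb),
    Set.ncard_image_of_injective _ (ext_injective hs_tr),
    Set.ncard_image_of_injective _ (ext_injective hs_br),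
    Set.ncard_image_of_injective _ (ext_injective (subset_refl (tripleE n)))]
  show Tc (n+1) + Tc (n+1) + (Tc (n+1) + Fc n) = 3 * Tc (n+1) + Fc n
  ring

lemma Fc_classes :
    {H' : SimpleGraph (VV (n+2)) | ForestPred (n+1) H'} =
      ({H' | ForestPred (n+1) H' ∧ adjT n H' ∧ adjB n H'} ∪
       {H' | ForestPred (n+1) H' ∧ adjT n H' ∧ ¬ adjB n H'}) ∪
      {H' | ForestPred (n+1) H' ∧ ¬ adjT n H' ∧ adjB n H'} := by
  ext H'
  simp only [Set.mem_union, Set.mem_setOf_eq]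
  constructor
  · intro h
    by_cases ht : adjT n H' <;> by_cases hb : adjB n H'
    · exact Or.inl (Or.inl ⟨h, ht, hb⟩)
    · exact Or.inl (Or.inr ⟨h, ht, hb⟩)
    · exact Or.inr ⟨h, ht, hb⟩
    · exact (infeasible_F_0 h ht hb).elim
  · rintro ((h | h) | h) <;> exact h.1

lemma step_F (n : ℕ) : Fc (n+1) = 2 * Tc (n+1) + Fc n := by
  have d12 : Disjoint
      {H' : SimpleGraph (VV (n+2)) | ForestPred (n+1) H' ∧ adjT n H' ∧ adjB n H'}
      {H' | ForestPred (n+1) H' ∧ adjT n H' ∧ ¬ adjB n H'} := by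
    rw [Set.disjoint_left]
    rintro H' ⟨_, _, hb⟩ ⟨_, _, hnb⟩
    exact hnb hb
  have dbig : Disjoint
      ({H' : SimpleGraph (VV (n+2)) | ForestPred (n+1) H' ∧ adjT n H' ∧ adjB n H'} ∪
       {H' | ForestPred (n+1) H' ∧ adjT n H' ∧ ¬ adjB n H'})
      {H' | ForestPred (n+1) H' ∧ ¬ adjT n H' ∧ adjB n H'} := by
    rw [Set.disjoint_left]
    rintro H' (⟨_, ht, _⟩ | ⟨_, ht, _⟩) ⟨_, hnt, _⟩ <;> exact hnt ht
  have : Fc (n+1) =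
      ({H' : SimpleGraph (VV (n+2)) | ForestPred (n+1) H' ∧ adjT n H' ∧ adjB n H'}).ncard +
      ({H' : SimpleGraph (VV (n+2)) | ForestPred (n+1) H' ∧ adjT n H' ∧ ¬ adjB n H'}).ncard +
      ({H' : SimpleGraph (VV (n+2)) | ForestPred (n+1) H' ∧ ¬ adjT n H' ∧ adjB n H'}).ncard := by
    rw [Fc, Fc_classes,
      Set.ncard_union_eq dbig (Set.toFinite _) (Set.toFinite _),
      Set.ncard_union_eq d12 (Set.toFinite _) (Set.toFinite _)]
  rw [this, classFTB_eq, classFT_eq, classFB_eq,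
    Set.ncard_image_of_injective _ (ext_injective hs_tb),
    Set.ncard_image_of_injective _ (ext_injective hs_t),
    Set.ncard_image_of_injective _ (ext_injective hs_b)]
  show Fc n + Tc (n+1) + Tc (n+1) = 2 * Tc (n+1) + Fc n
  ring

lemma Tc_rec (n : ℕ) : Tc (n+3) + Tc (n+1) = 4 * Tc (n+2) := by
  have h1 : Tc (n+3) = 3 * Tc (n+2) + Fc (n+1) := step_T (n+1)
  have h2 : Fc (n+1) = 2 * Tc (n+1) + Fc n := step_F n
  have h3 : Tc (n+2) = 3 * Tc (n+1) + Fc n := step_T n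
  omega

end Count

/-! ### base cases -/

def vA : VV 1 := ((0 : Fin 2), (0 : Fin 1))
def vB : VV 1 := ((1 : Fin 2), (0 : Fin 1))

lemma vv1_cases (v : VV 1) : v = vA ∨ v = vB := by
  revert v; decide

lemma vA_ne_vB : vA ≠ vB := by decide

lemma LL1_adj : (LL 1).Adj vA vB := by
  rw [LL_adj_iff]
  left
  exact ⟨by decide, rfl⟩

lemma LL1_adj_iff {u v : VV 1} :
    (LL 1).Adj u v ↔ (u = vA ∧ v = vB) ∨ (u = vB ∧ v = vA) := by
  rw [LL_adj_iff]
  revert u v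
  decide

lemma Tc_one : Tc 1 = 1 := by
  have hset : {H : SimpleGraph (VV 1) | TreePred 1 H} = {LL 1} := by
    ext H
    simp only [Set.mem_setOf_eq, Set.mem_singleton_iff]
    constructor
    · rintro ⟨hle, htree⟩
      have hAB : H.Reachable vA vB := htree.isConnected.preconnected _ _
      have hadj : H.Adj vA vB := by
        obtain ⟨w⟩ := hAB
        cases w with
        | @cons _ w _ h' p =>
          rcases vv1_cases w with rfl | rfl
          · exact absurd h' H.irrefl
          · exact h'
      ext u v
      constructor
      · intro h; exact hle h
      · intro h
        rcases LL1_adj_iff.mp h with ⟨rfl, rfl⟩ | ⟨rfl, rfl⟩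
        · exact hadj
        · exact hadj.symm
    · rintro rfl
      refine ⟨le_refl _, ?_⟩
      have hconn : (LL 1).Connected := by
        refine connected_of_forall_reach vA ?_
        intro v
        rcases vv1_cases v with rfl | rfl
        · exact Reachable.refl _
        · exact LL1_adj.symm.reachable
      refine isTree_of_connected_of_ncard hconn ?_
      have : (LL 1).edgeSet = {s(vA, vB)} := by
        ext e
        induction e using Sym2.ind with
        | _ u v =>
          rw [mem_edgeSet, LL1_adj_iff, Set.mem_singleton_iff, Sym2.eq_iff]
      rw [this, Set.ncard_singleton, card_VV]
  rw [Tc, hset, Set.ncard_singleton]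

lemma Fc_zero : Fc 0 = 1 := by
  have hA : Ap 0 = vA := rfl
  have hB : Bp 0 = vB := rfl
  have hset : {H : SimpleGraph (VV 1) | ForestPred 0 H} = {⊥} := by
    ext H
    simp only [Set.mem_setOf_eq, Set.mem_singleton_iff]
    constructor
    · rintro ⟨hle, hnAB, hreach, hcard⟩
      have : H.edgeSet = ∅ := (Set.ncard_eq_zero (Set.toFinite _)).mp (by simpa using hcard)
      rwa [edgeSet_eq_empty] at this
    · rintro rfl
      refine ⟨bot_le, ?_, ?_, ?_⟩
      · rw [reachable_bot, hA, hB]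
        exact vA_ne_vB
      · intro v
        rcases vv1_cases v with rfl | rfl
        · exact Or.inl (by rw [hA])
        · exact Or.inr (by rw [hB])
      · simp
  rw [Fc, hset, Set.ncard_singleton]


/-! ### transfer to subgraph counting -/

lemma tree_iso {V W : Type*} {G : SimpleGraph V} {G' : SimpleGraph W} (e : G ≃g G')
    (h : G.IsTree) : G'.IsTree := by
  constructor
  · exact (Iso.connected_iff e).mp h.isConnected
  · intro v c hc
    exact h.IsAcyclic (c.map e.symm.toHom) (hc.map e.symm.toEquiv.injective)

end GridAux

open GridAux

/-- The number of spanning trees of the `2 × n` grid graph. -/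
noncomputable def gridTreeCount (n : ℕ) : ℕ :=
  {T : (pathGraph 2 □ pathGraph n).Subgraph | T.IsSpanning ∧ T.coe.IsTree}.ncard

lemma gridTreeCount_eq (n : ℕ) : gridTreeCount n = Tc n := by
  classical
  rw [gridTreeCount, Tc]
  have himg : Subgraph.spanningCoe '' {T : (LL n).Subgraph | T.IsSpanning ∧ T.coe.IsTree}
      = {H : SimpleGraph (VV n) | TreePred n H} := by
    ext H
    constructor
    · rintro ⟨T, ⟨hsp, htree⟩, rfl⟩
      exact ⟨T.spanningCoe_le, tree_iso (T.spanningCoeEquivCoeOfSpanning hsp).symm htree⟩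
    · rintro ⟨hle, htree⟩
      refine ⟨SimpleGraph.toSubgraph H hle, ⟨SimpleGraph.toSubgraph.isSpanning H hle, ?_⟩, rfl⟩
      exact tree_iso ((SimpleGraph.toSubgraph H hle).spanningCoeEquivCoeOfSpanning
        (SimpleGraph.toSubgraph.isSpanning H hle)) htree
  have hinj : Set.InjOn Subgraph.spanningCoe
      {T : (LL n).Subgraph | T.IsSpanning ∧ T.coe.IsTree} := by
    rintro T1 ⟨h1, _⟩ T2 ⟨h2, _⟩ heq
    exact Subgraph.ext (h1.verts_eq_univ.trans h2.verts_eq_univ.symm)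
      (Subgraph.spanningCoe_inj.mp heq)
  rw [← himg, Set.ncard_image_of_injOn hinj]

/-! ### numeric values and closed form -/

lemma Tc_two : Tc 2 = 4 := by
  have h : Tc 2 = 3 * Tc 1 + Fc 0 := step_T 0
  rw [Tc_one, Fc_zero] at h
  omega

lemma sqrt3_pos : (0 : ℝ) < Real.sqrt 3 := Real.sqrt_pos.mpr (by norm_num)

lemma sqrt3_sq : Real.sqrt 3 * Real.sqrt 3 = 3 :=
  Real.mul_self_sqrt (by norm_num)

lemma sqrt3_lt_two : Real.sqrt 3 < 2 := by
  nlinarith [sqrt3_sq, sqrt3_pos]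

lemma one_le_sqrt3 : (1 : ℝ) ≤ Real.sqrt 3 := by
  nlinarith [sqrt3_sq, sqrt3_pos]

lemma Tc_closed (n : ℕ) : (Tc (n+1) : ℝ) =
    ((2 + Real.sqrt 3) ^ (n+1) - (2 - Real.sqrt 3) ^ (n+1)) / (2 * Real.sqrt 3) := by
  induction n using Nat.twoStepInduction with
  | zero =>
    rw [Tc_one]
    rw [pow_one, pow_one]
    field_simp
    ring
  | one =>
    rw [Tc_two]
    have h : ((2 : ℝ) + Real.sqrt 3) ^ 2 - (2 - Real.sqrt 3) ^ 2 = 4 * (2 * Real.sqrt 3) := by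
      ring
    rw [h]
    field_simp
    norm_num
  | more n ih1 ih2 =>
    have hrec : (Tc (n+3) : ℝ) = 4 * (Tc (n+2) : ℝ) - (Tc (n+1) : ℝ) := by
      have h := Tc_rec n
      have h1 : (Tc (n+3) : ℝ) + (Tc (n+1) : ℝ) = 4 * (Tc (n+2) : ℝ) := by
        exact_mod_cast congrArg (fun k : ℕ => (k : ℝ)) h
      linarith
    have ih2' : (Tc (n+2) : ℝ) =
        ((2 + Real.sqrt 3) ^ (n+2) - (2 - Real.sqrt 3) ^ (n+2)) / (2 * Real.sqrt 3) := ih2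
    have hsq : (2 + Real.sqrt 3) ^ 2 = 4 * (2 + Real.sqrt 3) - 1 := by
      have := sqrt3_sq
      ring_nf
      nlinarith [sqrt3_sq]
    have hsq' : (2 - Real.sqrt 3) ^ 2 = 4 * (2 - Real.sqrt 3) - 1 := by
      nlinarith [sqrt3_sq]
    have ha : (2 + Real.sqrt 3) ^ (n+3) =
        4 * (2 + Real.sqrt 3) ^ (n+2) - (2 + Real.sqrt 3) ^ (n+1) := by
      calc (2 + Real.sqrt 3) ^ (n+3) = (2 + Real.sqrt 3) ^ (n+1) * (2 + Real.sqrt 3) ^ 2 := by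
            ring
        _ = (2 + Real.sqrt 3) ^ (n+1) * (4 * (2 + Real.sqrt 3) - 1) := by rw [hsq]
        _ = 4 * (2 + Real.sqrt 3) ^ (n+2) - (2 + Real.sqrt 3) ^ (n+1) := by ring
    have hb : (2 - Real.sqrt 3) ^ (n+3) =
        4 * (2 - Real.sqrt 3) ^ (n+2) - (2 - Real.sqrt 3) ^ (n+1) := by
      calc (2 - Real.sqrt 3) ^ (n+3) = (2 - Real.sqrt 3) ^ (n+1) * (2 - Real.sqrt 3) ^ 2 := by
            ring
        _ = (2 - Real.sqrt 3) ^ (n+1) * (4 * (2 - Real.sqrt 3) - 1) := by rw [hsq']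
        _ = 4 * (2 - Real.sqrt 3) ^ (n+2) - (2 - Real.sqrt 3) ^ (n+1) := by ring
    rw [hrec, ih1, ih2', ha, hb]
    ring


/-- the number `T_n` of spanning trees of the `2 × n` grid graph satisfies
`T_1 = 1`, `T_2 = 4`, `T_n = 4 T_{n-1} - T_{n-2}`, the closed form
`T_n = ((2+√3)^n - (2-√3)^n)/(2√3)`, and `c (a^n - 1) ≤ T_n ≤ c a^n` with `a = 2+√3`. -/
theorem stmt11 :
    gridTreeCount 1 = 1 ∧ gridTreeCount 2 = 4 ∧
    (∀ n : ℕ, 3 ≤ n →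
      (gridTreeCount n : ℤ) = 4 * gridTreeCount (n - 1) - gridTreeCount (n - 2)) ∧
    (∀ n : ℕ, 1 ≤ n →
      (gridTreeCount n : ℝ) =
        ((2 + Real.sqrt 3) ^ n - (2 - Real.sqrt 3) ^ n) / (2 * Real.sqrt 3)) ∧
    (∃ c : ℝ, 0 < c ∧ ∀ n : ℕ, 1 ≤ n →
      c * ((2 + Real.sqrt 3) ^ n - 1) ≤ (gridTreeCount n : ℝ) ∧
      (gridTreeCount n : ℝ) ≤ c * (2 + Real.sqrt 3) ^ n) := by
  have hval : ∀ n, gridTreeCount n = Tc n := gridTreeCount_eq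
  refine ⟨by rw [hval, Tc_one], by rw [hval, Tc_two], ?_, ?_, ?_⟩
  · intro n hn
    obtain ⟨m, rfl⟩ : ∃ m, n = m + 3 := ⟨n - 3, by omega⟩
    have h1 : m + 3 - 1 = m + 2 := by omega
    have h2 : m + 3 - 2 = m + 1 := by omega
    rw [h1, h2, hval, hval, hval]
    have h : Tc (m+3) + Tc (m+1) = 4 * Tc (m+2) := Tc_rec m
    have hz : (Tc (m+3) : ℤ) + (Tc (m+1) : ℤ) = 4 * (Tc (m+2) : ℤ) := by exact_mod_cast h
    linarith
  · intro n hn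
    obtain ⟨m, rfl⟩ : ∃ m, n = m + 1 := ⟨n - 1, by omega⟩
    rw [hval]
    exact Tc_closed m
  · refine ⟨1 / (2 * Real.sqrt 3), by positivity, ?_⟩
    intro n hn
    obtain ⟨m, rfl⟩ : ∃ m, n = m + 1 := ⟨n - 1, by omega⟩
    rw [hval, Tc_closed m]
    have hb0 : (0:ℝ) ≤ 2 - Real.sqrt 3 := by linarith [sqrt3_lt_two]
    have hb1 : (2 - Real.sqrt 3 : ℝ) ≤ 1 := by linarith [one_le_sqrt3]
    have hpow0 : (0:ℝ) ≤ (2 - Real.sqrt 3) ^ (m+1) := pow_nonneg hb0 _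
    have hpow1 : (2 - Real.sqrt 3 : ℝ) ^ (m+1) ≤ 1 := pow_le_one₀ hb0 hb1
    have hs : (0:ℝ) < 2 * Real.sqrt 3 := by positivity
    constructor
    · rw [one_div_mul_eq_div]
      exact (div_le_div_iff_of_pos_right hs).mpr (by linarith)
    · rw [one_div_mul_eq_div]
      exact (div_le_div_iff_of_pos_right hs).mpr (by linarith)
end

section
/- If f(z_1,…,z_m, w) is a real stable homogeneous polynomial with nonnegative coefficients, then for each k the sum of terms of degree exactly k in w (with w then set to 1) is again real stable. -/
/-- A real polynomial is real stable if it has no zeros with all variables in the open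
upper half-plane. -/
def RealStable {σ : Type*} (f : MvPolynomial σ ℝ) : Prop :=
  ∀ z : σ → ℂ, (∀ i, 0 < (z i).im) →
    MvPolynomial.eval z (MvPolynomial.map (algebraMap ℝ ℂ) f) ≠ 0


open Polynomial Filter

lemma norm_msprod (s : Multiset ℂ) : ‖s.prod‖ = (s.map (fun x => ‖x‖)).prod := by
  induction s using Multiset.induction_on with
  | empty => simp
  | cons a s ih => simp [norm_mul, ih]

lemma msprod_le_msprod {s : Multiset ℂ} {f g : ℂ → ℝ}
    (h0 : ∀ r ∈ s, 0 ≤ f r) (h : ∀ r ∈ s, f r ≤ 2 * g r) :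
    (s.map f).prod ≤ 2 ^ (Multiset.card s) * (s.map g).prod := by
  induction s using Multiset.induction_on with
  | empty => simp
  | cons a s ih =>
    simp only [Multiset.map_cons, Multiset.prod_cons, Multiset.card_cons]
    have hfa := h0 a (Multiset.mem_cons_self a s)
    have hga := h a (Multiset.mem_cons_self a s)
    have hs0 : ∀ r ∈ s, 0 ≤ f r := fun r hr => h0 r (Multiset.mem_cons_of_mem hr)
    have ihs := ih hs0 (fun r hr => h r (Multiset.mem_cons_of_mem hr))
    have hprod0 : 0 ≤ (s.map f).prod :=
      Multiset.prod_nonneg (by simpa using fun r hr => hs0 r hr)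
    calc f a * (s.map f).prod ≤ (2 * g a) * (2 ^ (Multiset.card s) * (s.map g).prod) :=
          mul_le_mul hga ihs hprod0 (by linarith)
      _ = 2 ^ (Multiset.card s + 1) * (g a * (s.map g).prod) := by ring

lemma ballIneq (q : Polynomial ℂ) (hq : q ≠ 0) (D : ℕ) (hD : q.natDegree ≤ D)
    (t u : ℂ) (δ : ℝ) (hδ : 0 < δ)
    (hroots : ∀ r ∈ q.roots, δ < dist t r) (hu : dist t u ≤ δ / 2) :
    ‖q.eval t‖ ≤ 2 ^ D * ‖q.eval u‖ := by
  have hsplit : Splits q := IsAlgClosed.splits q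
  have hfac := hsplit.eq_prod_roots
  have heval : ∀ x : ℂ, ‖q.eval x‖ = ‖q.leadingCoeff‖ * ((q.roots.map fun r => dist x r).prod) := by
    intro x
    conv_lhs => rw [hfac]
    rw [eval_mul, eval_C, norm_mul, eval_multiset_prod, Multiset.map_map]
    rw [norm_msprod, Multiset.map_map]
    congr 2
    ext r
    simp [Complex.dist_eq]
  rw [heval t, heval u]
  have hcard : Multiset.card q.roots ≤ D := le_trans (card_roots' q) hD
  have key : ((q.roots.map fun r => dist t r).prod) ≤
      2 ^ D * ((q.roots.map fun r => dist u r).prod) := by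
    have h1 : ((q.roots.map fun r => dist t r).prod) ≤
        2 ^ (Multiset.card q.roots) * ((q.roots.map fun r => dist u r).prod) := by
      apply msprod_le_msprod
      · intro r _; exact dist_nonneg
      · intro r hr
        have h2 := hroots r hr
        have : dist t r ≤ dist t u + dist u r := dist_triangle t u r
        have : dist t r - δ/2 ≤ dist u r := by
          have := dist_triangle t u r; linarith
        linarith [hroots r hr]
    refine le_trans h1 (mul_le_mul_of_nonneg_right ?_ ?_)
    · exact pow_le_pow_right₀ (by norm_num) hcard
    · exact Multiset.prod_nonneg (by
        intro x hx
        obtain ⟨r, _, rfl⟩ := Multiset.mem_map.mp hx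
        exact dist_nonneg)
  calc ‖q.leadingCoeff‖ * ((q.roots.map fun r => dist t r).prod)
      ≤ ‖q.leadingCoeff‖ * (2 ^ D * ((q.roots.map fun r => dist u r).prod)) :=
        mul_le_mul_of_nonneg_left key (norm_nonneg _)
    _ = 2 ^ D * (‖q.leadingCoeff‖ * ((q.roots.map fun r => dist u r).prod)) := by ring

lemma polyHurwitz (c : ℝ) (hc : 0 < c) (D : ℕ) (V : ℝ → Polynomial ℂ)
    (hdeg : ∀ ε : ℝ, (V ε).natDegree ≤ D)
    (hcont : ∀ s : ℂ, Continuous fun ε : ℝ => (V ε).eval s)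
    (hnz : ∀ ε : ℝ, 0 < ε → ε ≤ 1 → ∀ s : ℂ, -c < s.re → (V ε).eval s ≠ 0)
    (h0 : (V 0).eval 0 = 0) : V 0 = 0 := by
  have key : ∀ j : ℕ, (V 0).eval (((j : ℝ) * (c/4) : ℝ) : ℂ) = 0 := by
    intro j; induction j with
    | zero => simpa using h0
    | succ j ih =>
      set t : ℂ := ((((j:ℝ)+1) * (c/4) : ℝ) : ℂ) with ht
      set u : ℂ := (((j:ℝ) * (c/4) : ℝ) : ℂ) with hu
      have htre : (0:ℝ) ≤ t.re := by
        rw [ht]; simp only [Complex.ofReal_re]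
        positivity
      have hdtu : dist t u = c/4 := by
        rw [ht, hu, Complex.dist_eq]
        have h9 : ((((j:ℝ)+1) * (c/4) : ℝ) : ℂ) - (((j:ℝ) * (c/4) : ℝ) : ℂ) = ((c/4 : ℝ) : ℂ) := by
          push_cast; ring
        rw [h9, Complex.norm_real, Real.norm_eq_abs, abs_of_pos (by linarith)]
      have step2 : ∀ ε : ℝ, 0 < ε → ε ≤ 1 → ‖(V ε).eval t‖ ≤ 2 ^ D * ‖(V ε).eval u‖ := by
        intro ε h1 h2
        have hq0 : V ε ≠ 0 := by
          intro h
          exact hnz ε h1 h2 0 (by simpa using hc) (by simp [h])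
        refine ballIneq _ hq0 D (hdeg ε) t u (c/2) (by linarith) ?_ (by rw [hdtu]; linarith)
        intro r hr
        have hroot : (V ε).eval r = 0 := (Polynomial.mem_roots hq0).mp hr
        have hre : r.re ≤ -c := by
          by_contra h
          exact hnz ε h1 h2 r (lt_of_not_ge h) hroot
        have h3 : c ≤ (t - r).re := by
          rw [Complex.sub_re]; linarith
        have h4 : (t - r).re ≤ |(t-r).re| := le_abs_self _
        have h5 : |(t-r).re| ≤ ‖t - r‖ := Complex.abs_re_le_norm _
        rw [Complex.dist_eq]
        linarith
      have hlim : Tendsto (fun n : ℕ => (1 : ℝ) / (n + 1)) atTop (nhds 0) :=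
        tendsto_one_div_add_atTop_nhds_zero_nat
      have hG : Continuous fun ε : ℝ => 2 ^ D * ‖(V ε).eval u‖ - ‖(V ε).eval t‖ :=
        ((continuous_const.mul ((hcont u).norm)).sub ((hcont t).norm))
      have hGlim : Tendsto (fun n : ℕ => 2 ^ D * ‖(V (1/(n+1))).eval u‖ - ‖(V (1/(n+1))).eval t‖)
          atTop (nhds (2 ^ D * ‖(V 0).eval u‖ - ‖(V 0).eval t‖)) := by
        have := (hG.tendsto 0).comp hlim
        simpa [Function.comp_def] using this
      have hpos : ∀ n : ℕ, 0 ≤ 2 ^ D * ‖(V (1/(n+1))).eval u‖ - ‖(V (1/(n+1))).eval t‖ := by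
        intro n
        have hn1 : (0:ℝ) < 1/(n+1) := by positivity
        have hn2 : (1:ℝ)/(n+1) ≤ 1 := by
          rw [div_le_one (by positivity)]
          linarith [Nat.cast_nonneg (α := ℝ) n]
        linarith [step2 _ hn1 hn2]
      have hge : 0 ≤ 2 ^ D * ‖(V 0).eval u‖ - ‖(V 0).eval t‖ := ge_of_tendsto' hGlim hpos
      have hu0 : ‖(V 0).eval u‖ = 0 := by rw [hu, ih, norm_zero]
      have ht0 : ‖(V 0).eval t‖ = 0 := by
        have : ‖(V 0).eval t‖ ≤ 0 := by rw [hu0] at hge; linarith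
        linarith [norm_nonneg ((V 0).eval t)]
      have : (V 0).eval t = 0 := norm_eq_zero.mp ht0
      have hcast : ((j+1 : ℕ) : ℝ) = (j:ℝ)+1 := by push_cast; ring
      rw [hcast]
      exact this
  apply Polynomial.eq_zero_of_infinite_isRoot
  apply Set.infinite_of_injective_forall_mem
    (f := fun j : ℕ => (((j : ℝ) * (c/4) : ℝ) : ℂ))
  case hi =>
    intro a b hab
    simp only at hab
    have : (a : ℝ) * (c/4) = (b : ℝ) * (c/4) := by
      exact_mod_cast hab
    have : (a : ℝ) = b := by
      exact mul_right_cancel₀ (by positivity : (c/4:ℝ) ≠ 0) this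
    exact_mod_cast this
  case _ =>
    intro j
    exact key j

lemma deriv_prod_eval (w : ℂ) (s : Multiset ℂ) (hs : ∀ r ∈ s, w ≠ r) :
    (derivative (s.map (fun a => X - C a)).prod).eval w =
      ((s.map (fun a => X - C a)).prod).eval w * ((s.map (fun r => (w - r)⁻¹)).sum) := by
  induction s using Multiset.induction_on with
  | empty => simp
  | cons a s ih =>
    have ha : w ≠ a := hs a (Multiset.mem_cons_self a s)
    have hwa : w - a ≠ 0 := sub_ne_zero.mpr ha
    have ihs := ih (fun r hr => hs r (Multiset.mem_cons_of_mem hr))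
    simp only [Multiset.map_cons, Multiset.prod_cons, Multiset.sum_cons, derivative_mul,
      derivative_X_sub_C, one_mul, eval_add, eval_mul, eval_sub, eval_X, eval_C, ihs]
    field_simp
lemma multiset_sum_pos (s : Multiset ℝ) (hne : s ≠ 0) (h : ∀ x ∈ s, 0 < x) : 0 < s.sum := by
  obtain ⟨a, ha⟩ := Multiset.exists_mem_of_ne_zero hne
  obtain ⟨t, ht⟩ := Multiset.exists_cons_of_mem ha
  rw [ht, Multiset.sum_cons]
  have h1 : 0 < a := h a ha
  have h2 : 0 ≤ t.sum := Multiset.sum_nonneg (fun x hx => le_of_lt (h x (by rw [ht]; exact Multiset.mem_cons_of_mem hx)))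
  linarith

lemma natDegree_deriv_eq {p : Polynomial ℂ} (hp : p.natDegree ≠ 0) :
    (derivative p).natDegree = p.natDegree - 1 := by
  have hp0 : p ≠ 0 := fun h => hp (by simp [h])
  refine le_antisymm (natDegree_derivative_le p) ?_
  apply le_natDegree_of_ne_zero
  rw [coeff_derivative]
  have h1 : p.natDegree - 1 + 1 = p.natDegree := Nat.succ_pred_eq_of_pos (Nat.pos_of_ne_zero hp)
  rw [h1]
  apply mul_ne_zero
  · rw [← leadingCoeff]; exact leadingCoeff_ne_zero.mpr hp0
  · have : ((p.natDegree - 1 : ℕ) : ℂ) + 1 ≠ 0 := by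
      have := Nat.cast_add_one_ne_zero (R := ℂ) (p.natDegree - 1)
      exact_mod_cast this
    exact_mod_cast this

lemma gaussLucas_step {p : Polynomial ℂ} (hdeg : p.natDegree ≠ 0)
    (hnv : ∀ w : ℂ, 0 < w.re → p.eval w ≠ 0) :
    ∀ w : ℂ, 0 < w.re → (derivative p).eval w ≠ 0 := by
  intro w hw
  have hp0 : p ≠ 0 := by
    intro h
    exact hnv 1 (by simp) (by simp [h])
  have hsplit : Splits p := IsAlgClosed.splits p
  have hfac := hsplit.eq_prod_roots
  have hcard : p.natDegree = Multiset.card p.roots := by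
    have := hsplit.natDegree_eq_card_roots
    simpa using this
  have hrne : p.roots ≠ 0 := by
    intro h
    rw [h] at hcard
    simp at hcard
    exact hdeg hcard
  have hwr : ∀ r ∈ p.roots, w ≠ r := by
    intro r hr hrfl
    subst hrfl
    exact hnv w hw ((Polynomial.mem_roots hp0).mp hr)
  have hrend : ∀ r ∈ p.roots, r.re ≤ 0 := by
    intro r hr
    by_contra h
    exact hnv r (lt_of_not_ge h) ((Polynomial.mem_roots hp0).mp hr)
  set SS : ℂ := (p.roots.map (fun r => (w - r)⁻¹)).sum with hSS
  have hre : 0 < SS.re := by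
    have hmap : SS.re = ((p.roots.map (fun r => (w - r)⁻¹)).map Complex.re).sum := by
      rw [hSS]
      exact map_multiset_sum Complex.reAddGroupHom _
    rw [hmap, Multiset.map_map]
    apply multiset_sum_pos
    · intro h
      exact hrne (by simpa using Multiset.map_eq_zero.mp h)
    · intro x hx
      obtain ⟨r, hr, rfl⟩ := Multiset.mem_map.mp hx
      simp only [Function.comp_apply]
      rw [Complex.inv_re]
      apply div_pos
      · rw [Complex.sub_re]
        have := hrend r hr
        linarith
      · rw [Complex.normSq_pos]
        exact sub_ne_zero.mpr (hwr r hr)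
  have hSSne : SS ≠ 0 := by
    intro h
    rw [h] at hre
    simp at hre
  have hde : (derivative p).eval w = p.eval w * SS := by
    conv_lhs => rw [hfac]
    rw [derivative_C_mul, eval_mul, eval_C, deriv_prod_eval w _ hwr]
    conv_rhs => rw [hfac]
    rw [eval_mul, eval_C]
    ring
  rw [hde]
  exact mul_ne_zero (hnv w hw) hSSne

lemma gaussLucas_iter {p : Polynomial ℂ}
    (hnv : ∀ w : ℂ, 0 < w.re → p.eval w ≠ 0) :
    ∀ j, j ≤ p.natDegree →
      (∀ w : ℂ, 0 < w.re → (derivative^[j] p).eval w ≠ 0) ∧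
        (derivative^[j] p).natDegree = p.natDegree - j := by
  intro j
  induction j with
  | zero => intro _; exact ⟨hnv, by simp⟩
  | succ j ih =>
    intro hj
    obtain ⟨h1, h2⟩ := ih (le_trans (Nat.le_succ j) hj)
    have hd : (derivative^[j] p).natDegree ≠ 0 := by
      rw [h2]
      omega
    constructor
    · rw [Function.iterate_succ_apply']
      exact gaussLucas_step hd h1
    · rw [Function.iterate_succ_apply', natDegree_deriv_eq hd, h2]
      omega

lemma botExtract {m : ℕ} (Q : Polynomial (MvPolynomial (Fin m) ℂ))
    (hnv : ∀ z : Fin m → ℂ, (∀ i, 0 < (z i).re) → ∀ w : ℂ, 0 < w.re →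
      (Q.map (MvPolynomial.eval z)).eval w ≠ 0)
    (hb : Q.coeff 0 ≠ 0)
    (hco : ∀ d, ((Q.coeff 0).coeff d).im = 0 ∧ 0 ≤ ((Q.coeff 0).coeff d).re) :
    ∀ z : Fin m → ℂ, (∀ i, 0 < (z i).re) → MvPolynomial.eval z (Q.coeff 0) ≠ 0 := by
  intro z0 hz0 h0
  -- a positive lower bound for the real parts
  obtain ⟨c, hc, hci⟩ : ∃ c : ℝ, 0 < c ∧ ∀ i, c ≤ (z0 i).re := by
    rcases isEmpty_or_nonempty (Fin m) with hm | hm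
    · exact ⟨1, one_pos, fun i => (hm.false i).elim⟩
    · obtain ⟨b, _, hbmin⟩ := Finset.exists_min_image Finset.univ (fun i => (z0 i).re)
        ⟨hm.some, Finset.mem_univ _⟩
      exact ⟨(z0 b).re, hz0 b, fun i => hbmin i (Finset.mem_univ i)⟩
  set θ : MvPolynomial (Fin m) ℂ →+* Polynomial ℂ :=
    (MvPolynomial.eval₂Hom Polynomial.C (fun i => Polynomial.C (z0 i) + Polynomial.X)) with hθ
  have hcomp : ∀ s : ℂ, (Polynomial.evalRingHom s).comp θ =
      (MvPolynomial.eval (fun i => z0 i + s) : MvPolynomial (Fin m) ℂ →+* ℂ) := by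
    intro s
    apply MvPolynomial.ringHom_ext
    · intro r; simp [hθ]
    · intro i; simp [hθ]
  have hcompeval : ∀ (s : ℂ) (b : MvPolynomial (Fin m) ℂ),
      (θ b).eval s = MvPolynomial.eval (fun i => z0 i + s) b := by
    intro s b
    have := congrArg (fun φ => φ b) (hcomp s)
    simpa using this
  set U : Polynomial (Polynomial ℂ) := Q.map θ with hU
  set V : ℝ → Polynomial ℂ := fun ε => U.eval (Polynomial.C (ε : ℂ)) with hV
  have KEY : ∀ (ε : ℂ) (s : ℂ), (U.eval (Polynomial.C ε)).eval s =
      (Q.map (MvPolynomial.eval (fun i => z0 i + s) : MvPolynomial (Fin m) ℂ →+* ℂ)).eval ε := by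
    intro ε s
    rw [hU, Polynomial.eval_map, Polynomial.eval_map]
    have := Polynomial.hom_eval₂ Q θ (Polynomial.evalRingHom s) (Polynomial.C ε)
    simp only [Polynomial.coe_evalRingHom] at this
    rw [this, hcomp s]
    simp
  set D : ℕ := U.support.sup (fun j => (U.coeff j).natDegree) with hD
  have hdeg : ∀ ε : ℝ, (V ε).natDegree ≤ D := by
    intro ε
    rw [hV]
    simp only
    rw [Polynomial.eval_eq_sum, Polynomial.sum_def]
    apply Polynomial.natDegree_sum_le_of_forall_le
    intro j hj
    refine le_trans (Polynomial.natDegree_mul_le) ?_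
    rw [← Polynomial.C_pow, Polynomial.natDegree_C, add_zero]
    exact Finset.le_sup (f := fun j => (U.coeff j).natDegree) hj
  have hcont : ∀ s : ℂ, Continuous fun ε : ℝ => (V ε).eval s := by
    intro s
    have : (fun ε : ℝ => (V ε).eval s) = fun ε : ℝ =>
        (Q.map (MvPolynomial.eval (fun i => z0 i + s) : MvPolynomial (Fin m) ℂ →+* ℂ)).eval (ε : ℂ) := by
      funext ε
      rw [hV]; exact KEY (ε : ℂ) s
    rw [this]
    exact (Polynomial.continuous _).comp Complex.continuous_ofReal
  have hnz : ∀ ε : ℝ, 0 < ε → ε ≤ 1 → ∀ s : ℂ, -c < s.re → (V ε).eval s ≠ 0 := by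
    intro ε hε _ s hs
    rw [hV]
    simp only
    rw [KEY (ε : ℂ) s]
    apply hnv
    · intro i
      simp only [Complex.add_re]
      have := hci i
      linarith
    · simpa using hε
  have h00 : (V 0).eval 0 = 0 := by
    rw [hV]
    simp only [Complex.ofReal_zero]
    rw [KEY 0 0]
    rw [← Polynomial.coeff_zero_eq_eval_zero, Polynomial.coeff_map]
    have : (fun i => z0 i + (0:ℂ)) = z0 := by funext i; ring
    rw [this]
    exact h0
  have hV0 : V 0 = 0 := polyHurwitz c hc D V hdeg hcont hnz h00
  -- but V 0 = θ (Q.coeff 0) ≠ 0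
  have hV0' : V 0 = θ (Q.coeff 0) := by
    rw [hV]
    simp only [Complex.ofReal_zero, map_zero]
    rw [← Polynomial.coeff_zero_eq_eval_zero, hU, Polynomial.coeff_map]
  set b : MvPolynomial (Fin m) ℂ := Q.coeff 0 with hbdef
  set M : ℕ := b.totalDegree with hM
  have hβM : (θ b).coeff M ≠ 0 := by
    have hexp : θ b = ∑ d ∈ b.support, Polynomial.C (b.coeff d) *
        ∏ i ∈ d.support, (Polynomial.C (z0 i) + Polynomial.X) ^ d i := by
      rw [hθ]
      exact MvPolynomial.eval₂_eq _ _ b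
    have hmonic : ∀ d : Fin m →₀ ℕ,
        (∏ i ∈ d.support, (Polynomial.C (z0 i) + Polynomial.X) ^ d i).Monic ∧
        (∏ i ∈ d.support, (Polynomial.C (z0 i) + Polynomial.X) ^ d i).natDegree
          = d.sum fun _ e => e := by
      intro d
      have hm1 : ∀ i : Fin m, ((Polynomial.C (z0 i) + Polynomial.X) ^ d i).Monic := by
        intro i
        have : (Polynomial.C (z0 i) + Polynomial.X).Monic := by
          rw [add_comm]; exact Polynomial.monic_X_add_C _
        exact this.pow _
      constructor
      · exact Polynomial.monic_prod_of_monic _ _ (fun i _ => hm1 i)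
      · rw [Polynomial.natDegree_prod_of_monic _ _ (fun i _ => hm1 i)]
        rw [Finsupp.sum]
        apply Finset.sum_congr rfl
        intro i _
        rw [Polynomial.Monic.natDegree_pow]
        · rw [add_comm, Polynomial.natDegree_X_add_C, mul_one]
        · rw [add_comm]; exact Polynomial.monic_X_add_C _
    have hcoeffM : (θ b).coeff M = ∑ d ∈ b.support,
        (if (d.sum fun _ e => e) = M then b.coeff d else 0) := by
      rw [hexp, Polynomial.finset_sum_coeff]
      apply Finset.sum_congr rfl
      intro d hd
      obtain ⟨hmon, hdeg'⟩ := hmonic d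
      rw [Polynomial.coeff_C_mul]
      by_cases hdM : (d.sum fun _ e => e) = M
      · rw [if_pos hdM]
        have : (∏ i ∈ d.support, (Polynomial.C (z0 i) + Polynomial.X) ^ d i).coeff M = 1 := by
          rw [← hdM, ← hdeg']
          exact hmon.coeff_natDegree
        rw [this, mul_one]
      · rw [if_neg hdM]
        have hlt : (d.sum fun _ e => e) < M := by
          have := MvPolynomial.le_totalDegree (p := b) (s := d) hd
          omega
        have : (∏ i ∈ d.support, (Polynomial.C (z0 i) + Polynomial.X) ^ d i).coeff M = 0 := by
          apply Polynomial.coeff_eq_zero_of_natDegree_lt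
          rw [hdeg']; exact hlt
        rw [this, mul_zero]
    -- the sum has positive real part
    obtain ⟨d0, hd0mem, hd0⟩ := Finset.exists_mem_eq_sup b.support
      (MvPolynomial.support_nonempty.mpr hb) (fun d => d.sum fun _ e => e)
    have hred : 0 < ((θ b).coeff M).re := by
      rw [hcoeffM, Complex.re_sum]
      apply Finset.sum_pos'
      · intro d hd
        by_cases hdM : (d.sum fun _ e => e) = M
        · rw [if_pos hdM]; exact (hco d).2
        · rw [if_neg hdM]; simp
      · refine ⟨d0, hd0mem, ?_⟩
        have hd0M : (d0.sum fun _ e => e) = M := hd0.symm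
        rw [if_pos hd0M]
        have hne : b.coeff d0 ≠ 0 := MvPolynomial.mem_support_iff.mp hd0mem
        have h1 := (hco d0).1
        have h2 := (hco d0).2
        rcases lt_or_eq_of_le h2 with h | h
        · exact h
        · exfalso
          apply hne
          apply Complex.ext
          · exact h.symm
          · exact h1
    intro hzero
    rw [hzero] at hred
    simp at hred
  apply hβM
  rw [← hV0', hV0]
  simp

lemma topExtract {m : ℕ} (Q : Polynomial (MvPolynomial (Fin m) ℂ)) (hQ : Q ≠ 0)
    (hnv : ∀ z : Fin m → ℂ, (∀ i, 0 < (z i).re) → ∀ w : ℂ, 0 < w.re →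
      (Q.map (MvPolynomial.eval z)).eval w ≠ 0)
    (hco : ∀ d, ((Q.coeff Q.natDegree).coeff d).im = 0 ∧
      0 ≤ ((Q.coeff Q.natDegree).coeff d).re) :
    ∀ z : Fin m → ℂ, (∀ i, 0 < (z i).re) → MvPolynomial.eval z (Q.coeff Q.natDegree) ≠ 0 := by
  set t : ℕ := Q.natDegree with htdef
  set Qrev : Polynomial (MvPolynomial (Fin m) ℂ) :=
    ∑ j ∈ Finset.range (t+1), Polynomial.monomial j (Q.coeff (t - j)) with hQrev
  have hcoeff0 : Qrev.coeff 0 = Q.coeff t := by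
    rw [hQrev, Polynomial.finset_sum_coeff]
    simp only [Polynomial.coeff_monomial]
    rw [Finset.sum_ite_eq' (Finset.range (t+1)) 0 (fun j => Q.coeff (t - j))]
    simp
  have hrevEval : ∀ (z : Fin m → ℂ) (w : ℂ), w ≠ 0 →
      (Qrev.map (MvPolynomial.eval z)).eval w =
        w ^ t * ((Q.map (MvPolynomial.eval z)).eval w⁻¹) := by
    intro z w hw
    set A : ℕ → ℂ := fun j => MvPolynomial.eval z (Q.coeff j) with hA
    have hL : (Qrev.map (MvPolynomial.eval z)).eval w =
        ∑ j ∈ Finset.range (t+1), A (t - j) * w ^ j := by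
      rw [hQrev, Polynomial.map_sum, Polynomial.eval_finset_sum]
      apply Finset.sum_congr rfl
      intro j _
      rw [Polynomial.map_monomial, Polynomial.eval_monomial]
    have hR : (Q.map (MvPolynomial.eval z)).eval w⁻¹ =
        ∑ j ∈ Finset.range (t+1), A j * (w⁻¹) ^ j := by
      rw [Polynomial.eval_eq_sum_range' (lt_of_le_of_lt (Polynomial.natDegree_map_le)
        (Nat.lt_succ_self t))]
      apply Finset.sum_congr rfl
      intro j _
      rw [Polynomial.coeff_map]
    rw [hL, hR, Finset.mul_sum]
    have hreflect := Finset.sum_range_reflect (fun j => A j * w ^ (t - j)) (t+1)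
    calc ∑ j ∈ Finset.range (t+1), A (t - j) * w ^ j
        = ∑ j ∈ Finset.range (t+1), A (t + 1 - 1 - j) * w ^ (t - (t + 1 - 1 - j)) := by
          apply Finset.sum_congr rfl
          intro j hj
          have hjle : j ≤ t := Nat.lt_succ_iff.mp (Finset.mem_range.mp hj)
          have h1 : t + 1 - 1 - j = t - j := by omega
          have h2 : t - (t - j) = j := by omega
          rw [h1, h2]
      _ = ∑ j ∈ Finset.range (t+1), A j * w ^ (t - j) := hreflect
      _ = ∑ j ∈ Finset.range (t+1), w ^ t * (A j * (w⁻¹) ^ j) := by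
          apply Finset.sum_congr rfl
          intro j hj
          have hjle : j ≤ t := Nat.lt_succ_iff.mp (Finset.mem_range.mp hj)
          rw [show w ^ (t-j) = w ^ t * (w ^ j)⁻¹ from pow_sub₀ w hw hjle, inv_pow]
          ring
  have hnvrev : ∀ z : Fin m → ℂ, (∀ i, 0 < (z i).re) → ∀ w : ℂ, 0 < w.re →
      (Qrev.map (MvPolynomial.eval z)).eval w ≠ 0 := by
    intro z hz w hw
    have hw0 : w ≠ 0 := by
      intro h; rw [h] at hw; simp at hw
    rw [hrevEval z w hw0]
    apply mul_ne_zero (pow_ne_zero _ hw0)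
    apply hnv z hz
    rw [Complex.inv_re]
    apply div_pos hw (Complex.normSq_pos.mpr hw0)
  have hb : Qrev.coeff 0 ≠ 0 := by
    rw [hcoeff0, htdef]
    exact Polynomial.leadingCoeff_ne_zero.mpr hQ
  have := botExtract Qrev hnvrev hb (by rw [hcoeff0]; exact hco)
  intro z hz
  have h2 := this z hz
  rw [hcoeff0] at h2
  exact h2

def eEquiv (m : ℕ) : (Fin m ⊕ Unit) ≃ Fin (m+1) where
  toFun := Sum.elim Fin.succ (fun _ => 0)
  invFun := fun j => Fin.cases (Sum.inr ()) (fun i => Sum.inl i) j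
  left_inv := by rintro (i | ⟨⟩) <;> simp
  right_inv := by
    intro j
    induction j using Fin.cases <;> simp

lemma mapDomain_e (m : ℕ) (d : Fin m →₀ ℕ) (j : ℕ) :
    Finsupp.mapDomain (eEquiv m) (Finsupp.embDomain ⟨Sum.inl, Sum.inl_injective⟩ d
      + Finsupp.single (Sum.inr ()) j) = Finsupp.cons j d := by
  rw [show (⇑(eEquiv m) : (Fin m ⊕ Unit) → Fin (m+1)) = ⇑((eEquiv m).toEmbedding) from rfl,
    ← Finsupp.embDomain_eq_mapDomain]
  ext a
  induction a using Fin.cases with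
  | zero =>
    rw [Finsupp.cons_zero]
    have h0 : (0 : Fin (m+1)) = (eEquiv m).toEmbedding (Sum.inr ()) := rfl
    rw [h0, Finsupp.embDomain_apply_self]
    rw [Finsupp.add_apply]
    rw [Finsupp.single_eq_same]
    have : Finsupp.embDomain ⟨Sum.inl, Sum.inl_injective⟩ d (Sum.inr ()) = 0 := by
      apply Finsupp.embDomain_notin_range
      simp
    rw [this, zero_add]
  | succ i =>
    rw [Finsupp.cons_succ]
    have h0 : (i.succ : Fin (m+1)) = (eEquiv m).toEmbedding (Sum.inl i) := rfl
    rw [h0, Finsupp.embDomain_apply_self]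
    rw [Finsupp.add_apply]
    have h1 : (Finsupp.embDomain (⟨Sum.inl, Sum.inl_injective⟩ : Fin m ↪ Fin m ⊕ Unit) d)
        (Sum.inl i) = d i := Finsupp.embDomain_apply_self _ d i
    have h2 : Finsupp.single (Sum.inr () : Fin m ⊕ Unit) j (Sum.inl i) = 0 := by
      apply Finsupp.single_eq_of_ne
      simp
    rw [h1, h2, add_zero]

lemma evalSmul {σ : Type*} (P : MvPolynomial σ ℂ) (n : ℕ)
    (hP : ∀ d, P.coeff d ≠ 0 → (d.sum fun _ e => e) = n) (c : ℂ) (x : σ → ℂ) :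
    MvPolynomial.eval (fun i => c * x i) P = c ^ n * MvPolynomial.eval x P := by
  rw [MvPolynomial.eval_eq, MvPolynomial.eval_eq, Finset.mul_sum]
  apply Finset.sum_congr rfl
  intro d hd
  have hdn := hP d (MvPolynomial.mem_support_iff.mp hd)
  rw [Finset.prod_congr rfl (fun i _ => mul_pow c (x i) (d i))]
  rw [Finset.prod_mul_distrib, Finset.prod_pow_eq_pow_sum]
  have hsum : ∑ i ∈ d.support, d i = n := by
    rw [← hdn]; rfl
  rw [hsum]; ring


/-- if `f(z_1, …, z_m, w)` is a homogeneous real stable polynomial with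
nonnegative coefficients, then for each `k` the sum of the terms of degree exactly `k` in
`w`, with `w` then set to `1` (i.e. the polynomial `g` with
`g.coeff d = f.coeff (d, k)`), is again real stable (or identically zero). -/
theorem stmt18 (m : ℕ) (f : MvPolynomial (Fin m ⊕ Unit) ℝ) (N : ℕ)
    (hhom : f.IsHomogeneous N) (hnn : ∀ d, 0 ≤ f.coeff d) (hst : RealStable f)
    (k : ℕ) (g : MvPolynomial (Fin m) ℝ)
    (hg : ∀ d : Fin m →₀ ℕ, g.coeff d =
      f.coeff (Finsupp.embDomain ⟨Sum.inl, Sum.inl_injective⟩ d +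
        Finsupp.single (Sum.inr ()) k)) :
    g = 0 ∨ RealStable g := by
  by_cases hg0 : g = 0
  · exact Or.inl hg0
  right
  set F : MvPolynomial (Fin m ⊕ Unit) ℂ := MvPolynomial.map (algebraMap ℝ ℂ) f with hF
  set q : Polynomial (MvPolynomial (Fin m) ℂ) :=
    MvPolynomial.finSuccEquiv ℂ m (MvPolynomial.rename (eEquiv m) F) with hq
  have hcoeffq : ∀ (j : ℕ) (d : Fin m →₀ ℕ), (q.coeff j).coeff d =
      algebraMap ℝ ℂ (f.coeff (Finsupp.embDomain ⟨Sum.inl, Sum.inl_injective⟩ d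
        + Finsupp.single (Sum.inr ()) j)) := by
    intro j d
    rw [hq, MvPolynomial.finSuccEquiv_coeff_coeff]
    rw [← mapDomain_e m d j,
      MvPolynomial.coeff_rename_mapDomain _ (eEquiv m).injective]
    rw [hF, MvPolynomial.coeff_map]
  have hqk : q.coeff k = MvPolynomial.map (algebraMap ℝ ℂ) g := by
    apply MvPolynomial.ext
    intro d
    rw [MvPolynomial.coeff_map, hcoeffq k d, hg d]
  have hqkne : q.coeff k ≠ 0 := by
    rw [hqk]
    intro h
    apply hg0
    exact MvPolynomial.map_injective _ (algebraMap ℝ ℂ).injective (by simpa using h)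
  have hqne : q ≠ 0 := by
    intro h
    apply hqkne
    rw [h, Polynomial.coeff_zero]
  have hkle : k ≤ q.natDegree := Polynomial.le_natDegree_of_ne_zero hqkne
  -- evaluation identity
  have hEval : ∀ (z : Fin m → ℂ) (w : ℂ), (q.map (MvPolynomial.eval z)).eval w =
      MvPolynomial.eval (Sum.elim z (fun _ => w)) F := by
    intro z w
    rw [hq, ← MvPolynomial.eval_eq_eval_mv_eval']
    rw [MvPolynomial.eval_rename]
    have hfun : (Fin.cons w z ∘ ⇑(eEquiv m)) = Sum.elim z (fun _ => w) := by
      funext x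
      cases x with
      | inl i =>
        simp only [Function.comp_apply, Sum.elim_inl]
        have h : (eEquiv m) (Sum.inl i) = i.succ := rfl
        rw [h, Fin.cons_succ]
      | inr u =>
        simp only [Function.comp_apply, Sum.elim_inr]
        have h : (eEquiv m) (Sum.inr u) = 0 := rfl
        rw [h, Fin.cons_zero]
    rw [hfun]
  -- homogeneity of F
  have hFhom : ∀ D : (Fin m ⊕ Unit) →₀ ℕ, F.coeff D ≠ 0 → (D.sum fun _ e => e) = N := by
    intro D hD
    have hfD : f.coeff D ≠ 0 := by
      intro h
      rw [hF, MvPolynomial.coeff_map, h] at hD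
      simp at hD
    have hw := hhom hfD
    rw [Finsupp.weight_apply] at hw
    simpa [smul_eq_mul] using hw
  -- nonvanishing on right half plane products
  have hRHP : ∀ z : Fin m → ℂ, (∀ i, 0 < (z i).re) → ∀ w : ℂ, 0 < w.re →
      (q.map (MvPolynomial.eval z)).eval w ≠ 0 := by
    intro z hz w hw
    rw [hEval]
    set x : (Fin m ⊕ Unit) → ℂ := Sum.elim z (fun _ => w) with hx
    have hxre : ∀ idx, 0 < (x idx).re := by
      rintro (i | u)
      · exact hz i
      · exact hw
    set v : (Fin m ⊕ Unit) → ℂ := fun idx => Complex.I * x idx with hv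
    have hvim : ∀ idx, 0 < (v idx).im := by
      intro idx
      rw [hv]
      simp only [Complex.mul_im, Complex.I_re, Complex.I_im]
      simpa using hxre idx
    have hxv : x = fun idx => (-Complex.I) * (v idx) := by
      funext idx
      rw [hv]
      simp only
      rw [← mul_assoc]
      simp [Complex.I_mul_I]
    rw [hxv, evalSmul F N hFhom (-Complex.I) v]
    apply mul_ne_zero
    · apply pow_ne_zero
      simp [Complex.ext_iff]
    · exact hst v hvim
  -- top coefficient nonvanishing
  have hcoT : ∀ d, ((q.coeff q.natDegree).coeff d).im = 0 ∧
      0 ≤ ((q.coeff q.natDegree).coeff d).re := by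
    intro d
    rw [hcoeffq]
    constructor
    · simp [Complex.ofReal_im]
    · simpa using hnn _
  have htop := topExtract q hqne hRHP hcoT
  have hdegmap : ∀ z : Fin m → ℂ, (∀ i, 0 < (z i).re) →
      (q.map (MvPolynomial.eval z)).natDegree = q.natDegree := by
    intro z hz
    apply Polynomial.natDegree_map_of_leadingCoeff_ne_zero
    exact htop z hz
  -- derivative polynomial
  set Q : Polynomial (MvPolynomial (Fin m) ℂ) := derivative^[k] q with hQ
  have hQnv : ∀ z : Fin m → ℂ, (∀ i, 0 < (z i).re) → ∀ w : ℂ, 0 < w.re →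
      (Q.map (MvPolynomial.eval z)).eval w ≠ 0 := by
    intro z hz w hw
    rw [hQ, ← Polynomial.iterate_derivative_map]
    have hGL := gaussLucas_iter (fun w' hw' => hRHP z hz w' hw') k
      (by rw [hdegmap z hz]; exact hkle)
    exact hGL.1 w hw
  have hQ0 : Q.coeff 0 = k.factorial • q.coeff k := by
    rw [hQ, Polynomial.coeff_iterate_derivative]
    simp [Nat.descFactorial_self]
  have hcoQ : ∀ d, ((Q.coeff 0).coeff d).im = 0 ∧ 0 ≤ ((Q.coeff 0).coeff d).re := by
    intro d
    rw [hQ0, MvPolynomial.coeff_smul, hqk, MvPolynomial.coeff_map]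
    rw [nsmul_eq_mul]
    have hr : (algebraMap ℝ ℂ) (g.coeff d) = ((g.coeff d : ℝ) : ℂ) := rfl
    rw [hr]
    have h2 : 0 ≤ g.coeff d := by rw [hg d]; exact hnn _
    constructor
    · simp [Complex.mul_im]
    · simp only [Complex.mul_re, Complex.natCast_re, Complex.ofReal_re, Complex.natCast_im,
        Complex.ofReal_im, mul_zero, zero_mul, sub_zero]
      exact mul_nonneg (Nat.cast_nonneg _) h2
  have hbQ : Q.coeff 0 ≠ 0 := by
    obtain ⟨d0, hd0⟩ := MvPolynomial.ne_zero_iff.mp hg0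
    intro h
    have := congrArg (MvPolynomial.coeff d0) h
    rw [hQ0, MvPolynomial.coeff_smul, hqk, MvPolynomial.coeff_map, nsmul_eq_mul] at this
    simp only [MvPolynomial.coeff_zero] at this
    have hne : ((k.factorial : ℂ)) * (algebraMap ℝ ℂ) (g.coeff d0) ≠ 0 := by
      apply mul_ne_zero
      · exact_mod_cast Nat.factorial_ne_zero k
      · simpa using hd0
    exact hne this
  have hbot := botExtract Q hQnv hbQ hcoQ
  have hgRHP : ∀ z : Fin m → ℂ, (∀ i, 0 < (z i).re) →
      MvPolynomial.eval z (MvPolynomial.map (algebraMap ℝ ℂ) g) ≠ 0 := by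
    intro z hz
    have h1 := hbot z hz
    rw [hQ0, map_nsmul, hqk] at h1
    intro h2
    rw [h2] at h1
    simp at h1
  -- homogeneity of g
  have hghom : ∀ d : Fin m →₀ ℕ, (MvPolynomial.map (algebraMap ℝ ℂ) g).coeff d ≠ 0 →
      (d.sum fun _ e => e) = N - k := by
    intro d hd
    have hgd : g.coeff d ≠ 0 := by
      intro h
      rw [MvPolynomial.coeff_map, h] at hd
      simp at hd
    have hfd : f.coeff (Finsupp.embDomain ⟨Sum.inl, Sum.inl_injective⟩ d +
        Finsupp.single (Sum.inr ()) k) ≠ 0 := by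
      rw [← hg d]; exact hgd
    have hw := hhom hfd
    rw [map_add, Finsupp.weight_apply, Finsupp.weight_apply] at hw
    have hsingle : (Finsupp.single (Sum.inr () : Fin m ⊕ Unit) k).sum
        (fun i c => c • (1 : (Fin m ⊕ Unit) → ℕ) i) = k := by
      rw [Finsupp.sum_single_index]
      · simp
      · simp
    have hemb : (Finsupp.embDomain ⟨Sum.inl, Sum.inl_injective⟩ d).sum
        (fun i c => c • (1 : (Fin m ⊕ Unit) → ℕ) i) = d.sum fun _ e => e := by
      rw [Finsupp.sum_embDomain]
      apply Finsupp.sum_congr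
      intro i _
      simp
    rw [hsingle, hemb] at hw
    omega
  -- conclude
  intro z hzim
  set u : Fin m → ℂ := fun i => (-Complex.I) * z i with hu
  have hure : ∀ i, 0 < (u i).re := by
    intro i
    rw [hu]
    simp only [Complex.mul_re, Complex.neg_re, Complex.I_re, Complex.neg_im, Complex.I_im]
    simpa using hzim i
  have hzu : z = fun i => Complex.I * u i := by
    funext i
    rw [hu]
    simp only
    rw [← mul_assoc]
    simp [Complex.I_mul_I]
  rw [hzu, evalSmul _ (N - k) hghom Complex.I u]
  apply mul_ne_zero
  · apply pow_ne_zero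
    simp [Complex.ext_iff]
  · exact hgRHP u hure
end
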